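/- arXiv:1904.12525 — 5 statements merged into one kernel-verified Lean document; each statement's English description precedes it below -/
import Mathlib

section
/- Let f : X → Y be a map between uniform spaces (X, 𝒰) and (Y, 𝒱). Then f is proximally continuous if and only if for every subset A ⊆ X and every entourage V ∈ 𝒱 there exists an entourage U ∈ 𝒰 such that f(U[A]) ⊆ V[f(A)]. -/
open Filter Set Uniformity
open scoped SetRel

theorem exists_nice_pseudometric {Y : Type*} [uY : UniformSpace Y] {V : Set (Y × Y)}
    (hV : V ∈ 𝓤 Y) :
    ∃ d : Y → Y → ℝ, (∀ y, d y y = 0) ∧ (∀ y z, d y z = d z y) ∧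
      (∀ x y z, d x z ≤ d x y + d y z) ∧ (∀ y z, 0 ≤ d y z) ∧
      (∀ η : ℝ, 0 < η → {p : Y × Y | d p.1 p.2 < η} ∈ 𝓤 Y) ∧
      ∃ ε > 0, ∀ y z, d y z < ε → (y, z) ∈ V := by
  have key : ∀ W : Set (Y × Y), W ∈ 𝓤 Y →
      ∃ W', W' ∈ 𝓤 Y ∧ SetRel.IsSymm W' ∧ W' ○ W' ⊆ W := by
    intro W hW
    obtain ⟨t, ht, hts, htc⟩ := comp_symm_mem_uniformity_sets hW
    exact ⟨t, ht, hts, htc⟩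
  obtain ⟨V₀, hV₀, hV₀s, hV₀c⟩ := key V hV
  -- recursive sequence
  let s : ℕ → {W : Set (Y × Y) // W ∈ 𝓤 Y ∧ SetRel.IsSymm W} :=
    fun n => Nat.rec ⟨V₀, hV₀, hV₀s⟩
      (fun _ p => ⟨(key p.1 p.2.1).choose, (key p.1 p.2.1).choose_spec.1,
        (key p.1 p.2.1).choose_spec.2.1⟩) n
  have hcomp : ∀ n, (s (n + 1)).1 ○ (s (n + 1)).1 ⊆ (s n).1 := fun n =>
    (key (s n).1 (s n).2.1).choose_spec.2.2
  have hanti : ∀ n, (s (n + 1)).1 ⊆ (s n).1 := fun n =>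
    (subset_comp_self_of_mem_uniformity (s (n + 1)).2.1).trans (hcomp n)
  set F : Filter (Y × Y) := ⨅ n, 𝓟 (s n).1 with hF
  have hdir : Directed (· ≥ ·) fun n => (s n).1 := by
    have : Antitone fun n => (s n).1 := antitone_nat_of_succ_le hanti
    exact this.directed_ge
  have hFb : F.HasBasis (fun _ : ℕ => True) fun n => (s n).1 :=
    hasBasis_iInf_principal hdir
  have hle : 𝓤 Y ≤ F := le_iInf fun n => le_principal_iff.2 (s n).2.1
  -- the core
  have hrefl : ∀ r ∈ F, ∀ x : Y, (x, x) ∈ r := by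
    intro r hr x
    obtain ⟨n, -, hn⟩ := hFb.mem_iff.1 hr
    exact hn (refl_mem_uniformity (s n).2.1)
  have hsymm : ∀ r ∈ F, Prod.swap ⁻¹' r ∈ F := by
    intro r hr
    obtain ⟨n, -, hn⟩ := hFb.mem_iff.1 hr
    refine mem_of_superset (hFb.mem_of_mem (i := n) trivial) ?_
    intro p hp
    exact hn ((s n).2.2.symm _ _ hp)
  have hcomp' : ∀ r ∈ F, ∃ t ∈ F, t ○ t ⊆ r := by
    intro r hr
    obtain ⟨n, -, hn⟩ := hFb.mem_iff.1 hr
    exact ⟨(s (n + 1)).1, hFb.mem_of_mem (i := n + 1) trivial, (hcomp n).trans hn⟩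
  let core : UniformSpace.Core Y := UniformSpace.Core.mk' F hrefl hsymm hcomp'
  let u' : UniformSpace Y := UniformSpace.ofCore core
  have hu' : @uniformity Y u' = F := rfl
  have hcg : @Filter.IsCountablyGenerated _ (@uniformity Y u') := by
    rw [hu', hF]; infer_instance
  obtain ⟨I, hI⟩ := @UniformSpace.metrizable_uniformity Y u' hcg
  refine ⟨@dist Y I.toDist, @dist_self Y I, @dist_comm Y I, @dist_triangle Y I,
    fun y z => @dist_nonneg Y I y z, ?_, ?_⟩
  · intro η hη
    have : {p : Y × Y | @dist Y I.toDist p.1 p.2 < η} ∈ @uniformity Y I.toUniformSpace :=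
      @Metric.dist_mem_uniformity Y I η hη
    rw [hI, hu'] at this
    exact hle this
  · have hV₀F : V₀ ∈ @uniformity Y I.toUniformSpace := by
      rw [hI, hu']
      exact hFb.mem_of_mem (i := 0) trivial
    obtain ⟨ε, hε, hball⟩ := (@Metric.mem_uniformity_dist Y I V₀).1 hV₀F
    exact ⟨ε, hε, fun y z h =>
      hV₀c ((show V₀ ⊆ V₀ ○ V₀ from @subset_comp_self_of_mem_uniformity Y uY V₀ hV₀) (hball h))⟩

/-- A function `f : X → Y` between uniform spaces is *proximally continuous* if for every
bounded uniformly continuous function `g : Y → ℝ`, the composition `g ∘ f` is uniformly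
continuous. -/
def ProximallyContinuous {X Y : Type*} [UniformSpace X] [UniformSpace Y] (f : X → Y) : Prop :=
  ∀ g : Y → ℝ, UniformContinuous g → (∃ C, ∀ y, |g y| ≤ C) → UniformContinuous (g ∘ f)

private theorem key_min_abs (a b c : ℝ) : |min a b - min a c| ≤ |b - c| := by
  have h0 : (0:ℝ) ≤ |b - c| := abs_nonneg _
  have h1 : b - c ≤ |b - c| := le_abs_self _
  have h2 : -|b - c| ≤ b - c := neg_abs_le _
  simp only [min_def]
  split_ifs <;> rw [abs_sub_le_iff] <;> constructor <;> linarith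

/-- Proposition 2.1: `f` is proximally continuous iff for every `A ⊆ X` and every entourage
`V` of `Y` there is an entourage `U` of `X` with `f(U[A]) ⊆ V[f(A)]`. -/
theorem stmt_0 {X Y : Type*} [UniformSpace X] [UniformSpace Y] (f : X → Y) :
    ProximallyContinuous f ↔
      ∀ A : Set X, ∀ V ∈ uniformity Y, ∃ U ∈ uniformity X,
        f '' {y | ∃ x ∈ A, (x, y) ∈ U} ⊆ {z | ∃ w ∈ f '' A, (w, z) ∈ V} := by
  constructor
  · -- forward
    intro hpc A V hV
    rcases A.eq_empty_or_nonempty with rfl | ⟨x₀, hx₀⟩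
    · exact ⟨Set.univ, univ_mem, by simp⟩
    haveI : Nonempty A := ⟨⟨x₀, hx₀⟩⟩
    obtain ⟨d, hself, hsym, htri, hnn, hmem, ε, hε, hball⟩ := exists_nice_pseudometric hV
    set h : Y → ℝ := fun z => ⨅ x : A, d (f x) z with hh
    have hbdd : ∀ z, BddBelow (Set.range fun x : A => d (f x) z) := fun z =>
      ⟨0, by rintro r ⟨x, rfl⟩; exact hnn _ _⟩
    have hnonneg : ∀ z, 0 ≤ h z := fun z => le_ciInf fun x => hnn _ _
    have hlip : ∀ z z', h z ≤ h z' + d z' z := by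
      intro z z'
      have key : ∀ x : A, h z - d z' z ≤ d (f x) z' := by
        intro x
        have h1 : h z ≤ d (f x) z := ciInf_le (hbdd z) x
        have h2 := htri (f x) z' z
        linarith
      linarith [le_ciInf key]
    have habs : ∀ z z', |h z - h z'| ≤ d z z' := by
      intro z z'
      rw [abs_sub_le_iff]
      have e1 := hlip z z'
      have e2 := hlip z' z
      have e3 := hsym z z'
      constructor <;> linarith
    set g : Y → ℝ := fun z => min ε (h z) with hg
    have hgb : ∀ z, |g z| ≤ ε := fun z => by
      have h0 : 0 ≤ g z := le_min hε.le (hnonneg z)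
      rw [abs_of_nonneg h0]
      exact min_le_left _ _
    have hgUC : UniformContinuous g := by
      refine Metric.uniformity_basis_dist.tendsto_right_iff.2 fun η hη => ?_
      filter_upwards [hmem η hη] with p hp
      have : dist (g p.1) (g p.2) ≤ d p.1 p.2 := by
        rw [Real.dist_eq]
        exact (key_min_abs ε (h p.1) (h p.2)).trans (habs p.1 p.2)
      exact lt_of_le_of_lt this hp
    have hGC := hpc g hgUC ⟨ε, hgb⟩
    have hU : {p : X × X | dist (g (f p.1)) (g (f p.2)) < ε / 2} ∈ uniformity X := by
      have := Metric.uniformity_basis_dist.tendsto_right_iff.1 hGC (ε / 2) (by linarith)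
      exact this
    refine ⟨_, hU, ?_⟩
    rintro z ⟨y, ⟨x, hxA, hxy⟩, rfl⟩
    have h1 : dist (g (f x)) (g (f y)) < ε / 2 := hxy
    have hx0 : h (f x) = 0 := by
      have h1 : h (f x) ≤ d (f x) (f x) := ciInf_le (hbdd _) ⟨x, hxA⟩
      have := hself (f x)
      have := hnonneg (f x)
      linarith
    have hgfx : g (f x) = 0 := by
      rw [hg]; simp only [hx0]; exact min_eq_right hε.le
    rw [hgfx, Real.dist_eq, zero_sub, abs_neg, abs_of_nonneg (le_min hε.le (hnonneg _))] at h1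
    have hhy : h (f y) < ε := by
      by_contra hc
      push_neg at hc
      rw [min_eq_left hc] at h1
      linarith
    obtain ⟨⟨x', hx'⟩, hdx'⟩ := exists_lt_of_ciInf_lt hhy
    exact ⟨f x', ⟨x', hx', rfl⟩, hball _ _ hdx'⟩
  · -- backward
    intro hcond g hg ⟨C, hC⟩
    by_contra hnc
    have hnc' : ∃ ε > 0, {p : X × X | dist (g (f p.1)) (g (f p.2)) < ε} ∉ uniformity X := by
      by_contra hH
      push_neg at hH
      exact hnc (Metric.uniformity_basis_dist.tendsto_right_iff.2 fun η hη => by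
        filter_upwards [hH η hη] with p hp using hp)
    obtain ⟨ε, hε, hbad⟩ := hnc'
    have hfreq : ∀ U ∈ uniformity X, ∃ p : X × X, p ∈ U ∧ ε ≤ dist (g (f p.1)) (g (f p.2)) := by
      intro U hU
      by_contra hc
      push_neg at hc
      exact hbad (Filter.mem_of_superset hU fun p hp => hc p hp)
    set δ := ε / 4 with hδ
    have hδ0 : 0 < δ := by positivity
    set K := ⌈2 * C / δ⌉₊ with hK
    have hgrid : ∀ v : ℝ, |v| ≤ C → ∃ k ∈ Finset.range (K + 1), |v - (-C + k * δ)| ≤ δ := by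
      intro v hv
      rw [abs_le] at hv
      set k := ⌊(v + C) / δ⌋₊ with hk
      have hr0 : 0 ≤ (v + C) / δ := div_nonneg (by linarith) hδ0.le
      refine ⟨k, ?_, ?_⟩
      · rw [Finset.mem_range, Nat.lt_succ_iff, hk, hK]
        calc ⌊(v + C) / δ⌋₊ ≤ ⌊2 * C / δ⌋₊ := Nat.floor_le_floor (by gcongr; linarith)
          _ ≤ ⌈2 * C / δ⌉₊ := Nat.floor_le_ceil _
      · have h1 : (k : ℝ) * δ ≤ v + C := (le_div_iff₀ hδ0).1 (Nat.floor_le hr0)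
        have h2 : v + C < ((k : ℝ) + 1) * δ := (div_lt_iff₀ hδ0).1 (Nat.lt_floor_add_one _)
        rw [abs_le]
        constructor <;> nlinarith
    have hkey : ∃ k ∈ Finset.range (K + 1), ∀ U ∈ uniformity X, ∃ p : X × X, p ∈ U ∧
        ε ≤ dist (g (f p.1)) (g (f p.2)) ∧ |g (f p.1) - (-C + k * δ)| ≤ δ := by
      by_contra hc
      push_neg at hc
      choose! W hW hWp using hc
      have hU : (⋂ k ∈ Finset.range (K + 1), W k) ∈ uniformity X :=
        (Filter.biInter_mem (Finset.range (K + 1)).finite_toSet).2 fun k hk => hW k hk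
      obtain ⟨p, hp, hd⟩ := hfreq _ hU
      obtain ⟨k, hk, hvk⟩ := hgrid (g (f p.1)) (hC _)
      exact absurd hvk (not_le.2 (hWp k hk p (Set.mem_iInter₂.1 hp k hk) hd))
    obtain ⟨k, -, hk⟩ := hkey
    set t := -C + (k : ℝ) * δ with ht
    set A := {x : X | |g (f x) - t| ≤ δ} with hA
    have hVY : {q : Y × Y | dist (g q.1) (g q.2) < δ} ∈ uniformity Y :=
      Metric.uniformity_basis_dist.tendsto_right_iff.1 hg δ hδ0
    obtain ⟨U, hU, hsub⟩ := hcond A _ hVY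
    obtain ⟨p, hpU, hpd, hpt⟩ := hk U hU
    have hp2 : f p.2 ∈ f '' {y | ∃ x ∈ A, (x, y) ∈ U} := ⟨p.2, ⟨p.1, hpt, hpU⟩, rfl⟩
    obtain ⟨w, ⟨x', hx'A, rfl⟩, hwV⟩ := hsub hp2
    have hwV' : dist (g (f x')) (g (f p.2)) < δ := hwV
    rw [Real.dist_eq] at hpd hwV'
    rw [hA, Set.mem_setOf_eq] at hx'A
    have e1 : |g (f p.1) - g (f p.2)| ≤ |g (f p.1) - t| + |t - g (f p.2)| := abs_sub_le _ _ _
    have e2 : |t - g (f p.2)| ≤ |t - g (f x')| + |g (f x') - g (f p.2)| := abs_sub_le _ _ _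
    have e3 : |t - g (f x')| = |g (f x') - t| := abs_sub_comm _ _
    have hpd' : ε ≤ |g (f p.1) - g (f p.2)| := hpd
    linarith
end

section
/- Let X be a set and W a symmetric binary relation on X (i.e., (x, y) ∈ W implies (y, x) ∈ W). Then for every infinite cardinal η and every family (x_n, y_n)_{n<η} of pairs in X × X such that (x_n, y_n) ∉ W∘W∘W for each n < η, there exists a subset A ⊆ η which is cofinal in η and such that (x_n, y_m) ∉ W for every n, m ∈ A. -/
/-- Lemma 2.3: if `W` is a symmetric binary relation on `X`, `η` an infinite cardinal and
`(x n, y n)_{n < η.ord}` a family of pairs with `(x n, y n) ∉ W ∘ W ∘ W`, then there is a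
subset `A` of the ordinals below `η` which is cofinal in `η` and such that `(x n, y m) ∉ W`
for all `n, m ∈ A`. -/
theorem stmt_2 {X : Type*} (W : Set (X × X)) (hsymm : ∀ p ∈ W, (p.2, p.1) ∈ W)
    (η : Cardinal) (hη : Cardinal.aleph0 ≤ η) (x y : Ordinal → X)
    (h : ∀ n < η.ord, (x n, y n) ∉ SetRel.comp W (SetRel.comp W W)) :
    ∃ A : Set Ordinal, (∀ n ∈ A, n < η.ord) ∧ (∀ β < η.ord, ∃ α ∈ A, β ≤ α) ∧
      ∀ n ∈ A, ∀ m ∈ A, (x n, y m) ∉ W := by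
  set o := η.ord with ho
  -- basic composition helper
  have hcomp : ∀ {a b c d : X}, (a, b) ∈ W → (b, c) ∈ W → (c, d) ∈ W →
      (a, d) ∈ SetRel.comp W (SetRel.comp W W) := by
    intro a b c d h1 h2 h3
    exact ⟨b, h1, c, h2, h3⟩
  have hdiag : ∀ n < o, (x n, y n) ∉ W := by
    intro n hn hw
    exact h n hn (hcomp hw (hsymm _ hw) hw)
  -- Case 1 : some row is cofinal
  by_cases h1 : ∃ n, n < o ∧ ∀ β < o, ∃ m, m < o ∧ β ≤ m ∧ (x n, y m) ∈ W
  · obtain ⟨n₀, hn₀, hcof⟩ := h1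
    refine ⟨{m | m < o ∧ (x n₀, y m) ∈ W}, fun n hn => hn.1, ?_, ?_⟩
    · intro β hβ
      obtain ⟨m, hm, hbm, hw⟩ := hcof β hβ
      exact ⟨m, ⟨hm, hw⟩, hbm⟩
    · rintro m ⟨hm, hwm⟩ m' ⟨hm', hwm'⟩ hw
      exact h m hm (hcomp hw (hsymm _ hwm') hwm)
  -- Case 2 : some column is cofinal
  by_cases h2 : ∃ n, n < o ∧ ∀ β < o, ∃ m, m < o ∧ β ≤ m ∧ (x m, y n) ∈ W
  · obtain ⟨n₀, hn₀, hcof⟩ := h2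
    refine ⟨{m | m < o ∧ (x m, y n₀) ∈ W}, fun n hn => hn.1, ?_, ?_⟩
    · intro β hβ
      obtain ⟨m, hm, hbm, hw⟩ := hcof β hβ
      exact ⟨m, ⟨hm, hw⟩, hbm⟩
    · rintro m ⟨hm, hwm⟩ m' ⟨hm', hwm'⟩ hw
      exact h m' hm' (hcomp hwm' (hsymm _ hwm) hw)
  -- Case 3 : all rows and columns are bounded
  push_neg at h1 h2
  -- a strict bound for each row and column
  have hB : ∀ n, ∃ B, n < o → (B < o ∧ ∀ m, m < o → B ≤ m →
      (x n, y m) ∉ W ∧ (x m, y n) ∉ W) := by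
    intro n
    by_cases hn : n < o
    · obtain ⟨β₁, hβ₁, hb1⟩ := h1 n hn
      obtain ⟨β₂, hβ₂, hb2⟩ := h2 n hn
      refine ⟨max β₁ β₂, fun _ => ⟨max_lt hβ₁ hβ₂, fun m hm hbm =>
        ⟨hb1 m hm (le_trans (le_max_left _ _) hbm),
         hb2 m hm (le_trans (le_max_right _ _) hbm)⟩⟩⟩
    · exact ⟨0, fun hn' => absurd hn' hn⟩
  choose B hBspec using hB
  -- a cofinal family of size `o.cof`
  obtain ⟨ι, f, hlsub, hι⟩ := Ordinal.exists_lsub_cof o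
  set c := o.cof.ord with hc
  have hmkeq : Cardinal.mk c.ToType = Cardinal.mk ι := by
    rw [Cardinal.mk_toType, hc, Cardinal.card_ord, hι]
  obtain ⟨e⟩ := Cardinal.eq.mp hmkeq
  set g : Ordinal → Ordinal := fun i =>
    if hi : i < c then f (e ((Ordinal.ToType.mk (o := c)) ⟨i, hi⟩)) else 0 with hg
  have hg1 : ∀ i < c, g i < o := by
    intro i hi
    rw [hg]
    simp only [hi, dif_pos]
    rw [← hlsub]
    exact Ordinal.lt_lsub f _
  have hgval : ∀ t : c.ToType, g ((Ordinal.ToType.mk (o := c)).symm t).1 = f (e t) := by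
    intro t
    have ht : (((Ordinal.ToType.mk (o := c)).symm t : Set.Iio c) : Ordinal) < c :=
      ((Ordinal.ToType.mk (o := c)).symm t).2
    rw [hg]
    beta_reduce
    rw [dif_pos ht]
    rw [show (⟨(((Ordinal.ToType.mk (o := c)).symm t : Set.Iio c) : Ordinal), ht⟩ : Set.Iio c)
      = (Ordinal.ToType.mk (o := c)).symm t from rfl, OrderIso.apply_symm_apply]
  have hg2 : ∀ β < o, ∃ i < c, β ≤ g i := by
    intro β hβ
    rw [← hlsub, Ordinal.lt_lsub_iff] at hβ
    obtain ⟨k, hk⟩ := hβ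
    refine ⟨((Ordinal.ToType.mk (o := c)).symm (e.symm k) : Set.Iio c),
      ((Ordinal.ToType.mk (o := c)).symm (e.symm k)).2, ?_⟩
    rw [hgval (e.symm k), Equiv.apply_symm_apply]
    exact hk
  -- the recursively constructed family
  set F : Ordinal → Ordinal := Ordinal.lt_wf.fix
    (fun i IH => max (g i) (Ordinal.bsup i fun j hj => B (IH j hj))) with hF
  have hFeq : ∀ i, F i = max (g i) (Ordinal.bsup i fun j _ => B (F j)) := by
    intro i
    rw [hF]
    rw [WellFounded.fix_eq]
  have hFg : ∀ i, g i ≤ F i := fun i => (hFeq i) ▸ le_max_left _ _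
  have hFB : ∀ j i : Ordinal, j < i → B (F j) ≤ F i := by
    intro j i hj
    rw [hFeq i]
    exact le_trans (Ordinal.le_bsup (fun j _ => B (F j)) j hj) (le_max_right _ _)
  have hFlt : ∀ i < c, F i < o := by
    intro i hi
    induction i using Ordinal.induction with
    | h i IH =>
      rw [hFeq i]
      refine max_lt (hg1 i hi) (Ordinal.bsup_lt_ord ?_ ?_)
      · rw [← Cardinal.lt_ord]
        exact hi
      · intro j hj
        exact (hBspec (F j) (IH j hj (hj.trans hi))).1
  refine ⟨F '' Set.Iio c, ?_, ?_, ?_⟩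
  · rintro n ⟨i, hi, rfl⟩
    exact hFlt i hi
  · intro β hβ
    obtain ⟨i, hi, hgi⟩ := hg2 β hβ
    exact ⟨F i, ⟨i, hi, rfl⟩, hgi.trans (hFg i)⟩
  · rintro n ⟨i, hi, rfl⟩ m ⟨j, hj, rfl⟩ hw
    rcases lt_trichotomy i j with hij | hij | hij
    · exact ((hBspec (F i) (hFlt i hi)).2 (F j) (hFlt j hj) (hFB i j hij)).1 hw
    · exact hdiag (F i) (hFlt i hi) (hij ▸ hw)
    · exact ((hBspec (F j) (hFlt j hj)).2 (F i) (hFlt i hi) (hFB j i hij)).2 hw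
end

section
/- Let G be a topological group which is functionally generated by the collection of all sets of the form closure(A), where A ⊆ G is a subset such that A·A⁻¹ is relatively o-radial in G. Then G is proximally fine with respect to its right uniformity. -/
open Pointwise

universe u v

/-- Right uniform continuity of `f : G → Y`: a basis of the right uniformity of a topological
group `G` is given by the sets `{(g, h) : g * h⁻¹ ∈ U}`, `U` a neighborhood of the identity. -/
def RightUC {G : Type*} [Group G] (t : TopologicalSpace G) {Y : Type*} [UniformSpace Y]
    (f : G → Y) : Prop :=
  ∀ V ∈ uniformity Y, ∃ U ∈ @nhds G t 1, ∀ g h : G, g * h⁻¹ ∈ U → (f g, f h) ∈ V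

/-- Left uniform continuity of `f : G → Y`: a basis of the left uniformity of a topological
group `G` is given by the sets `{(g, h) : g⁻¹ * h ∈ U}`, `U` a neighborhood of the identity. -/
def LeftUC {G : Type*} [Group G] (t : TopologicalSpace G) {Y : Type*} [UniformSpace Y]
    (f : G → Y) : Prop :=
  ∀ V ∈ uniformity Y, ∃ U ∈ @nhds G t 1, ∀ g h : G, g⁻¹ * h ∈ U → (f g, f h) ∈ V

/-- `f : G → Y` is proximally continuous for the right uniformity of `G`: for every bounded
uniformly continuous `φ : Y → ℝ`, the composition `φ ∘ f` is right uniformly continuous. -/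
def RightProxCont {G : Type*} [Group G] (t : TopologicalSpace G) {Y : Type*} [UniformSpace Y]
    (f : G → Y) : Prop :=
  ∀ φ : Y → ℝ, UniformContinuous φ → (∃ C, ∀ y, |φ y| ≤ C) → RightUC t (φ ∘ f)

/-- A topological group is proximally fine with respect to its right uniformity if every
proximally continuous map into any uniform space is uniformly continuous. -/
def ProxFineGroup {G : Type*} [Group G] (t : TopologicalSpace G) : Prop :=
  ∀ (Y : Type v) [UniformSpace Y] (f : G → Y), RightProxCont t f → RightUC t f

/-- A subset `A` of a topological space `X` is relatively o-radial in `X` if for every family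
`(O i)` of open sets and every `a ∈ A` with `a ∈ closure (⋃ i, O i ∩ A)` and `a ∉ closure (O i)`
for all `i`, there is `J ⊆ I` of regular cardinality such that `a ∈ closure (⋃ j ∈ L, O j)`
for every `L ⊆ J` of the same cardinality as `J`. -/
def RelORadial {X : Type u} [TopologicalSpace X] (A : Set X) : Prop :=
  ∀ {ι : Type u} (O : ι → Set X) (a : X), a ∈ A → (∀ i, IsOpen (O i)) →
    a ∈ closure (⋃ i, O i ∩ A) → (∀ i, a ∉ closure (O i)) →
    ∃ J : Set ι, (Cardinal.mk J).IsRegular ∧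
      ∀ L : Set ι, L ⊆ J → Cardinal.mk L = Cardinal.mk J → a ∈ closure (⋃ j ∈ L, O j)

/-- `X` is functionally generated by the collection `M` of subsets of `X` if every
discontinuous real-valued function on `X` restricts on some `A ∈ M` to a function with no
continuous extension to `X`. -/
def FunGen (X : Type*) [TopologicalSpace X] (M : Set (Set X)) : Prop :=
  ∀ f : X → ℝ, ¬Continuous f →
    ∃ A ∈ M, ¬∃ g : X → ℝ, Continuous g ∧ ∀ a ∈ A, g a = f a

open Set NNReal

lemma chainDist {X : Type*} (W : ℕ → Set (X × X)) (h0 : W 0 = Set.univ)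
    (hdiag : ∀ n x, (x, x) ∈ W n)
    (hsymm : ∀ n x y, (x, y) ∈ W n → (y, x) ∈ W n)
    (hcomp : ∀ n a b c e, (a,b) ∈ W (n+1) → (b,c) ∈ W (n+1) → (c,e) ∈ W (n+1) →
      (a,e) ∈ W n) :
    ∃ ρ : X → X → ℝ,
      (∀ x y, 0 ≤ ρ x y) ∧ (∀ x y, ρ x y ≤ 1) ∧ (∀ x, ρ x x = 0) ∧
      (∀ x y, ρ x y = ρ y x) ∧ (∀ x y z, ρ x z ≤ ρ x y + ρ y z) ∧
      (∀ n x y, (x, y) ∈ W n → ρ x y ≤ (2:ℝ)⁻¹ ^ n) ∧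
      (∀ n x y, ρ x y < (2:ℝ)⁻¹ ^ (n+1) → (x, y) ∈ W n) := by
  classical
  have hdec : ∀ n, W (n+1) ⊆ W n := fun n p hp =>
    hcomp n p.1 p.2 p.2 p.2 hp (hdiag _ _) (hdiag _ _)
  have hdec' : ∀ {m n : ℕ}, m ≤ n → W n ⊆ W m := by
    intro m n h
    induction h with
    | refl => exact fun p hp => hp
    | @step k h ih => exact fun p hp => ih (hdec k hp)
  set d : X → X → ℝ≥0 := fun x y =>
    if h : ∀ n, (x, y) ∈ W n then 0 else (2⁻¹ : ℝ≥0) ^ (Nat.find (not_forall.1 h) - 1)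
    with hdDef
  have hW0 : ∀ x y : X, (x, y) ∈ W 0 := by intro x y; rw [h0]; trivial
  have hNpos : ∀ (x y : X) (h : ¬ ∀ n, (x,y) ∈ W n), 1 ≤ Nat.find (not_forall.1 h) := by
    intro x y h
    rcases Nat.eq_zero_or_pos (Nat.find (not_forall.1 h)) with h' | h'
    · exact absurd (h' ▸ Nat.find_spec (not_forall.1 h)) (by simpa using hW0 x y)
    · exact h'
  have hWd : ∀ (n : ℕ) (x y : X), (x, y) ∈ W n → d x y ≤ 2⁻¹ ^ n := by
    intro n x y hxy
    rw [hdDef]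
    dsimp only
    split
    · exact zero_le
    · rename_i h
      have hnN : n < Nat.find (not_forall.1 h) := by
        by_contra hc
        exact Nat.find_spec (not_forall.1 h) (hdec' (not_lt.1 hc) hxy)
      exact pow_le_pow_right_of_le_one' (by exact_mod_cast (by norm_num : ((2:ℝ)⁻¹) ≤ 1)) (by omega)
  have hdW : ∀ (n : ℕ) (x y : X), d x y ≤ 2⁻¹ ^ n → (x, y) ∈ W n := by
    intro n x y hxy
    rw [hdDef] at hxy
    dsimp only at hxy
    split at hxy
    · rename_i h; exact h n
    · rename_i h
      have h2 : (0:ℝ≥0) < 2⁻¹ := by norm_num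
      have h3 : (2⁻¹:ℝ≥0) < 1 := by exact_mod_cast (by norm_num : ((2:ℝ)⁻¹) < 1)
      have hn : n ≤ Nat.find (not_forall.1 h) - 1 := by
        by_contra hcon
        have : (2⁻¹:ℝ≥0) ^ n < 2⁻¹ ^ (Nat.find (not_forall.1 h) - 1) :=
          pow_lt_pow_right_of_lt_one₀ h2 h3 (by omega)
        exact absurd (lt_of_lt_of_le this hxy) (lt_irrefl _)
      have hmem : (x, y) ∈ W (Nat.find (not_forall.1 h) - 1) := by
        have := Nat.find_min (not_forall.1 h)
          (m := Nat.find (not_forall.1 h) - 1) (by have := hNpos x y h; omega)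
        exact not_not.1 this
      exact hdec' hn hmem
  have hall0 : ∀ (x y : X), (∀ n, (x, y) ∈ W n) → d x y = 0 := by
    intro x y h
    rw [hdDef]; dsimp only; exact dif_pos h
  have hd0 : ∀ (x y : X), d x y = 0 → ∀ n, (x, y) ∈ W n := by
    intro x y hxy
    rw [hdDef] at hxy
    dsimp only at hxy
    split at hxy
    · assumption
    · exact absurd hxy (by positivity)
  have hdform : ∀ (x y : X), d x y = 0 ∨ ∃ m, d x y = 2⁻¹ ^ m := by
    intro x y
    rw [hdDef]; dsimp only
    split
    · exact Or.inl rfl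
    · exact Or.inr ⟨_, rfl⟩
  have dself : ∀ x, d x x = 0 := by
    intro x
    rw [hdDef]; dsimp only
    rw [dif_pos fun n => hdiag n x]
  have dcomm : ∀ x y, d x y = d y x := by
    intro x y
    have key : d x y ≤ d y x → d y x ≤ d x y → d x y = d y x := fun h1 h2 => le_antisymm h1 h2
    have mono : ∀ a b : X, d a b ≤ d b a := by
      intro a b
      rcases hdform b a with h | ⟨m, hm⟩
      · rcases hdform a b with h' | ⟨m', hm'⟩
        · rw [h, h']
        · have hab : ∀ n, (a, b) ∈ W n := fun n => hsymm n b a (hd0 b a h n)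
          rw [hall0 a b hab, h]
      · have : (b, a) ∈ W m := hdW m b a (le_of_eq hm)
        have := hWd m a b (hsymm m b a this)
        rw [hm]; exact this
    exact key (mono x y) (mono y x)
  have hquad : ∀ a b c e : X, d a e ≤ 2 * max (d a b) (max (d b c) (d c e)) := by
    intro a b c e
    set M := max (d a b) (max (d b c) (d c e)) with hM
    rcases eq_or_ne M 0 with hM0 | hMne
    · have h1 : d a b = 0 := le_antisymm (hM0 ▸ le_max_left _ _) zero_le
      have h2 : d b c = 0 := le_antisymm (hM0 ▸ (le_max_of_le_right (le_max_left _ _))) zero_le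
      have h3 : d c e = 0 := le_antisymm (hM0 ▸ (le_max_of_le_right (le_max_right _ _))) zero_le
      have hae : ∀ n, (a, e) ∈ W n := fun n =>
        hcomp n a b c e (hd0 a b h1 (n+1)) (hd0 b c h2 (n+1)) (hd0 c e h3 (n+1))
      rw [hall0 a e hae]; exact zero_le
    · have hMform : ∃ m, M = 2⁻¹ ^ m := by
        rcases max_choice (d a b) (max (d b c) (d c e)) with h | h
        · rcases hdform a b with h' | ⟨m, hm⟩
          · exact absurd (h.trans h') hMne
          · exact ⟨m, h.trans hm⟩
        · rcases max_choice (d b c) (d c e) with h2 | h2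
          · rcases hdform b c with h' | ⟨m, hm⟩
            · exact absurd ((h.trans h2).trans h') hMne
            · exact ⟨m, (h.trans h2).trans hm⟩
          · rcases hdform c e with h' | ⟨m, hm⟩
            · exact absurd ((h.trans h2).trans h') hMne
            · exact ⟨m, (h.trans h2).trans hm⟩
      obtain ⟨m, hm⟩ := hMform
      have m1 : (a, b) ∈ W m := hdW m a b (hm ▸ le_max_left _ _)
      have m2 : (b, c) ∈ W m := hdW m b c (hm ▸ le_max_of_le_right (le_max_left _ _))
      have m3 : (c, e) ∈ W m := hdW m c e (hm ▸ le_max_of_le_right (le_max_right _ _))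
      cases m with
      | zero =>
        have : d a e ≤ 2⁻¹ ^ 0 := hWd 0 a e (hW0 a e)
        calc d a e ≤ 2⁻¹ ^ 0 := this
          _ ≤ 2 * M := by rw [hm]; norm_num
      | succ k =>
        have : (a, e) ∈ W k := hcomp k a b c e m1 m2 m3
        calc d a e ≤ 2⁻¹ ^ k := hWd k a e this
          _ = 2 * 2⁻¹ ^ (k+1) := by
              rw [pow_succ]
              rw [mul_comm ((2:ℝ≥0)⁻¹ ^ k) _]
              rw [← mul_assoc]
              norm_num
          _ = 2 * M := by rw [hm]
  letI I := PseudoMetricSpace.ofPreNNDist d dself dcomm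
  have hρd : ∀ x y, dist x y ≤ (d x y : ℝ) := fun x y =>
    PseudoMetricSpace.dist_ofPreNNDist_le d dself dcomm x y
  have hdρ : ∀ x y, (d x y : ℝ) ≤ 2 * dist x y := fun x y =>
    PseudoMetricSpace.le_two_mul_dist_ofPreNNDist d dself dcomm hquad x y
  refine ⟨fun x y => dist x y, fun x y => dist_nonneg, ?_, fun x => dist_self x,
    fun x y => dist_comm x y, fun x y z => dist_triangle x y z, ?_, ?_⟩
  · intro x y
    calc dist x y ≤ (d x y : ℝ) := hρd x y
      _ ≤ ((2⁻¹:ℝ≥0) ^ 0 : ℝ≥0) := by exact_mod_cast hWd 0 x y (hW0 x y)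
      _ = 1 := by norm_num
  · intro n x y h
    have hc : (((2⁻¹:ℝ≥0) ^ n : ℝ≥0) : ℝ) = (2:ℝ)⁻¹ ^ n := by push_cast; norm_num
    calc dist x y ≤ (d x y : ℝ) := hρd x y
      _ ≤ (((2⁻¹:ℝ≥0) ^ n : ℝ≥0) : ℝ) := NNReal.coe_le_coe.2 (hWd n x y h)
      _ = (2:ℝ)⁻¹ ^ n := hc
  · intro n x y h
    apply hdW n x y
    have h1 : (d x y : ℝ) ≤ 2 * dist x y := hdρ x y
    have h3 : (2:ℝ) * (2:ℝ)⁻¹ ^ (n+1) = (2:ℝ)⁻¹ ^ n := by rw [pow_succ]; ring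
    have hh : dist x y < (2:ℝ)⁻¹ ^ (n+1) := h
    have h2 : (d x y : ℝ) < (2:ℝ)⁻¹ ^ n := by
      calc (d x y : ℝ) ≤ 2 * dist x y := h1
        _ < 2 * (2:ℝ)⁻¹ ^ (n+1) := by linarith
        _ = (2:ℝ)⁻¹ ^ n := h3
    have hc : (((2⁻¹:ℝ≥0) ^ n : ℝ≥0) : ℝ) = (2:ℝ)⁻¹ ^ n := by
      push_cast; norm_num
    have : (d x y : ℝ) < (((2⁻¹:ℝ≥0) ^ n : ℝ≥0) : ℝ) := by rw [hc]; exact h2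
    exact le_of_lt (NNReal.coe_lt_coe.1 this)

lemma lip_rho {Y : Type*} (ρ : Y → Y → ℝ) (hsymm : ∀ x y, ρ x y = ρ y x)
    (htri : ∀ x y z, ρ x z ≤ ρ x y + ρ y z) (c a b : Y) :
    |ρ a c - ρ b c| ≤ ρ a b := by
  rw [abs_sub_le_iff]
  constructor
  · have h1 := htri a b c; linarith
  · have h1 := htri b a c
    have h2 := hsymm b a
    linarith

lemma exists_rho {Y : Type*} [UniformSpace Y] {V : Set (Y × Y)} (hV : V ∈ uniformity Y) :
    ∃ ρ : Y → Y → ℝ, (∀ x y, 0 ≤ ρ x y) ∧ (∀ x y, ρ x y ≤ 1) ∧ (∀ x, ρ x x = 0) ∧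
      (∀ x y, ρ x y = ρ y x) ∧ (∀ x y z, ρ x z ≤ ρ x y + ρ y z) ∧
      (∀ δ : ℝ, 0 < δ → {p : Y × Y | ρ p.1 p.2 < δ} ∈ uniformity Y) ∧
      (∀ x y, ρ x y < 1 → (x, y) ∈ V) := by
  classical
  have step : ∀ s : Set (Y × Y), s ∈ uniformity Y → ∃ t, t ∈ uniformity Y ∧ SetRel.IsSymm t ∧
      ∀ a b c e : Y, (a,b) ∈ t → (b,c) ∈ t → (c,e) ∈ t → (a,e) ∈ s := by
    intro s hs
    obtain ⟨t₁, ht₁, hs₁, hc₁⟩ := comp_symm_mem_uniformity_sets hs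
    obtain ⟨t₂, ht₂, hs₂, hc₂⟩ := comp_symm_mem_uniformity_sets ht₁
    have ht21 : t₂ ⊆ t₁ := by
      rintro ⟨x, y⟩ hp
      exact hc₂ ⟨x, refl_mem_uniformity ht₂, hp⟩
    refine ⟨t₂, ht₂, hs₂, fun a b c e hab hbc hce => ?_⟩
    exact hc₁ ⟨c, hc₂ ⟨b, hab, hbc⟩, ht21 hce⟩
  choose t ht hsym hstep using step
  let T : ℕ → {s : Set (Y × Y) // s ∈ uniformity Y} := fun n =>
    Nat.rec ⟨t V hV, ht V hV⟩ (fun _ p => ⟨t p.1 p.2, ht p.1 p.2⟩) n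
  have hTsymm : ∀ n, SetRel.IsSymm (T n).1 := by
    intro n; cases n with
    | zero => exact hsym V hV
    | succ k => exact hsym (T k).1 (T k).2
  have hTstep : ∀ n a b c e, (a,b) ∈ (T (n+1)).1 → (b,c) ∈ (T (n+1)).1 →
      (c,e) ∈ (T (n+1)).1 → (a,e) ∈ (T n).1 := fun n => hstep (T n).1 (T n).2
  have hT0V : ∀ a b c e, (a,b) ∈ (T 0).1 → (b,c) ∈ (T 0).1 → (c,e) ∈ (T 0).1 →
      (a,e) ∈ V := hstep V hV
  have hT0sub : (T 0).1 ⊆ V := by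
    rintro ⟨a, b⟩ hp
    exact hT0V a a a b (refl_mem_uniformity (T 0).2) (refl_mem_uniformity (T 0).2) hp
  set W : ℕ → Set (Y × Y) := fun n => Nat.rec Set.univ (fun k _ => (T k).1) n with hWdef
  have hW0 : W 0 = Set.univ := rfl
  have hWs : ∀ n, W (n+1) = (T n).1 := fun n => rfl
  obtain ⟨ρ', h0', h1', hself', hsymm', htri', hup', hlo'⟩ := chainDist W hW0
    (by
      intro n x
      cases n with
      | zero => trivial
      | succ k => exact refl_mem_uniformity (T k).2)
    (by
      intro n x y hxy
      cases n with
      | zero => trivial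
      | succ k => haveI := hTsymm k; exact (SetRel.comm (R := (T k).1)).1 hxy)
    (by
      intro n a b c e h1 h2 h3
      cases n with
      | zero => trivial
      | succ k => exact hTstep k a b c e h1 h2 h3)
  have hent' : ∀ δ : ℝ, 0 < δ → {p : Y × Y | ρ' p.1 p.2 < δ} ∈ uniformity Y := by
    intro δ hδ
    obtain ⟨n, hn⟩ := exists_pow_lt_of_lt_one hδ (by norm_num : (2:ℝ)⁻¹ < 1)
    refine Filter.mem_of_superset (T n).2 ?_
    rintro ⟨a, b⟩ hp
    have : ρ' a b ≤ (2:ℝ)⁻¹ ^ (n+1) := hup' (n+1) a b hp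
    have h2 : (2:ℝ)⁻¹ ^ (n+1) ≤ (2:ℝ)⁻¹ ^ n :=
      pow_le_pow_of_le_one (by norm_num) (by norm_num) (by omega)
    simp only [Set.mem_setOf_eq]
    linarith
  refine ⟨fun x y => min 1 (4 * ρ' x y), ?_, ?_, ?_, ?_, ?_, ?_, ?_⟩
  · intro x y; exact le_min (by norm_num) (by have := h0' x y; linarith)
  · intro x y; exact min_le_left _ _
  · intro x; simp only; rw [hself' x]; norm_num
  · intro x y; simp only; rw [hsymm' x y]
  · intro x y z
    have key : ∀ a b : ℝ, 0 ≤ a → 0 ≤ b → min 1 (a+b) ≤ min 1 a + min 1 b := by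
      intro a b ha hb
      rcases le_total 1 a with h | h
      · have e1 : min 1 a = 1 := min_eq_left h
        have h2 : min 1 (a+b) ≤ 1 := min_le_left _ _
        have h3 : (0:ℝ) ≤ min 1 b := le_min (by norm_num) hb
        linarith
      · rcases le_total 1 b with h' | h'
        · have e1 : min 1 b = 1 := min_eq_left h'
          have h2 : min 1 (a+b) ≤ 1 := min_le_left _ _
          have h3 : (0:ℝ) ≤ min 1 a := le_min (by norm_num) ha
          linarith
        · have e1 : min 1 a = a := min_eq_right h
          have e2 : min 1 b = b := min_eq_right h'
          have h2 : min 1 (a+b) ≤ a + b := min_le_right _ _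
          linarith
    have h1 : min 1 (4 * ρ' x z) ≤ min 1 (4 * ρ' x y + 4 * ρ' y z) := by
      apply min_le_min le_rfl
      have := htri' x y z; linarith
    calc min 1 (4 * ρ' x z) ≤ min 1 (4 * ρ' x y + 4 * ρ' y z) := h1
      _ ≤ min 1 (4 * ρ' x y) + min 1 (4 * ρ' y z) :=
        key _ _ (by have := h0' x y; linarith) (by have := h0' y z; linarith)
  · intro δ hδ
    refine Filter.mem_of_superset (hent' (δ/4) (by linarith)) ?_
    rintro ⟨a, b⟩ hp
    simp only [Set.mem_setOf_eq] at hp ⊢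
    have : (4:ℝ) * ρ' a b < δ := by linarith
    calc min 1 (4 * ρ' a b) ≤ 4 * ρ' a b := min_le_right _ _
      _ < δ := this
  · intro x y hxy
    have h4 : 4 * ρ' x y < 1 := by
      rcases min_lt_iff.1 hxy with h | h
      · linarith
      · exact h
    have : ρ' x y < (2:ℝ)⁻¹ ^ (1+1) := by norm_num; linarith
    have hW1 : (x, y) ∈ W 1 := hlo' 1 x y this
    exact hT0sub hW1

lemma uc_of_lip {Y : Type*} [UniformSpace Y] (ρ : Y → Y → ℝ) (φ : Y → ℝ)
    (hent : ∀ δ : ℝ, 0 < δ → {p : Y × Y | ρ p.1 p.2 < δ} ∈ uniformity Y)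
    (hlip : ∀ a b, |φ a - φ b| ≤ ρ a b) : UniformContinuous φ := by
  rw [UniformContinuous, Metric.uniformity_basis_dist.tendsto_right_iff]
  intro ε hε
  filter_upwards [hent ε hε] with p hp
  calc dist (φ p.1) (φ p.2) = |φ p.1 - φ p.2| := Real.dist_eq _ _
    _ ≤ ρ p.1 p.2 := hlip _ _
    _ < ε := hp

lemma cont_rho_right {Y : Type*} [UniformSpace Y] (ρ : Y → Y → ℝ)
    (hsymm : ∀ x y, ρ x y = ρ y x) (htri : ∀ x y z, ρ x z ≤ ρ x y + ρ y z)
    (hent : ∀ δ : ℝ, 0 < δ → {p : Y × Y | ρ p.1 p.2 < δ} ∈ uniformity Y)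
    (c : Y) : Continuous fun w => ρ w c := by
  rw [continuous_iff_continuousAt]
  intro w₀
  rw [ContinuousAt, Metric.tendsto_nhds]
  intro ε hε
  filter_upwards [UniformSpace.ball_mem_nhds w₀ (hent ε hε)] with w hw
  have hw' : ρ w₀ w < ε := hw
  have h1 : |ρ w c - ρ w₀ c| ≤ ρ w w₀ := lip_rho ρ hsymm htri c w w₀
  have h2 : ρ w w₀ = ρ w₀ w := hsymm w w₀
  rw [Real.dist_eq]
  calc |ρ w c - ρ w₀ c| ≤ ρ w w₀ := h1
    _ = ρ w₀ w := h2
    _ < ε := hw'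

lemma exists_sigma {G : Type*} [Group G] [TopologicalSpace G] [IsTopologicalGroup G]
    (U : ℕ → Set G) (hU : ∀ n, U n ∈ nhds (1 : G)) (h0 : U 0 = Set.univ)
    (hsymmU : ∀ n g, g ∈ U n → g⁻¹ ∈ U n)
    (hmul : ∀ n a b c, a ∈ U (n+1) → b ∈ U (n+1) → c ∈ U (n+1) → a * b * c ∈ U n) :
    ∃ σ : G → G → ℝ, (∀ x y, 0 ≤ σ x y) ∧ (∀ x y, σ x y ≤ 1) ∧ (∀ x, σ x x = 0) ∧
      (∀ x y, σ x y = σ y x) ∧ (∀ x y z, σ x z ≤ σ x y + σ y z) ∧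
      (∀ n x y, x * y⁻¹ ∈ U n → σ x y ≤ (2:ℝ)⁻¹ ^ n) ∧
      (∀ n x y, σ x y < (2:ℝ)⁻¹ ^ (n+1) → x * y⁻¹ ∈ U n) := by
  obtain ⟨σ, p1, p2, p3, p4, p5, p6, p7⟩ :=
    chainDist (fun n => {p : G × G | p.1 * p.2⁻¹ ∈ U n})
      (by ext p; simp [h0])
      (by intro n x; simp only [Set.mem_setOf_eq, mul_inv_cancel]
          exact mem_of_mem_nhds (hU n))
      (by intro n x y h
          simp only [Set.mem_setOf_eq] at h ⊢
          rw [show y * x⁻¹ = (x * y⁻¹)⁻¹ by group]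
          exact hsymmU n _ h)
      (by intro n a b c e h1 h2 h3
          simp only [Set.mem_setOf_eq] at h1 h2 h3 ⊢
          rw [show a * e⁻¹ = (a * b⁻¹) * (b * c⁻¹) * (c * e⁻¹) by group]
          exact hmul n _ _ _ h1 h2 h3)
  exact ⟨σ, p1, p2, p3, p4, p5, fun n x y h => p6 n x y h, fun n x y h => p7 n x y h⟩

lemma group_step {G : Type*} [Group G] [TopologicalSpace G] [IsTopologicalGroup G]
    {s : Set G} (hs : s ∈ nhds (1:G)) :
    ∃ w, w ∈ nhds (1:G) ∧ w ⊆ s ∧ (∀ g ∈ w, g⁻¹ ∈ w) ∧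
      (∀ a b c, a ∈ w → b ∈ w → c ∈ w → a * b * c ∈ s) := by
  obtain ⟨v₁, hv₁, hv₁s⟩ := exists_nhds_split_inv hs
  obtain ⟨v₂, hv₂, hv₂s⟩ := exists_nhds_split_inv hv₁
  have hinv : ∀ (v : Set G), v ∈ nhds (1:G) → {g : G | g⁻¹ ∈ v} ∈ nhds (1:G) := by
    intro v hv
    have hc : ContinuousAt (fun g : G => g⁻¹) 1 := continuous_inv.continuousAt
    have h1 : (1:G)⁻¹ = 1 := inv_one
    exact hc (by simp only [inv_one]; exact hv)
  have hv1sub : v₁ ⊆ s := by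
    intro g hg
    have := hv₁s g hg 1 (mem_of_mem_nhds hv₁)
    simpa using this
  have hv2sub : v₂ ⊆ v₁ := by
    intro g hg
    have := hv₂s g hg 1 (mem_of_mem_nhds hv₂)
    simpa using this
  refine ⟨(v₂ ∩ {g | g⁻¹ ∈ v₂}) ∩ (v₁ ∩ {g | g⁻¹ ∈ v₁}), ?_, ?_, ?_, ?_⟩
  · exact Filter.inter_mem (Filter.inter_mem hv₂ (hinv v₂ hv₂))
      (Filter.inter_mem hv₁ (hinv v₁ hv₁))
  · rintro g ⟨⟨h1, _⟩, _⟩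
    exact hv1sub (hv2sub h1)
  · rintro g ⟨⟨h1, h2⟩, h3, h4⟩
    refine ⟨⟨h2, ?_⟩, h4, ?_⟩ <;> simpa
  · rintro a b c ⟨⟨ha2, _⟩, _⟩ ⟨⟨_, hb2'⟩, _⟩ ⟨_, _, hc1'⟩
    have hab : a * b ∈ v₁ := by
      have := hv₂s a ha2 b⁻¹ hb2'
      simpa [div_eq_mul_inv] using this
    have := hv₁s (a*b) hab c⁻¹ hc1'
    simpa [div_eq_mul_inv] using this

lemma exists_maximal_pairwise {α : Type*} (P : Set α) (R : α → α → Prop) :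
    ∃ M, M ⊆ P ∧ (∀ i ∈ M, ∀ j ∈ M, i ≠ j → R i j) ∧
      ∀ x ∈ P, x ∉ M → ∃ y ∈ M, y ≠ x ∧ (¬ R x y ∨ ¬ R y x) := by
  obtain ⟨M, hM⟩ := zorn_subset {M : Set α | M ⊆ P ∧ ∀ i ∈ M, ∀ j ∈ M, i ≠ j → R i j} (by
    intro c hcS hchain
    refine ⟨⋃₀ c, ⟨?_, ?_⟩, fun s hs => Set.subset_sUnion_of_mem hs⟩
    · exact Set.sUnion_subset fun s hs => (hcS hs).1
    · rintro i ⟨s, hs, his⟩ j ⟨s', hs', hjs'⟩ hij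
      by_cases hss : s = s'
      · exact (hcS hs').2 i (hss ▸ his) j hjs' hij
      · rcases hchain hs hs' hss with h | h
        · exact (hcS hs').2 i (h his) j hjs' hij
        · exact (hcS hs).2 i his j (h hjs') hij)
  refine ⟨M, hM.prop.1, hM.prop.2, ?_⟩
  intro x hxP hxM
  by_cases hins : ∀ i ∈ insert x M, ∀ j ∈ insert x M, i ≠ j → R i j
  · have hIns : insert x M ∈ {M : Set α | M ⊆ P ∧ ∀ i ∈ M, ∀ j ∈ M, i ≠ j → R i j} :=
      ⟨Set.insert_subset hxP hM.prop.1, hins⟩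
    exact absurd (hM.2 hIns (Set.subset_insert x M) (Set.mem_insert x M)) hxM
  · push_neg at hins
    obtain ⟨i, hi, j, hj, hij, hR⟩ := hins
    rcases Set.mem_insert_iff.1 hi with rfl | hiM
    · rcases Set.mem_insert_iff.1 hj with rfl | hjM
      · exact absurd rfl hij
      · exact ⟨j, hjM, ne_of_mem_of_not_mem hjM hxM, Or.inl hR⟩
    · rcases Set.mem_insert_iff.1 hj with rfl | hjM
      · exact ⟨i, hiM, ne_of_mem_of_not_mem hiM hxM, Or.inr hR⟩
      · exact absurd (hM.prop.2 i hiM j hjM hij) hR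

lemma min_lip (c s t : ℝ) : |min c s - min c t| ≤ |s - t| := by
  have h1 := le_abs_self (s - t)
  have h2 := neg_abs_le (s - t)
  rw [abs_sub_le_iff]
  rcases le_total c s with hcs | hcs <;> rcases le_total c t with hct | hct
  · rw [min_eq_left hcs, min_eq_left hct]; constructor <;> linarith
  · rw [min_eq_left hcs, min_eq_right hct]; constructor <;> linarith
  · rw [min_eq_right hcs, min_eq_left hct]; constructor <;> linarith
  · rw [min_eq_right hcs, min_eq_right hct]; constructor <;> linarith

lemma comb {Y : Type*} (ρ : Y → Y → ℝ)
    (h0 : ∀ x y, 0 ≤ ρ x y) (h1 : ∀ x y, ρ x y ≤ 1) (hself : ∀ x, ρ x x = 0)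
    (hsymm : ∀ x y, ρ x y = ρ y x) (htri : ∀ x y z, ρ x z ≤ ρ x y + ρ y z)
    {ι : Type*} (hreg : (Cardinal.mk ι).IsRegular)
    (y z : ι → Y) {ε : ℝ} (hε : 0 < ε) (hfar : ∀ i, ε < ρ (y i) (z i)) :
    ∃ (L : Set ι) (φ : Y → ℝ), Cardinal.mk L = Cardinal.mk ι ∧
      (∀ a b, |φ a - φ b| ≤ ρ a b) ∧ (∀ w, 0 ≤ φ w) ∧ (∀ w, φ w ≤ 1) ∧
      (∀ j ∈ L, ε/16 ≤ |φ (y j) - φ (z j)|) := by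
  classical
  set κ := Cardinal.mk ι with hκ
  have hne : Nonempty ι := by
    rw [← Cardinal.mk_ne_zero_iff]
    exact ne_of_gt (Cardinal.aleph0_pos.trans_le hreg.1)
  obtain ⟨i⟩ := hne
  have hε1 : ε ≤ 1 := le_of_lt (lt_of_lt_of_le (hfar i) (h1 _ _))
  have hsmallUnion : ∀ (M : Set ι) (C : ι → Set ι), Cardinal.mk M < κ →
      (∀ i ∈ M, Cardinal.mk (C i) < κ) → Cardinal.mk (⋃ i ∈ M, C i) < κ := by
    intro M C hM hC
    rw [Set.biUnion_eq_iUnion]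
    refine lt_of_le_of_lt Cardinal.mk_iUnion_le_sum_mk ?_
    exact Cardinal.sum_lt_of_isRegular hreg hM (fun i => hC i.1 i.2)
  obtain ⟨P, hPsub, hPsep, hPmax⟩ := exists_maximal_pairwise (Set.univ : Set ι)
      (fun i j => ε/8 < ρ (z i) (z j))
  by_cases hPbig : Cardinal.mk P = κ
  · -- P is a full-size separated family
    by_cases hfib : ∃ i₀ ∈ P, ¬ (Cardinal.mk {k | k ∈ P ∧ ρ (y k) (z i₀) < ε/16} < κ)
    · -- big fiber: y's cluster near z i₀
      obtain ⟨i₀, hi₀, hbig⟩ := hfib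
      refine ⟨{k | k ∈ P ∧ ρ (y k) (z i₀) < ε/16}, fun w => ρ w (z i₀),
        le_antisymm (Cardinal.mk_set_le _) (not_lt.1 hbig),
        fun a b => lip_rho ρ hsymm htri _ a b, fun w => h0 _ _, fun w => h1 _ _, ?_⟩
      intro j hj
      have hji₀ : j ≠ i₀ := by
        rintro rfl
        have := hfar j
        have := hj.2
        linarith
      have hsep : ε/8 < ρ (z j) (z i₀) := hPsep j hj.1 i₀ hi₀ hji₀
      have hkey : ε/16 ≤ ρ (z j) (z i₀) - ρ (y j) (z i₀) := by linarith [hj.2]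
      calc ε/16 ≤ ρ (z j) (z i₀) - ρ (y j) (z i₀) := hkey
        _ ≤ |ρ (z j) (z i₀) - ρ (y j) (z i₀)| := le_abs_self _
        _ = |ρ (y j) (z i₀) - ρ (z j) (z i₀)| := abs_sub_comm _ _
    · -- all fibers small : free set argument
      push_neg at hfib
      obtain ⟨M, hMsub, hMfree, hMmax⟩ := exists_maximal_pairwise P
        (fun j i => ¬ (ρ (y j) (z i) < ε/16))
      have hMκ : Cardinal.mk M = κ := by
        by_contra hMne
        have hMlt : Cardinal.mk M < κ := lt_of_le_of_ne (Cardinal.mk_set_le _) hMne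
        have hcov : P ⊆ M ∪ ((⋃ i ∈ M, {k | k ∈ P ∧ ρ (y k) (z i) < ε/16}) ∪
            (⋃ j ∈ M, {k | k ∈ P ∧ ρ (y j) (z k) < ε/16})) := by
          intro x hxP
          by_cases hxM : x ∈ M
          · exact Or.inl hxM
          · obtain ⟨i, hiM, hix, hR⟩ := hMmax x hxP hxM
            right
            rcases hR with h | h
            · exact Or.inl (Set.mem_biUnion hiM ⟨hxP, not_not.1 h⟩)
            · exact Or.inr (Set.mem_biUnion hiM ⟨hxP, not_not.1 h⟩)
        have hA : Cardinal.mk (⋃ i ∈ M, {k | k ∈ P ∧ ρ (y k) (z i) < ε/16}) < κ :=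
          hsmallUnion M _ hMlt (fun i hi => hfib i (hMsub hi))
        have hB : Cardinal.mk (⋃ j ∈ M, {k | k ∈ P ∧ ρ (y j) (z k) < ε/16}) < κ := by
          refine hsmallUnion M _ hMlt (fun j hj => ?_)
          have hss : {k | k ∈ P ∧ ρ (y j) (z k) < ε/16}.Subsingleton := by
            intro a ha b hb
            by_contra hab
            have h1' : ε/8 < ρ (z a) (z b) := hPsep a ha.1 b hb.1 hab
            have h2' := htri (z a) (y j) (z b)
            have h3' := hsymm (z a) (y j)
            linarith [ha.2, hb.2]
          have : Cardinal.mk {k | k ∈ P ∧ ρ (y j) (z k) < ε/16} ≤ 1 :=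
            Cardinal.mk_le_one_iff_set_subsingleton.2 hss
          exact lt_of_le_of_lt this (lt_of_lt_of_le Cardinal.one_lt_aleph0 hreg.1)
        have hle : κ ≤ Cardinal.mk ↥(M ∪ ((⋃ i ∈ M, {k | k ∈ P ∧ ρ (y k) (z i) < ε/16}) ∪
            (⋃ j ∈ M, {k | k ∈ P ∧ ρ (y j) (z k) < ε/16}))) := by
          rw [← hPbig]
          exact Cardinal.mk_le_mk_of_subset hcov
        have hlt : Cardinal.mk ↥(M ∪ ((⋃ i ∈ M, {k | k ∈ P ∧ ρ (y k) (z i) < ε/16}) ∪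
            (⋃ j ∈ M, {k | k ∈ P ∧ ρ (y j) (z k) < ε/16}))) < κ := by
          refine lt_of_le_of_lt (Cardinal.mk_union_le _ _) ?_
          refine Cardinal.add_lt_of_lt hreg.1 hMlt ?_
          refine lt_of_le_of_lt (Cardinal.mk_union_le _ _) ?_
          exact Cardinal.add_lt_of_lt hreg.1 hA hB
        exact absurd (hle.trans_lt hlt) (lt_irrefl κ)
      -- the free set M works
      haveI hMne : Nonempty ↥M := by
        rw [← Cardinal.mk_ne_zero_iff, hMκ]
        exact ne_of_gt (Cardinal.aleph0_pos.trans_le hreg.1)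
      have hbdd : ∀ w : Y, BddBelow (Set.range fun i : ↥M => ρ w (z i.1)) := by
        intro w
        exact ⟨0, by rintro _ ⟨i, rfl⟩; exact h0 _ _⟩
      set ψ := fun w : Y => ⨅ i : ↥M, ρ w (z i.1) with hψ
      have hψ0 : ∀ w, 0 ≤ ψ w := fun w => le_ciInf (fun i : ↥M => h0 w (z i.1))
      have hψlip : ∀ a b, |ψ a - ψ b| ≤ ρ a b := by
        have key : ∀ u v : Y, ψ u - ψ v ≤ ρ u v := by
          intro u v
          have h' : ψ u - ρ u v ≤ ψ v := by
            refine le_ciInf (fun i : ↥M => ?_)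
            have hA : ψ u ≤ ρ u (z i.1) := ciInf_le (hbdd u) i
            have hB := htri u v (z i.1)
            linarith
          linarith
        intro a b
        rw [abs_sub_le_iff]
        exact ⟨key a b, by rw [hsymm]; exact key b a⟩
      refine ⟨M, fun w => min (ε/16) (ψ w), hMκ, ?_, ?_, ?_, ?_⟩
      · intro a b
        calc |min (ε/16) (ψ a) - min (ε/16) (ψ b)| ≤ |ψ a - ψ b| := min_lip _ _ _
          _ ≤ ρ a b := hψlip a b
      · intro w; exact le_min (by linarith) (hψ0 w)
      · intro w
        calc min (ε/16) (ψ w) ≤ ε/16 := min_le_left _ _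
          _ ≤ 1 := by linarith
      · intro j hj
        have hzj : min (ε/16) (ψ (z j)) = 0 := by
          have hle0 : ψ (z j) ≤ 0 := by
            have h' := ciInf_le (hbdd (z j)) (⟨j, hj⟩ : ↥M)
            simpa [hself] using h'
          have hψz : ψ (z j) = 0 := le_antisymm hle0 (hψ0 (z j))
          rw [hψz, min_eq_right (by linarith)]
        have hyj : min (ε/16) (ψ (y j)) = ε/16 := by
          have hge : ε/16 ≤ ψ (y j) := by
            refine le_ciInf (fun i : ↥M => ?_)
            by_cases hij : i.1 = j
            · rw [hij]; linarith [hfar j]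
            · have h' := hMfree j hj i.1 i.2 (fun h => hij h.symm)
              linarith [not_lt.1 h']
          rw [min_eq_left hge]
        show ε/16 ≤ |min (ε/16) (ψ (y j)) - min (ε/16) (ψ (z j))|
        rw [hzj, hyj, sub_zero, abs_of_pos (by linarith)]
  · -- z's cluster case
    have hPlt : Cardinal.mk P < κ := lt_of_le_of_ne (Cardinal.mk_set_le P) hPbig
    have hcov : (Set.univ : Set ι) ⊆ P ∪ ⋃ i ∈ P, {k | ρ (z k) (z i) ≤ ε/8} := by
      intro k _
      by_cases hk : k ∈ P
      · exact Or.inl hk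
      · obtain ⟨i, hiP, _, hR⟩ := hPmax k trivial hk
        refine Or.inr (Set.mem_biUnion hiP ?_)
        rcases hR with h | h
        · exact le_of_not_gt h
        · show ρ (z k) (z i) ≤ ε/8
          rw [hsymm]; exact le_of_not_gt h
    have hibig : ∃ i₀ ∈ P, ¬ (Cardinal.mk {k | ρ (z k) (z i₀) ≤ ε/8} < κ) := by
      by_contra hc
      push_neg at hc
      have hA : Cardinal.mk (⋃ i ∈ P, {k | ρ (z k) (z i) ≤ ε/8}) < κ :=
        hsmallUnion P _ hPlt hc
      have hle : κ ≤ Cardinal.mk ↥(P ∪ ⋃ i ∈ P, {k | ρ (z k) (z i) ≤ ε/8}) := by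
        have h' := Cardinal.mk_le_mk_of_subset hcov
        rwa [Cardinal.mk_univ] at h'
      have hlt : Cardinal.mk ↥(P ∪ ⋃ i ∈ P, {k | ρ (z k) (z i) ≤ ε/8}) < κ :=
        lt_of_le_of_lt (Cardinal.mk_union_le _ _) (Cardinal.add_lt_of_lt hreg.1 hPlt hA)
      exact absurd (hle.trans_lt hlt) (lt_irrefl κ)
    obtain ⟨i₀, hi₀, hbig⟩ := hibig
    refine ⟨{k | ρ (z k) (z i₀) ≤ ε/8}, fun w => ρ w (z i₀),
      le_antisymm (Cardinal.mk_set_le _) (not_lt.1 hbig),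
      fun a b => lip_rho ρ hsymm htri _ a b, fun w => h0 _ _, fun w => h1 _ _, ?_⟩
    intro j hj
    have h1j : ρ (z j) (z i₀) ≤ ε/8 := hj
    have h2j : ε - ε/8 ≤ ρ (y j) (z i₀) := by
      have h3 := htri (y j) (z i₀) (z j)
      have h4 := hsymm (z i₀) (z j)
      have h5 := hfar j
      linarith
    have hkey : ε/16 ≤ ρ (y j) (z i₀) - ρ (z j) (z i₀) := by linarith
    calc ε/16 ≤ ρ (y j) (z i₀) - ρ (z j) (z i₀) := hkey
      _ ≤ |ρ (y j) (z i₀) - ρ (z j) (z i₀)| := le_abs_self _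
lemma cont_of_prox {G : Type*} [Group G] [TopologicalSpace G] [IsTopologicalGroup G]
    {Y : Type*} [UniformSpace Y] {f : G → Y}
    (hf : RightProxCont ‹TopologicalSpace G› f) : Continuous f := by
  rw [continuous_iff_continuousAt]
  intro x₀
  rw [ContinuousAt]
  intro s hs
  rw [UniformSpace.mem_nhds_iff] at hs
  obtain ⟨V, hV, hVs⟩ := hs
  obtain ⟨ρ, h0, h1, hself, hsymm, htri, hent, hlt⟩ := exists_rho hV
  set φ : Y → ℝ := fun w => ρ w (f x₀) with hφ
  have hUC : UniformContinuous φ := uc_of_lip ρ φ hent (fun a b => lip_rho ρ hsymm htri _ a b)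
  have hbd : ∃ C, ∀ w, |φ w| ≤ C := ⟨1, fun w => by
    rw [hφ]; simp only; rw [abs_of_nonneg (h0 _ _)]; exact h1 _ _⟩
  obtain ⟨U, hU, hUprop⟩ := hf φ hUC hbd {p : ℝ × ℝ | dist p.1 p.2 < 1}
    (Metric.dist_mem_uniformity one_pos)
  have hN : {g : G | g * x₀⁻¹ ∈ U} ∈ nhds x₀ := by
    rw [← nhds_translation_mul_inv x₀]
    exact Filter.preimage_mem_comap hU
  rw [Filter.mem_map]
  refine Filter.mem_of_superset hN ?_
  intro g hg
  have hp := hUprop g x₀ hg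
  have hφx₀ : φ (f x₀) = 0 := hself (f x₀)
  have hdist : ρ (f g) (f x₀) < 1 := by
    have hd : dist (φ (f g)) (φ (f x₀)) < 1 := hp
    rw [Real.dist_eq, hφx₀, sub_zero, abs_of_nonneg (h0 _ _)] at hd
    exact hd
  have hmem : (f x₀, f g) ∈ V := hlt _ _ (by rw [hsymm]; exact hdist)
  exact Set.mem_preimage.2 (hVs hmem)

/-- Theorem 2.4(1): a topological group functionally generated by the closures of sets `A`
with `A * A⁻¹` relatively o-radial is proximally fine. -/
theorem stmt_3 {G : Type u} [Group G] [TopologicalSpace G] [IsTopologicalGroup G]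
    (hgen : FunGen G {B | ∃ A : Set G, B = closure A ∧ RelORadial (A * A⁻¹)}) :
    ProxFineGroup ‹TopologicalSpace G› := by
  intro Y _ f hprox V hV
  by_contra hcon
  push_neg at hcon
  obtain ⟨ρ, hρ0, hρ1, hρself, hρsymm, hρtri, hρent, hρV⟩ := exists_rho hV
  have hfc : Continuous f := cont_of_prox hprox
  have hρcont : ∀ c : Y, Continuous fun w => ρ w c :=
    fun c => cont_rho_right ρ hρsymm hρtri hρent c
  have hbddF : ∀ x : G, BddAbove (Set.range fun t => ρ (f (x * t)) (f t)) :=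
    fun x => ⟨1, by rintro _ ⟨t, rfl⟩; exact hρ1 _ _⟩
  set F : G → ℝ := fun x => ⨆ t : G, ρ (f (x * t)) (f t) with hF
  have hF0 : ∀ x, 0 ≤ F x := fun x => le_ciSup_of_le (hbddF x) 1 (hρ0 _ _)
  have hF1 : ∀ x, F x ≤ 1 := fun x => ciSup_le fun t => hρ1 _ _
  have hFone : F 1 = 0 := le_antisymm (ciSup_le fun t => by rw [one_mul, hρself]) (hF0 1)
  have hFsub : ∀ g h : G, F g ≤ F (g * h⁻¹) + F h := by
    intro g h
    refine ciSup_le fun t => ?_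
    have h1 : ρ (f (g * t)) (f (h * t)) ≤ F (g * h⁻¹) := by
      have h2 := le_ciSup (hbddF (g * h⁻¹)) (h * t)
      have harg : g * h⁻¹ * (h * t) = g * t := by group
      rwa [harg] at h2
    have h2 : ρ (f (h * t)) (f t) ≤ F h := le_ciSup (hbddF h) t
    calc ρ (f (g * t)) (f t) ≤ ρ (f (g * t)) (f (h * t)) + ρ (f (h * t)) (f t) := hρtri _ _ _
      _ ≤ F (g * h⁻¹) + F h := add_le_add h1 h2
  have hFinv : ∀ x : G, F x⁻¹ ≤ F x := by
    intro x
    refine ciSup_le fun t => ?_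
    have h1 : ρ (f (x * (x⁻¹ * t))) (f (x⁻¹ * t)) ≤ F x := le_ciSup (hbddF x) (x⁻¹ * t)
    have harg : x * (x⁻¹ * t) = t := by group
    rw [harg] at h1
    rw [hρsymm]
    exact h1
  have hFabs : ∀ g h : G, |F g - F h| ≤ F (g * h⁻¹) := by
    intro g h
    rw [abs_sub_le_iff]
    constructor
    · linarith [hFsub g h]
    · have h1 := hFsub h g
      have h2 : F (h * g⁻¹) ≤ F (g * h⁻¹) := by
        have h3 : h * g⁻¹ = (g * h⁻¹)⁻¹ := by group
        rw [h3]; exact hFinv _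
      linarith
  have hFwit : ∀ (c : ℝ) (x : G), c < F x → ∃ t, c < ρ (f (x * t)) (f t) := by
    intro c x hc
    exact (lt_ciSup_iff (hbddF x)).1 hc
  have hFopen : ∀ c : ℝ, IsOpen {x : G | c < F x} := by
    intro c
    have hU : {x : G | c < F x} = ⋃ t : G, {x | c < ρ (f (x * t)) (f t)} := by
      ext x
      simp only [Set.mem_setOf_eq, Set.mem_iUnion]
      constructor
      · exact hFwit c x
      · rintro ⟨t, ht⟩
        exact lt_of_lt_of_le ht (le_ciSup (hbddF x) t)
    rw [hU]
    refine isOpen_iUnion fun t => ?_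
    have hcont : Continuous fun x : G => ρ (f (x * t)) (f t) :=
      (hρcont (f t)).comp (hfc.comp (continuous_mul_right t))
    exact isOpen_lt continuous_const hcont
  have hFbig : ∀ U ∈ nhds (1:G), ∃ x ∈ U, 1 ≤ F x := by
    intro U hU
    obtain ⟨g, h, hgh, hV'⟩ := hcon U hU
    refine ⟨g * h⁻¹, hgh, ?_⟩
    have h1 : ρ (f g) (f h) ≤ F (g * h⁻¹) := by
      have h2 := le_ciSup (hbddF (g * h⁻¹)) h
      have harg : g * h⁻¹ * h = g := by group
      rwa [harg] at h2
    have h2 : 1 ≤ ρ (f g) (f h) := not_lt.1 fun hlt => hV' (hρV _ _ hlt)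
    linarith
  have hFdisc : ¬ Continuous F := by
    intro hFcont
    have h1 : {x : G | F x < 1} ∈ nhds (1:G) := by
      have h2 : ContinuousAt F 1 := hFcont.continuousAt
      have h3 := h2 (Iio_mem_nhds (show F (1:G) < 1 by rw [hFone]; norm_num))
      exact h3
    obtain ⟨x, hxU, hx1⟩ := hFbig _ h1
    exact absurd hx1 (not_le.2 hxU)
  obtain ⟨B, hBmem, hnoext⟩ := hgen F hFdisc
  obtain ⟨A, rfl, hrad⟩ := hBmem
  rcases A.eq_empty_or_nonempty with rfl | ⟨a₀, ha₀⟩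
  · exact hnoext ⟨0, continuous_const, by simp⟩
  have h1S : (1:G) ∈ A * A⁻¹ := by
    have h2 := Set.mul_mem_mul ha₀ (Set.inv_mem_inv.2 ha₀)
    rwa [mul_inv_cancel] at h2
  have hclmul : closure A * (closure A)⁻¹ ⊆ closure (A * A⁻¹) := by
    rintro p ⟨g, hg, hi, hiI, rfl⟩
    have hh : hi⁻¹ ∈ closure A := hiI
    have hcont : Continuous fun q : G × G => q.1 * q.2⁻¹ := continuous_fst.mul continuous_snd.inv
    have hmemprod : (g, hi⁻¹) ∈ closure (A ×ˢ A) := by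
      rw [closure_prod_eq]; exact ⟨hg, hh⟩
    have himg : g * hi⁻¹⁻¹ ∈ closure ((fun q : G × G => q.1 * q.2⁻¹) '' (A ×ˢ A)) :=
      image_closure_subset_closure_image hcont ⟨(g, hi⁻¹), hmemprod, rfl⟩
    have himgset : (fun q : G × G => q.1 * q.2⁻¹) '' (A ×ˢ A) ⊆ A * A⁻¹ := by
      rintro _ ⟨⟨a, b⟩, ⟨ha, hb⟩, rfl⟩
      exact Set.mul_mem_mul ha (Set.inv_mem_inv.2 hb)
    have hfin := closure_mono himgset himg
    simpa using hfin
  -- KEY STEP (6a)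
  have key : ∀ ε₀ : ℝ, 0 < ε₀ → ∃ U ∈ nhds (1:G), ∀ x ∈ U,
      x ∈ closure A * (closure A)⁻¹ → F x ≤ ε₀ := by
    intro ε₀ hε₀
    set ε' := min ε₀ 2⁻¹ with hε'def
    have hε' : 0 < ε' := lt_min hε₀ (by norm_num)
    have hε'le : ε' ≤ ε₀ := min_le_left _ _
    suffices h : ∃ U ∈ nhds (1:G), ∀ x ∈ U, x ∈ closure A * (closure A)⁻¹ → F x ≤ ε' by
      obtain ⟨U, hU, hP⟩ := h
      exact ⟨U, hU, fun x hx hx2 => (hP x hx hx2).trans hε'le⟩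
    by_contra hk
    push_neg at hk
    set T := {x : G | ε' < F x} with hTdef
    have hTopen : IsOpen T := hFopen ε'
    have h1T : (1:G) ∈ closure (T ∩ (A * A⁻¹)) := by
      have h1 : (1:G) ∈ closure (T ∩ closure (A * A⁻¹)) := by
        rw [mem_closure_iff_nhds]
        intro t ht
        obtain ⟨x, hxU, hxcl, hxF⟩ := hk t ht
        exact ⟨x, hxU, hxF, hclmul hxcl⟩
      have h2 : T ∩ closure (A * A⁻¹) ⊆ closure (T ∩ (A * A⁻¹)) := hTopen.inter_closure
      rw [← closure_closure (s := T ∩ (A * A⁻¹))]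
      exact closure_mono h2 h1
    have hwit : ∀ x : ↥(T ∩ (A * A⁻¹)), ∃ t : G, ε' < ρ (f ((x:G) * t)) (f t) :=
      fun x => hFwit ε' x x.2.1
    choose tw htw using hwit
    set O : ↥(T ∩ (A * A⁻¹)) → Set G := fun x =>
      {x' | ε' < ρ (f (x' * tw x)) (f (tw x)) ∧ ρ (f (x' * tw x)) (f ((x:G) * tw x)) < ε'/32}
      with hOdef
    have hOopen : ∀ x, IsOpen (O x) := by
      intro x
      have hc1 : Continuous fun x' : G => ρ (f (x' * tw x)) (f (tw x)) :=
        (hρcont _).comp (hfc.comp (continuous_mul_right _))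
      have hc2 : Continuous fun x' : G => ρ (f (x' * tw x)) (f ((x:G) * tw x)) :=
        (hρcont _).comp (hfc.comp (continuous_mul_right _))
      exact (isOpen_lt continuous_const hc1).inter (isOpen_lt hc2 continuous_const)
    have hOmem : ∀ x, (x:G) ∈ O x := fun x => ⟨htw x, by rw [hρself]; linarith⟩
    have hOnotone : ∀ x, (1:G) ∉ closure (O x) := by
      intro x hmem
      have hsub : closure (O x) ⊆ {x' | ε' ≤ ρ (f (x' * tw x)) (f (tw x))} := by
        apply closure_minimal
        · intro x' hx'; exact le_of_lt hx'.1
        · exact isClosed_le continuous_const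
            ((hρcont _).comp (hfc.comp (continuous_mul_right _)))
      have h3 := hsub hmem
      rw [Set.mem_setOf_eq, one_mul, hρself] at h3
      linarith
    have hOcup : (1:G) ∈ closure (⋃ x, O x ∩ (A * A⁻¹)) := by
      refine closure_mono ?_ h1T
      intro p hp
      exact Set.mem_iUnion.2 ⟨⟨p, hp⟩, hOmem ⟨p, hp⟩, hp.2⟩
    obtain ⟨J, hJreg, hJacc⟩ := hrad O 1 h1S hOopen hOcup hOnotone
    obtain ⟨L', φ, hL'card, hφlip, hφ0, hφ1, hφgap⟩ := comb ρ hρ0 hρ1 hρself hρsymm hρtri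
      (ι := ↥J) hJreg
      (fun j => f (((j : ↥(T ∩ (A * A⁻¹))) : G) * tw (j : ↥(T ∩ (A * A⁻¹)))))
      (fun j => f (tw (j : ↥(T ∩ (A * A⁻¹)))))
      (ε := ε') hε' (fun j => htw _)
    have hφUC : UniformContinuous φ := uc_of_lip ρ φ hρent hφlip
    have hφbd : ∃ C, ∀ w, |φ w| ≤ C :=
      ⟨1, fun w => by rw [abs_of_nonneg (hφ0 w)]; exact hφ1 w⟩
    obtain ⟨Ustar, hUstar, hUprop⟩ := hprox φ hφUC hφbd
      {p : ℝ × ℝ | dist p.1 p.2 < ε'/64} (Metric.dist_mem_uniformity (by linarith))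
    set L : Set ↥(T ∩ (A * A⁻¹)) := Subtype.val '' L' with hLdef
    have hLsub : L ⊆ J := by rintro _ ⟨j, hj, rfl⟩; exact j.2
    have hLcard : Cardinal.mk L = Cardinal.mk J := by
      rw [hLdef, Cardinal.mk_image_eq Subtype.val_injective]
      exact hL'card
    have hacc := hJacc L hLsub hLcard
    rw [mem_closure_iff_nhds] at hacc
    obtain ⟨x', hx'mem⟩ := hacc Ustar hUstar
    obtain ⟨hx'U, hx'O⟩ := hx'mem
    rw [Set.mem_iUnion₂] at hx'O
    obtain ⟨j, hjL, hx'Oj⟩ := hx'O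
    obtain ⟨j₀, hj₀L', hj₀⟩ := hjL
    have hpair := hUprop (x' * tw j) (tw j) (by rw [mul_inv_cancel_right]; exact hx'U)
    have hd1 : |φ (f (x' * tw j)) - φ (f (tw j))| < ε'/64 := by
      have hd : dist (φ (f (x' * tw j))) (φ (f (tw j))) < ε'/64 := hpair
      rwa [Real.dist_eq] at hd
    have hd2 : |φ (f (x' * tw j)) - φ (f ((j:G) * tw j))| < ε'/32 := by
      have h3 := hx'Oj.2
      calc |φ (f (x' * tw j)) - φ (f ((j:G) * tw j))|
          ≤ ρ (f (x' * tw j)) (f ((j:G) * tw j)) := hφlip _ _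
        _ < ε'/32 := h3
    have hgap := hφgap j₀ hj₀L'
    rw [hj₀] at hgap
    have habs : |φ (f ((j:G) * tw j)) - φ (f (tw j))| < ε'/16 := by
      calc |φ (f ((j:G) * tw j)) - φ (f (tw j))|
          ≤ |φ (f ((j:G) * tw j)) - φ (f (x' * tw j))| +
            |φ (f (x' * tw j)) - φ (f (tw j))| := abs_sub_le _ _ _
        _ < ε'/32 + ε'/64 := by
            rw [abs_sub_comm]
            exact add_lt_add hd2 hd1
        _ < ε'/16 := by linarith
    linarith
  -- the chain and extension
  have hstep2 : ∀ s : Set G, s ∈ nhds (1:G) → ∀ ε'' : ℝ, 0 < ε'' →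
      ∃ w, w ∈ nhds (1:G) ∧ (∀ g ∈ w, g⁻¹ ∈ w) ∧
        (∀ a b c, a ∈ w → b ∈ w → c ∈ w → a * b * c ∈ s) ∧
        (∀ g h', g ∈ closure A → h' ∈ closure A → g * h'⁻¹ ∈ w → |F g - F h'| ≤ ε'') := by
    intro s hs ε'' hε''
    obtain ⟨w₁, hw₁, hw₁sub, hw₁inv, hw₁mul⟩ := group_step hs
    obtain ⟨D, hD, hDprop⟩ := key ε'' hε''
    have hinvD : {g : G | g⁻¹ ∈ D} ∈ nhds (1:G) :=
      continuous_inv.continuousAt (by simp only [inv_one]; exact hD)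
    refine ⟨w₁ ∩ (D ∩ {g | g⁻¹ ∈ D}),
      Filter.inter_mem hw₁ (Filter.inter_mem hD hinvD), ?_, ?_, ?_⟩
    · rintro g ⟨hg1, hg2, hg3⟩
      exact ⟨hw₁inv g hg1, hg3, by simpa using hg2⟩
    · intro a b c ha hb hc; exact hw₁mul a b c ha.1 hb.1 hc.1
    · intro g h' hg hh' hw
      have hFg : F (g * h'⁻¹) ≤ ε'' :=
        hDprop _ hw.2.1 (Set.mul_mem_mul hg (Set.inv_mem_inv.2 hh'))
      calc |F g - F h'| ≤ F (g * h'⁻¹) := hFabs g h'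
        _ ≤ ε'' := hFg
  choose! w hw1 hw2 hw3 hw4 using hstep2
  have hUchain : ∃ Useq : ℕ → Set G, Useq 0 = Set.univ ∧ (∀ n, Useq n ∈ nhds (1:G)) ∧
      (∀ n g, g ∈ Useq n → g⁻¹ ∈ Useq n) ∧
      (∀ n a b c, a ∈ Useq (n+1) → b ∈ Useq (n+1) → c ∈ Useq (n+1) → a * b * c ∈ Useq n) ∧
      (∀ n g h', g ∈ closure A → h' ∈ closure A → g * h'⁻¹ ∈ Useq (n+1) →
        |F g - F h'| ≤ (2:ℝ)⁻¹ ^ (n+1)) := by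
    set Useq : ℕ → {s : Set G // s ∈ nhds (1:G)} := fun n =>
      Nat.rec ⟨Set.univ, Filter.univ_mem⟩
        (fun k p => ⟨w p.1 ((2:ℝ)⁻¹ ^ (k+1)),
          hw1 p.1 p.2 ((2:ℝ)⁻¹ ^ (k+1)) (by positivity)⟩) n
      with hUseq
    refine ⟨fun n => (Useq n).1, rfl, fun n => (Useq n).2, ?_, ?_, ?_⟩
    · intro n g hg
      cases n with
      | zero => trivial
      | succ k => exact hw2 (Useq k).1 (Useq k).2 _ (by positivity) g hg
    · intro n a b c ha hb hc
      exact hw3 (Useq n).1 (Useq n).2 _ (by positivity) a b c ha hb hc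
    · intro n g h' hg hh' hm
      exact hw4 (Useq n).1 (Useq n).2 _ (by positivity) g h' hg hh' hm
  obtain ⟨Useq, hU0, hUnhds, hUinv, hUmul, hUosc⟩ := hUchain
  have hosc : ∀ (n : ℕ) (g h' : G), g ∈ closure A → h' ∈ closure A →
      g * h'⁻¹ ∈ Useq n → |F g - F h'| ≤ (2:ℝ)⁻¹ ^ n := by
    intro n g h' hg hh' hm
    cases n with
    | zero =>
      rw [pow_zero]
      exact abs_le.2 ⟨by linarith [hF0 g, hF1 h'], by linarith [hF1 g, hF0 h']⟩
    | succ k => exact hUosc k g h' hg hh' hm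
  obtain ⟨σ, hσ0, hσ1, hσself, hσsymm, hσtri, hσup, hσlo⟩ :=
    exists_sigma Useq hUnhds hU0 hUinv hUmul
  have habs1 : ∀ g h' : G, |F g - F h'| ≤ 1 := fun g h' =>
    abs_le.2 ⟨by linarith [hF0 g, hF1 h'], by linarith [hF1 g, hF0 h']⟩
  have hFlip : ∀ g ∈ closure A, ∀ h' ∈ closure A, |F g - F h'| ≤ 8 * σ g h' := by
    intro g hg h' hh'
    rcases le_or_gt (8⁻¹ : ℝ) (σ g h') with hbig | hsmall
    · calc |F g - F h'| ≤ 1 := habs1 g h'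
        _ ≤ 8 * σ g h' := by linarith
    · rcases eq_or_lt_of_le (hσ0 g h') with hzero | hpos
      · have hall : ∀ n, |F g - F h'| ≤ (2:ℝ)⁻¹ ^ n := by
          intro n
          apply hosc n g h' hg hh'
          apply hσlo n
          rw [← hzero]
          positivity
        have hle0 : |F g - F h'| ≤ 0 := by
          by_contra hpos'
          push_neg at hpos'
          obtain ⟨n, hn⟩ := exists_pow_lt_of_lt_one hpos' (by norm_num : (2:ℝ)⁻¹ < 1)
          exact absurd (hall n) (not_le.2 hn)
        calc |F g - F h'| ≤ 0 := hle0
          _ ≤ 8 * σ g h' := by rw [← hzero]; norm_num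
      · have hex : ∃ m : ℕ, (2:ℝ)⁻¹ ^ m ≤ σ g h' := by
          obtain ⟨m, hm⟩ := exists_pow_lt_of_lt_one hpos (by norm_num : (2:ℝ)⁻¹ < 1)
          exact ⟨m, le_of_lt hm⟩
        set N := Nat.find hex with hN
        have hNspec : (2:ℝ)⁻¹ ^ N ≤ σ g h' := Nat.find_spec hex
        have hN4 : 4 ≤ N := by
          by_contra hc
          push_neg at hc
          have h5 : (2:ℝ)⁻¹ ^ 3 ≤ (2:ℝ)⁻¹ ^ N :=
            pow_le_pow_of_le_one (by norm_num) (by norm_num) (by omega)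
          have h6 : (8:ℝ)⁻¹ ≤ σ g h' := by
            have : ((2:ℝ)⁻¹) ^ 3 = (8:ℝ)⁻¹ := by norm_num
            linarith [this ▸ h5.trans hNspec]
          linarith
        have hNmin : σ g h' < (2:ℝ)⁻¹ ^ (N-1) := by
          have := Nat.find_min hex (m := N - 1) (by omega)
          push_neg at this
          exact this
        have hmem : g * h'⁻¹ ∈ Useq (N-2) := by
          apply hσlo (N-2)
          have harg : N - 2 + 1 = N - 1 := by omega
          rw [harg]
          exact hNmin
        have hosc' := hosc (N-2) g h' hg hh' hmem
        have harith : (2:ℝ)⁻¹ ^ (N-2) = 4 * (2:ℝ)⁻¹ ^ N := by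
          have hNe : N = N - 2 + 2 := by omega
          calc (2:ℝ)⁻¹ ^ (N-2) = 4 * ((2:ℝ)⁻¹ ^ (N-2) * (2:ℝ)⁻¹ ^ 2) := by norm_num; ring
            _ = 4 * (2:ℝ)⁻¹ ^ (N - 2 + 2) := by rw [pow_add]
            _ = 4 * (2:ℝ)⁻¹ ^ N := by rw [← hNe]
        calc |F g - F h'| ≤ (2:ℝ)⁻¹ ^ (N-2) := hosc'
          _ = 4 * (2:ℝ)⁻¹ ^ N := harith
          _ ≤ 4 * σ g h' := by linarith
          _ ≤ 8 * σ g h' := by linarith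
  haveI hclne : Nonempty ↥(closure A) := ⟨⟨a₀, subset_closure ha₀⟩⟩
  have hbddext : ∀ x : G, BddBelow (Set.range fun s : ↥(closure A) => F s.1 + 8 * σ x s.1) := by
    intro x
    refine ⟨0, ?_⟩
    rintro _ ⟨s, rfl⟩
    have h1 := hF0 s.1
    have h2 := hσ0 x s.1
    dsimp only
    linarith
  set Fext : G → ℝ := fun x => ⨅ s : ↥(closure A), (F s.1 + 8 * σ x s.1) with hFextdef
  have hFextlip : ∀ x x' : G, Fext x - Fext x' ≤ 8 * σ x x' := by
    intro x x'
    have h' : Fext x - 8 * σ x x' ≤ Fext x' := by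
      refine le_ciInf fun s => ?_
      have hA : Fext x ≤ F s.1 + 8 * σ x s.1 := ciInf_le (hbddext x) s
      have hB := hσtri x x' s.1
      linarith
    linarith
  have hFextcont : Continuous Fext := by
    rw [continuous_iff_continuousAt]
    intro x₀
    rw [ContinuousAt, Metric.tendsto_nhds]
    intro ε₁ hε₁
    obtain ⟨n, hn⟩ := exists_pow_lt_of_lt_one (show (0:ℝ) < ε₁/8 by linarith)
      (by norm_num : (2:ℝ)⁻¹ < 1)
    have hnbhd : {x : G | x * x₀⁻¹ ∈ Useq n} ∈ nhds x₀ := by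
      rw [← nhds_translation_mul_inv x₀]
      exact Filter.preimage_mem_comap (hUnhds n)
    filter_upwards [hnbhd] with x hx
    have hσx : σ x x₀ ≤ (2:ℝ)⁻¹ ^ n := hσup n x x₀ hx
    have h1 := hFextlip x x₀
    have h2 := hFextlip x₀ x
    have hsymmσ : σ x₀ x = σ x x₀ := hσsymm x₀ x
    rw [Real.dist_eq, abs_sub_lt_iff]
    constructor <;> linarith
  have hFexteq : ∀ a ∈ closure A, Fext a = F a := by
    intro a ha
    apply le_antisymm
    · have h1 := ciInf_le (hbddext a) ⟨a, ha⟩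
      simpa [hσself] using h1
    · refine le_ciInf fun s => ?_
      have h1 := hFlip a ha s.1 s.2
      have h2 := le_abs_self (F a - F s.1)
      linarith
  exact hnoext ⟨Fext, hFextcont, hFexteq⟩
end

section
/- Let G be a topological group which is strongly functionally generated by the collection of all subsets A ⊆ G that are relatively o-radial in G. Then G is proximally fine with respect to its right uniformity. -/
open Pointwise

universe u v

/-- `X` is strongly functionally generated by the collection `M` of subsets of `X` if every
discontinuous real-valued function on `X` has discontinuous restriction to some `A ∈ M`
(as a map on the subspace `A`). -/
def StrongFunGen (X : Type*) [TopologicalSpace X] (M : Set (Set X)) : Prop :=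
  ∀ f : X → ℝ, ¬Continuous f → ∃ A ∈ M, ¬ContinuousOn f A


/-! ### Auxiliary machinery for the proof -/

open Filter Set Topology Uniformity
open scoped SetRel

section AuxiliaryProofMachinery

/-- type synonym used to install an auxiliary uniform structure -/
def MWrap (Y : Type v) : Type v := Y

theorem exists_pseudometric {Y : Type v} [UniformSpace Y] {V₀ : Set (Y × Y)}
    (hV₀ : V₀ ∈ uniformity Y) :
    ∃ ρ : Y → Y → ℝ, (∀ y, ρ y y = 0) ∧ (∀ y z, ρ y z = ρ z y) ∧
      (∀ y z w, ρ y w ≤ ρ y z + ρ z w) ∧ (∀ y z, 0 ≤ ρ y z) ∧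
      (∀ ε : ℝ, 0 < ε → {p : Y × Y | ρ p.1 p.2 < ε} ∈ uniformity Y) ∧
      ∃ ε₁ : ℝ, 0 < ε₁ ∧ ∀ y z, ρ y z < ε₁ → (y, z) ∈ V₀ := by
  classical
  have step : ∀ s : Set (Y × Y), s ∈ uniformity Y →
      ∃ t, (t ∈ uniformity Y ∧ SetRel.IsSymm t) ∧ t ○ t ⊆ s := by
    intro s hs
    rcases comp_symm_mem_uniformity_sets hs with ⟨t, h1, h2, h3⟩
    exact ⟨t, ⟨h1, h2⟩, h3⟩
  -- the chain
  let V : ℕ → {s : Set (Y × Y) // s ∈ uniformity Y ∧ SetRel.IsSymm s} := fun n =>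
    Nat.rec ⟨(step V₀ hV₀).choose, (step V₀ hV₀).choose_spec.1⟩
      (fun _ p => ⟨(step p.1 p.2.1).choose, (step p.1 p.2.1).choose_spec.1⟩) n
  have hVcomp : ∀ n : ℕ, (V (n + 1)).1 ○ (V (n + 1)).1 ⊆ (V n).1 := fun n =>
    (step (V n).1 (V n).2.1).choose_spec.2
  have hV0 : (V 0).1 ○ (V 0).1 ⊆ V₀ := (step V₀ hV₀).choose_spec.2
  have hVsub : ∀ n : ℕ, ∀ (s : Set (Y × Y)), (V n).1 ○ (V n).1 ⊆ s → (V n).1 ⊆ s := by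
    intro n s hsub p hp
    exact hsub ⟨p.1, refl_mem_uniformity (V n).2.1, hp⟩
  have hmono : ∀ n : ℕ, (V (n + 1)).1 ⊆ (V n).1 := fun n =>
    hVsub (n + 1) _ (hVcomp n)
  have hanti : Antitone fun n => (V n).1 := antitone_nat_of_succ_le hmono
  -- the filter
  set F : Filter (Y × Y) := ⨅ n : ℕ, 𝓟 (V n).1 with hF
  have hbF : F.HasBasis (fun _ : ℕ => True) (fun n => (V n).1) :=
    hasBasis_iInf_principal (hanti.directed_ge)
  have hFle : uniformity Y ≤ F := by
    intro s hs
    rcases hbF.mem_iff.1 hs with ⟨n, -, hn⟩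
    exact mem_of_superset (V n).2.1 hn
  have hmemF : ∀ n, (V n).1 ∈ F := fun n => mem_iInf_of_mem n (mem_principal_self _)
  -- the core
  let core : UniformSpace.Core (MWrap Y) :=
    { uniformity := F
      refl := by
        refine le_iInf fun n => ?_
        refine le_principal_iff.2 (mem_principal.2 ?_)
        exact SetRel.id_subset_iff.2 ⟨fun x => refl_mem_uniformity (V n).2.1⟩
      symm := by
        refine le_iInf fun n => ?_
        refine tendsto_iInf' n ?_
        refine tendsto_principal_principal.2 ?_
        intro p hp
        exact (V n).2.2.symm _ _ hp
      comp := by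
        refine le_iInf fun n => ?_
        refine le_principal_iff.2 ?_
        exact mem_of_superset (mem_lift' (hmemF (n + 1))) (hVcomp n) }
  letI Uw : UniformSpace (MWrap Y) := UniformSpace.ofCore core
  haveI : IsCountablyGenerated (uniformity (MWrap Y)) := by
    have : uniformity (MWrap Y) = F := rfl
    rw [this]
    exact hbF.isCountablyGenerated
  obtain ⟨I, hI⟩ := UniformSpace.metrizable_uniformity (MWrap Y)
  have hUeq : @uniformity (MWrap Y) I.toUniformSpace = F := by rw [hI]; rfl
  refine ⟨fun y z => @dist (MWrap Y) I.toDist y z, fun y => @dist_self (MWrap Y) I y,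
    fun y z => @dist_comm (MWrap Y) I y z, fun y z w => @dist_triangle (MWrap Y) I y z w,
    fun y z => @dist_nonneg (MWrap Y) I y z, ?_, ?_⟩
  · intro ε hε
    have h1 : {p : MWrap Y × MWrap Y | @dist (MWrap Y) I.toDist p.1 p.2 < ε} ∈
        @uniformity (MWrap Y) I.toUniformSpace := @Metric.dist_mem_uniformity (MWrap Y) I ε hε
    rw [hUeq] at h1
    exact hFle h1
  · have h0 : (V 0).1 ∈ @uniformity (MWrap Y) I.toUniformSpace := by
      rw [hUeq]; exact hmemF 0
    rcases (@Metric.mem_uniformity_dist (MWrap Y) I _).1 h0 with ⟨ε₁, hε₁, h⟩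
    refine ⟨ε₁, hε₁, fun y z hyz => ?_⟩
    exact hVsub 0 V₀ hV0 (h hyz)

section GroupHelpers

variable {G : Type u} [Group G] [TopologicalSpace G] [IsTopologicalGroup G]

theorem mem_closure_singleton_iff {a c : G} :
    a ∈ closure ({c} : Set G) ↔ a * c⁻¹ ∈ closure ({1} : Set G) := by
  have h1 : closure ({c} : Set G) = (Homeomorph.mulRight c) '' closure ({1} : Set G) := by
    rw [(Homeomorph.mulRight c).image_closure]
    simp
  rw [h1]
  constructor
  · rintro ⟨n, hn, hnc⟩
    simp only [Homeomorph.coe_mulRight] at hnc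
    rw [← hnc]
    simpa using hn
  · intro h
    exact ⟨a * c⁻¹, h, by simp⟩

theorem closure_one_inv_mem {n : G} (hn : n ∈ closure ({1} : Set G)) :
    n⁻¹ ∈ closure ({1} : Set G) := by
  have h1 : closure ({1} : Set G) = (Homeomorph.inv G) '' closure ({1} : Set G) := by
    rw [(Homeomorph.inv G).image_closure]
    simp
  rw [h1]
  exact ⟨n, hn, rfl⟩

theorem mem_closure_singleton_symm {a c : G} (h : a ∈ closure ({c} : Set G)) :
    c ∈ closure ({a} : Set G) := by
  rw [mem_closure_singleton_iff] at h ⊢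
  have := closure_one_inv_mem h
  simpa using this

/-- separating a point from another point that is not in its closure, by an open set whose
closure misses `b`. -/
theorem exists_open_closure_not_mem {b x : G} (h : b ∉ closure ({x} : Set G)) :
    ∃ V : Set G, IsOpen V ∧ x ∈ V ∧ b ∉ closure V := by
  have hx : x ∉ closure ({b} : Set G) := fun hc => h (mem_closure_singleton_symm hc)
  have hmem : (closure ({b} : Set G))ᶜ ∈ nhds x :=
    (isOpen_compl_iff.2 isClosed_closure).mem_nhds hx
  rcases (closed_nhds_basis x).mem_iff.1 hmem with ⟨s, ⟨hs, hscl⟩, hsub⟩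
  refine ⟨interior s, isOpen_interior, mem_interior_iff_mem_nhds.2 hs, fun hb => ?_⟩
  have : b ∈ s := hscl.closure_eq ▸ (closure_mono interior_subset hb)
  exact (hsub this) (subset_closure rfl)

end GroupHelpers

section CardHelpers

theorem exists_big_fiber {α β : Type u} (F : α → β) {κ : Cardinal.{u}} (hreg : κ.IsRegular)
    (hα : Cardinal.mk α = κ) (hβ : Cardinal.mk β < κ) : ∃ b, Cardinal.mk (F ⁻¹' {b}) = κ := by
  by_contra hcon
  push_neg at hcon
  have hlt : ∀ b, Cardinal.mk (F ⁻¹' {b}) < κ := fun b =>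
    lt_of_le_of_ne (hα ▸ Cardinal.mk_subtype_le _) (hcon b)
  have heq : Cardinal.mk α = Cardinal.sum fun b => Cardinal.mk (F ⁻¹' {b}) := by
    rw [← Cardinal.mk_sigma]
    exact Cardinal.mk_congr (Equiv.sigmaFiberEquiv F).symm
  have : Cardinal.mk α < κ := heq ▸ Cardinal.sum_lt_of_isRegular hreg hβ hlt
  exact this.ne hα

end CardHelpers

section ProxHelpers

variable {G : Type u} [Group G] [TopologicalSpace G] [IsTopologicalGroup G]
variable {Y : Type v} [UniformSpace Y] {f : G → Y}

theorem lip_uniformContinuous' {ρ : Y → Y → ℝ}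
    (hρU : ∀ ε : ℝ, 0 < ε → {p : Y × Y | ρ p.1 p.2 < ε} ∈ uniformity Y)
    {φ : Y → ℝ} (hLip : ∀ y z, |φ y - φ z| ≤ ρ y z) : UniformContinuous φ := by
  have : Tendsto (fun p : Y × Y => (φ p.1, φ p.2)) (uniformity Y) (uniformity ℝ) := by
    rw [Metric.uniformity_basis_dist.tendsto_right_iff]
    intro ε hε
    filter_upwards [hρU ε hε] with p hp
    calc dist (φ p.1) (φ p.2) = |φ p.1 - φ p.2| := Real.dist_eq _ _
      _ ≤ ρ p.1 p.2 := hLip _ _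
      _ < ε := hp
  exact this

theorem min_rho_lip' {ρ : Y → Y → ℝ}
    (hρs : ∀ y z, ρ y z = ρ z y) (hρt : ∀ y z w, ρ y w ≤ ρ y z + ρ z w)
    (hρn : ∀ y z, 0 ≤ ρ y z) (a : Y) (c : ℝ) :
    ∀ y z : Y, |min (ρ y a) c - min (ρ z a) c| ≤ ρ y z := by
  have key : ∀ y z : Y, min (ρ y a) c ≤ ρ y z + min (ρ z a) c := by
    intro y z
    rcases le_total (ρ z a) c with h | h
    · rw [min_eq_left h]
      exact le_trans (min_le_left _ _) (hρt y z a)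
    · rw [min_eq_right h]
      have := min_le_right (ρ y a) c
      linarith [hρn y z]
  intro y z
  rw [abs_sub_le_iff]
  refine ⟨by linarith [key y z], ?_⟩
  have := key z y
  rw [hρs z y] at this
  linarith

/-- from proximal continuity: `f` is continuous "with respect to ρ". -/
theorem rho_nhds (hprox : RightProxCont ‹TopologicalSpace G› f)
    {ρ : Y → Y → ℝ} (hρ0 : ∀ y, ρ y y = 0) (hρs : ∀ y z, ρ y z = ρ z y)
    (hρt : ∀ y z w, ρ y w ≤ ρ y z + ρ z w) (hρn : ∀ y z, 0 ≤ ρ y z)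
    (hρU : ∀ ε : ℝ, 0 < ε → {p : Y × Y | ρ p.1 p.2 < ε} ∈ uniformity Y)
    (x₀ : G) {ε : ℝ} (hε : 0 < ε) : {x : G | ρ (f x) (f x₀) < ε} ∈ nhds x₀ := by
  set φ : Y → ℝ := fun y => min (ρ y (f x₀)) 1 with hφdef
  have hLip : ∀ y z, |φ y - φ z| ≤ ρ y z := min_rho_lip' hρs hρt hρn (f x₀) 1
  have hUC : UniformContinuous φ := lip_uniformContinuous' hρU hLip
  have hbd : ∃ C, ∀ y, |φ y| ≤ C := by
    refine ⟨1, fun y => ?_⟩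
    rw [abs_of_nonneg (le_min (hρn _ _) zero_le_one)]
    exact min_le_right _ _
  have hV : {p : ℝ × ℝ | dist p.1 p.2 < min ε 1} ∈ uniformity ℝ :=
    Metric.dist_mem_uniformity (lt_min hε one_pos)
  obtain ⟨U, hU, hUimp⟩ := hprox φ hUC hbd _ hV
  have hpre : (fun x : G => x * x₀⁻¹) ⁻¹' U ∈ nhds x₀ := by
    refine (continuous_mul_right x₀⁻¹).continuousAt.preimage_mem_nhds ?_
    simpa using hU
  refine mem_of_superset hpre ?_
  intro x hx
  have h2 := hUimp x x₀ hx
  have hφx₀ : φ (f x₀) = 0 := by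
    rw [hφdef]
    simp [hρ0]
  have h3 : min (ρ (f x) (f x₀)) 1 < min ε 1 := by
    have : dist (φ (f x)) (φ (f x₀)) < min ε 1 := h2
    rw [hφx₀, Real.dist_eq, sub_zero] at this
    calc min (ρ (f x) (f x₀)) 1 ≤ |φ (f x)| := le_abs_self _
      _ < min ε 1 := this
  rcases lt_or_ge (ρ (f x) (f x₀)) 1 with h | h
  · have : min (ρ (f x) (f x₀)) 1 = ρ (f x) (f x₀) := min_eq_left h.le
    rw [this] at h3
    exact lt_of_lt_of_le h3 (min_le_left _ _)
  · exfalso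
    rw [min_eq_right h] at h3
    have := min_le_right ε 1
    linarith

/-- openness of sublevel/superlevel sets of ρ-Lipschitz functionals composed with `f`. -/
theorem rho_isOpen_lt (hprox : RightProxCont ‹TopologicalSpace G› f)
    {ρ : Y → Y → ℝ} (hρ0 : ∀ y, ρ y y = 0) (hρs : ∀ y z, ρ y z = ρ z y)
    (hρt : ∀ y z w, ρ y w ≤ ρ y z + ρ z w) (hρn : ∀ y z, 0 ≤ ρ y z)
    (hρU : ∀ ε : ℝ, 0 < ε → {p : Y × Y | ρ p.1 p.2 < ε} ∈ uniformity Y)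
    {ψ : Y → ℝ} (hψ : ∀ y z, |ψ y - ψ z| ≤ ρ y z) (c : ℝ) :
    IsOpen {x : G | c < ψ (f x)} := by
  rw [isOpen_iff_mem_nhds]
  intro u hu
  have hu' : c < ψ (f u) := hu
  have hη : (0:ℝ) < ψ (f u) - c := sub_pos.2 hu'
  filter_upwards [rho_nhds hprox hρ0 hρs hρt hρn hρU u hη] with x hx
  have h1 : |ψ (f x) - ψ (f u)| ≤ ρ (f x) (f u) := hψ _ _
  have h2 : ψ (f u) - ψ (f x) ≤ ρ (f x) (f u) := by
    rw [abs_sub_le_iff] at h1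
    exact h1.2
  show c < ψ (f x)
  linarith [hx]

theorem rho_isOpen_gt (hprox : RightProxCont ‹TopologicalSpace G› f)
    {ρ : Y → Y → ℝ} (hρ0 : ∀ y, ρ y y = 0) (hρs : ∀ y z, ρ y z = ρ z y)
    (hρt : ∀ y z w, ρ y w ≤ ρ y z + ρ z w) (hρn : ∀ y z, 0 ≤ ρ y z)
    (hρU : ∀ ε : ℝ, 0 < ε → {p : Y × Y | ρ p.1 p.2 < ε} ∈ uniformity Y)
    {ψ : Y → ℝ} (hψ : ∀ y z, |ψ y - ψ z| ≤ ρ y z) (c : ℝ) :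
    IsOpen {x : G | ψ (f x) < c} := by
  rw [isOpen_iff_mem_nhds]
  intro u hu
  have hu' : ψ (f u) < c := hu
  have hη : (0:ℝ) < c - ψ (f u) := sub_pos.2 hu'
  filter_upwards [rho_nhds hprox hρ0 hρs hρt hρn hρU u hη] with x hx
  have h1 : |ψ (f x) - ψ (f u)| ≤ ρ (f x) (f u) := hψ _ _
  have h2 : ψ (f x) - ψ (f u) ≤ ρ (f x) (f u) := by
    rw [abs_sub_le_iff] at h1
    exact h1.1
  show ψ (f x) < c
  linarith [hx]

end ProxHelpers

theorem main_lemma {G : Type u} [Group G] [TopologicalSpace G] [IsTopologicalGroup G]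
    (hgen : StrongFunGen G {A : Set G | RelORadial A})
    {Y : Type v} [UniformSpace Y] (f : G → Y)
    (hprox : RightProxCont ‹TopologicalSpace G› f) :
    RightUC ‹TopologicalSpace G› f := by
  classical
  intro V₀ hV₀
  by_contra hbad
  push_neg at hbad
  obtain ⟨ρ, hρ0, hρs, hρt, hρn, hρU, ε₁, hε₁, hε₁V⟩ := exists_pseudometric hV₀
  -- bad pairs have ρ-distance at least ε₁
  have hbad' : ∀ U ∈ nhds (1 : G), ∃ g h : G, g * h⁻¹ ∈ U ∧ ε₁ ≤ ρ (f g) (f h) := by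
    intro U hU
    obtain ⟨g, h, h1, h2⟩ := hbad U hU
    exact ⟨g, h, h1, le_of_not_gt fun hc => h2 (hε₁V _ _ hc)⟩
  -- the jump function
  set term : G → G → ℝ := fun t h => min (ρ (f (t * h)) (f h)) 1 with hterm_def
  have hterm_nonneg : ∀ t h, 0 ≤ term t h := fun t h => le_min (hρn _ _) zero_le_one
  have hterm_le_one : ∀ t h, term t h ≤ 1 := fun t h => min_le_right _ _
  have hbddA : ∀ t, BddAbove (range (term t)) := fun t =>
    ⟨1, by rintro x ⟨h, rfl⟩; exact hterm_le_one t h⟩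
  have hrangene : ∀ t : G, (range (term t)).Nonempty := fun t => ⟨term t 1, mem_range_self 1⟩
  set F : G → ℝ := fun t => sSup (range (term t)) with hF_def
  have hF_ge : ∀ t h, term t h ≤ F t := fun t h => le_csSup (hbddA t) (mem_range_self h)
  have hF_le : ∀ (t : G) (c : ℝ), (∀ h, term t h ≤ c) → F t ≤ c := fun t c hc =>
    csSup_le (hrangene t) (by rintro x ⟨h, rfl⟩; exact hc h)
  have hF_gt : ∀ (t : G) (c : ℝ), c < F t → ∃ h, c < term t h := by
    intro t c hc
    obtain ⟨x, ⟨h, rfl⟩, hlt⟩ := exists_lt_of_lt_csSup (hrangene t) hc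
    exact ⟨h, hlt⟩
  have hF_nonneg : ∀ t, 0 ≤ F t := fun t => le_trans (hterm_nonneg t 1) (hF_ge t 1)
  have hF_le_one : ∀ t, F t ≤ 1 := fun t => hF_le t 1 (hterm_le_one t)
  have hF1 : F 1 = 0 := by
    refine le_antisymm (hF_le 1 0 fun h => ?_) (hF_nonneg 1)
    have : term 1 h = 0 := by
      simp only [hterm_def, one_mul, hρ0]
      exact min_eq_left zero_le_one
    rw [this]
  -- superlevel sets of F are open
  have hFopen : ∀ c : ℝ, IsOpen {t : G | c < F t} := by
    intro c
    have heq : {t : G | c < F t} = ⋃ h : G, {t : G | c < term t h} := by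
      ext t
      simp only [mem_setOf_eq, mem_iUnion]
      exact ⟨fun hc2 => hF_gt t c hc2, fun ⟨h, hh⟩ => lt_of_lt_of_le hh (hF_ge t h)⟩
    rw [heq]
    refine isOpen_iUnion fun h => ?_
    have hopen : IsOpen {x : G | c < min (ρ (f x) (f h)) 1} :=
      rho_isOpen_lt hprox hρ0 hρs hρt hρn hρU (min_rho_lip' hρs hρt hρn (f h) 1) c
    exact hopen.preimage (continuous_mul_right h)
  -- F is discontinuous
  have hFdisc : ¬Continuous F := by
    intro hFcont
    have hεspos : (0:ℝ) < min ε₁ 1 := lt_min hε₁ one_pos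
    have hmem : {t : G | F t < min ε₁ 1} ∈ nhds (1 : G) := by
      have h2 := hFcont.continuousAt.preimage_mem_nhds
        (Iio_mem_nhds (show F 1 < min ε₁ 1 by rw [hF1]; exact hεspos))
      exact h2
    obtain ⟨g, h, hgh, hρgh⟩ := hbad' _ hmem
    have h1 : F (g * h⁻¹) < min ε₁ 1 := hgh
    have h2 : min ε₁ 1 ≤ term (g * h⁻¹) h := by
      have he : g * h⁻¹ * h = g := inv_mul_cancel_right g h
      simp only [hterm_def, he]
      exact min_le_min hρgh le_rfl
    linarith [hF_ge (g * h⁻¹) h]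
  -- apply strong functional generation
  obtain ⟨A, hAmem, hAdisc⟩ := hgen F hFdisc
  have hA : RelORadial A := hAmem
  obtain ⟨b, hbA, hbd⟩ : ∃ b ∈ A, ¬ContinuousWithinAt F A b := by
    by_contra hc
    push_neg at hc
    exact hAdisc fun x hx => hc x hx
  set r₀ : ℝ := F b with hr₀_def
  -- find the jump δ'
  obtain ⟨δ', hδ'pos, hδ'cl⟩ :
      ∃ δ : ℝ, 0 < δ ∧ b ∈ closure {x | x ∈ A ∧ r₀ + δ ≤ F x} := by
    by_contra hc
    push_neg at hc
    apply hbd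
    rw [ContinuousWithinAt]
    refine tendsto_order.2 ⟨fun c hc2 => ?_, fun c hc2 => ?_⟩
    · filter_upwards [mem_nhdsWithin_of_mem_nhds ((hFopen c).mem_nhds hc2)] with x hx using hx
    · have hδpos : 0 < c - r₀ := sub_pos.2 hc2
      have hnotcl := hc (c - r₀) hδpos
      rw [mem_closure_iff_nhds] at hnotcl
      push_neg at hnotcl
      obtain ⟨W, hW, hWdisj⟩ := hnotcl
      have hWd : W ∩ {x | x ∈ A ∧ r₀ + (c - r₀) ≤ F x} = ∅ := hWdisj
      filter_upwards [nhdsWithin_le_nhds hW, self_mem_nhdsWithin] with x hxW hxA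
      by_contra hge
      push_neg at hge
      have : x ∈ W ∩ {x | x ∈ A ∧ r₀ + (c - r₀) ≤ F x} := ⟨hxW, hxA, by linarith⟩
      rw [hWd] at this
      exact this
  -- constants
  set δ'' : ℝ := δ' / 2 with hδ''_def
  set r : ℝ := δ'' / 16 with hr_def
  set g₀ : ℝ := δ'' - 2 * r with hg₀_def
  have hδ''pos : 0 < δ'' := by positivity
  have hrpos : 0 < r := by positivity
  have hg₀pos : 0 < g₀ := by rw [hg₀_def, hr_def]; linarith
  -- basic bounds
  have hTne : {x | x ∈ A ∧ r₀ + δ' ≤ F x}.Nonempty := by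
    rcases eq_empty_or_nonempty {x | x ∈ A ∧ r₀ + δ' ≤ F x} with he | hne
    · rw [he] at hδ'cl
      simp at hδ'cl
    · exact hne
  have hr₀δ'le1 : r₀ + δ' ≤ 1 := by
    obtain ⟨x, -, hx⟩ := hTne
    exact le_trans hx (hF_le_one x)
  have hr₀nonneg : 0 ≤ r₀ := hF_nonneg b
  have hr₀lt1 : r₀ < 1 := by linarith
  have hδ'le1 : δ' ≤ 1 := by linarith
  -- b-translates have small jumps
  have hb_term : ∀ h : G, ρ (f (b * h)) (f h) ≤ r₀ := by
    intro h
    have h1 : term b h ≤ r₀ := hF_ge b h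
    rcases le_total 1 (ρ (f (b * h)) (f h)) with hge | hle
    · exfalso
      have : term b h = 1 := by
        simp only [hterm_def]
        exact min_eq_right hge
      rw [this] at h1
      linarith
    · have : term b h = ρ (f (b * h)) (f h) := by
        simp only [hterm_def]
        exact min_eq_left hle
      rw [this] at h1
      exact h1
  -- ρ is Lipschitz in its first argument
  have hρlip : ∀ a y z : Y, |ρ y a - ρ z a| ≤ ρ y z := by
    intro a y z
    rw [abs_sub_le_iff]
    constructor
    · linarith [hρt y z a]
    · have := hρt z y a
      rw [hρs z y] at this
      linarith
  -- the index type and the open family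
  set ι : Type u := G × G × {V : Set G // IsOpen V ∧ b ∉ closure V} with hι_def
  set O : ι → Set G := fun i =>
    {t | t ∈ i.2.2.1 ∧ ∃ h : G, r₀ + δ'' < term t h ∧
      ρ (f (t * h)) (f i.1) < r ∧ ρ (f (b * h)) (f i.2.1) < r} with hO_def
  have hOopen : ∀ i, IsOpen (O i) := by
    intro i
    have heq : O i = i.2.2.1 ∩ ⋃ h : G, ⋃ (_ : ρ (f (b * h)) (f i.2.1) < r),
        ({t : G | r₀ + δ'' < term t h} ∩ {t : G | ρ (f (t * h)) (f i.1) < r}) := by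
      ext t
      simp only [hO_def, mem_setOf_eq, mem_inter_iff, mem_iUnion, mem_setOf_eq]
      tauto
    rw [heq]
    refine IsOpen.inter i.2.2.2.1 (isOpen_iUnion fun h => isOpen_iUnion fun _ => ?_)
    refine IsOpen.inter ?_ ?_
    · have hopen : IsOpen {x : G | r₀ + δ'' < min (ρ (f x) (f h)) 1} :=
        rho_isOpen_lt hprox hρ0 hρs hρt hρn hρU (min_rho_lip' hρs hρt hρn (f h) 1) _
      exact hopen.preimage (continuous_mul_right h)
    · have hopen : IsOpen {x : G | ρ (f x) (f i.1) < r} :=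
        rho_isOpen_gt hprox hρ0 hρs hρt hρn hρU (hρlip (f i.1)) r
      exact hopen.preimage (continuous_mul_right h)
  have hOnotcl : ∀ i, b ∉ closure (O i) := by
    intro i hcl
    exact i.2.2.2.2 (closure_mono (fun t ht => ht.1) hcl)
  -- indistinguishable points have equal F
  have hFeq : ∀ x : G, b ∈ closure ({x} : Set G) → F x = F b := by
    intro x hbx
    have hzero : ∀ h' : G, ρ (f (x * h')) (f (b * h')) = 0 := by
      intro h'
      have hbh' : b * h' ∈ closure ({x * h'} : Set G) := by
        rw [mem_closure_singleton_iff] at hbx ⊢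
        have : b * h' * (x * h')⁻¹ = b * x⁻¹ := by
          rw [mul_inv_rev]
          group
        rw [this]
        exact hbx
      have hlt : ∀ ε : ℝ, 0 < ε → ρ (f (x * h')) (f (b * h')) < ε := by
        intro ε hε
        have hnb := rho_nhds hprox hρ0 hρs hρt hρn hρU (b * h') hε
        obtain ⟨u, hu1, hu2⟩ := (mem_closure_iff_nhds.1 hbh') _ hnb
        rw [mem_singleton_iff] at hu2
        rw [hu2] at hu1
        exact hu1
      by_contra hne
      have hpos : 0 < ρ (f (x * h')) (f (b * h')) := lt_of_le_of_ne (hρn _ _) (Ne.symm hne)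
      exact absurd (hlt _ hpos) (lt_irrefl _)
    have hterm_eq : ∀ h' : G, term x h' = term b h' := by
      intro h'
      have h2 : ρ (f (x * h')) (f h') = ρ (f (b * h')) (f h') := by
        have ha := hρlip (f h') (f (x * h')) (f (b * h'))
        rw [hzero h'] at ha
        have := abs_nonneg (ρ (f (x * h')) (f h') - ρ (f (b * h')) (f h'))
        have h3 : |ρ (f (x * h')) (f h') - ρ (f (b * h')) (f h')| = 0 := le_antisymm ha this
        linarith [abs_eq_zero.1 h3, sub_eq_zero.1 (abs_eq_zero.1 h3)]
      simp only [hterm_def, h2]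
    have : F x = F b := by
      simp only [hF_def]
      congr 1
      ext y
      constructor
      · rintro ⟨h', rfl⟩; exact ⟨h', (hterm_eq h').symm⟩
      · rintro ⟨h', rfl⟩; exact ⟨h', hterm_eq h'⟩
    exact this
  -- the union accumulates at b
  have hOcup : b ∈ closure (⋃ i, O i ∩ A) := by
    rw [mem_closure_iff_nhds]
    intro W hW
    obtain ⟨x, hxW, hxA, hxF⟩ := (mem_closure_iff_nhds.1 hδ'cl) W hW
    have hgt : r₀ + δ'' < F x := by
      rw [hδ''_def]
      linarith
    obtain ⟨h, hh⟩ := hF_gt x _ hgt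
    have hbx : b ∉ closure ({x} : Set G) := by
      intro hbcl
      have := hFeq x hbcl
      rw [← hr₀_def] at this
      linarith [hxF, this]
    obtain ⟨V, hVopen, hxV, hbV⟩ := exists_open_closure_not_mem hbx
    refine ⟨x, hxW, ?_⟩
    rw [mem_iUnion]
    refine ⟨(x * h, b * h, ⟨V, hVopen, hbV⟩), ⟨?_, hxA⟩⟩
    refine ⟨hxV, h, hh, ?_, ?_⟩
    · rw [hρ0]; exact hrpos
    · rw [hρ0]; exact hrpos
  -- apply relative o-radiality
  obtain ⟨J, hJreg, hJ⟩ := hA O b hbA hOopen hOcup hOnotcl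
  set κ : Cardinal.{u} := Cardinal.mk ↑J with hκ_def
  -- all but < κ many pieces meet every neighborhood of b
  have hsmall : ∀ W ∈ nhds b, Cardinal.mk ↑{i | i ∈ J ∧ O i ∩ W = ∅} < κ := by
    intro W hW
    have hBsub : {i | i ∈ J ∧ O i ∩ W = ∅} ⊆ J := fun i hi => hi.1
    refine lt_of_le_of_ne (Cardinal.mk_le_mk_of_subset hBsub) fun heq => ?_
    have hcl := hJ _ hBsub heq
    rw [mem_closure_iff_nhds] at hcl
    obtain ⟨x, hxW, hx⟩ := hcl W hW
    rw [mem_iUnion₂] at hx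
    obtain ⟨i, hiB, hxO⟩ := hx
    have : x ∈ O i ∩ W := ⟨hxO, hxW⟩
    rw [hiB.2] at this
    exact this
  -- the final contradiction, given a suitable separating functional on a large subfamily
  have final : ∀ S : Set ι, S ⊆ J → Cardinal.mk ↑S = κ → ∀ (φ : Y → ℝ) (s₀ : ℝ), 0 < s₀ →
      UniformContinuous φ → (∃ C, ∀ y, |φ y| ≤ C) →
      (∀ i ∈ S, ∀ h : G, ∀ t ∈ O i, r₀ + δ'' < term t h →
        ρ (f (t * h)) (f i.1) < r → ρ (f (b * h)) (f i.2.1) < r →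
        s₀ ≤ |φ (f (t * h)) - φ (f (b * h))|) → False := by
    intro S hSJ hSκ φ s₀ hs₀ hφUC hφbd hsep
    obtain ⟨U, hU, hUimp⟩ := hprox φ hφUC hφbd _ (Metric.dist_mem_uniformity hs₀)
    have hW : (fun x : G => x * b⁻¹) ⁻¹' U ∈ nhds b := by
      refine (continuous_mul_right b⁻¹).continuousAt.preimage_mem_nhds ?_
      simpa using hU
    have hB := hsmall _ hW
    have hnotsub : ¬ S ⊆ {i | i ∈ J ∧ O i ∩ ((fun x : G => x * b⁻¹) ⁻¹' U) = ∅} := by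
      intro hsub
      exact absurd (hSκ ▸ Cardinal.mk_le_mk_of_subset hsub) (not_le.2 hB)
    obtain ⟨i, hiS, hiB⟩ := not_subset.1 hnotsub
    have hne : (O i ∩ ((fun x : G => x * b⁻¹) ⁻¹' U)).Nonempty := by
      rw [nonempty_iff_ne_empty]
      exact fun he => hiB ⟨hSJ hiS, he⟩
    obtain ⟨t, htO, htW⟩ := hne
    obtain ⟨htV, h, hth, ha1, ha2⟩ := htO
    have hdist := hUimp (t * h) (b * h) (by
      have : t * h * (b * h)⁻¹ = t * b⁻¹ := by group
      rw [this]
      exact htW)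
    have hsep' := hsep i hiS h t ⟨htV, h, hth, ha1, ha2⟩ hth ha1 ha2
    have hd2 : |φ (f (t * h)) - φ (f (b * h))| < s₀ := by
      have hd3 : dist ((φ ∘ f) (t * h)) ((φ ∘ f) (b * h)) < s₀ := hdist
      rwa [Function.comp_apply, Function.comp_apply, Real.dist_eq] at hd3
    linarith
  -- pieces with a witness
  set J₀ : Set ι := {i | i ∈ J ∧ (O i).Nonempty} with hJ₀_def
  have hJ₀J : J₀ ⊆ J := fun i hi => hi.1
  have hJ₀κ : Cardinal.mk ↑J₀ = κ := by
    have hsub : J ⊆ J₀ ∪ {i | i ∈ J ∧ O i ∩ univ = ∅} := by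
      intro i hi
      rcases eq_empty_or_nonempty (O i) with he | hne
      · exact Or.inr ⟨hi, by rw [he]; simp⟩
      · exact Or.inl ⟨hi, hne⟩
    have hB := hsmall univ univ_mem
    refine le_antisymm (Cardinal.mk_le_mk_of_subset hJ₀J) (le_of_not_gt fun hlt => ?_)
    have h1 : κ ≤ Cardinal.mk ↑(J₀ ∪ {i | i ∈ J ∧ O i ∩ univ = ∅}) :=
      Cardinal.mk_le_mk_of_subset hsub
    have h2 := le_trans h1 (Cardinal.mk_union_le _ _)
    exact absurd h2 (not_le.2 (Cardinal.add_lt_of_lt hJreg.aleph0_le hlt hB))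
  -- anchors are separated
  have hgapfact : ∀ t h : G, r₀ + δ'' < term t h → δ'' ≤ ρ (f (t * h)) (f (b * h)) := by
    intro t h hth
    have h1 : r₀ + δ'' < ρ (f (t * h)) (f h) := lt_of_lt_of_le hth (min_le_left _ _)
    have h2 := hb_term h
    have h3 := hρt (f (t * h)) (f (b * h)) (f h)
    linarith
  have hanch : ∀ i : ι, (O i).Nonempty → g₀ ≤ ρ (f i.1) (f i.2.1) := by
    rintro i ⟨t, htV, h, hth, ha1, ha2⟩
    have h1 := hgapfact t h hth
    have h2 := hρt (f (t * h)) (f i.1) (f (b * h))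
    have h3 := hρt (f i.1) (f i.2.1) (f (b * h))
    have h4 : ρ (f i.2.1) (f (b * h)) = ρ (f (b * h)) (f i.2.1) := hρs _ _
    rw [hg₀_def]
    linarith
  -- maximal separated subfamily
  set GoodS : Set (Set ι) :=
    {S | S ⊆ J₀ ∧ ∀ i ∈ S, ∀ k ∈ S, i ≠ k → g₀ / 4 ≤ ρ (f i.1) (f k.2.1)} with hGoodS_def
  obtain ⟨M, hM⟩ := zorn_subset GoodS (by
    intro c hc hchain
    refine ⟨⋃₀ c, ⟨sUnion_subset fun s hs => (hc hs).1, ?_⟩, fun s hs => subset_sUnion_of_mem hs⟩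
    rintro i ⟨s, hs, his⟩ k ⟨s', hs', hks'⟩ hik
    rcases eq_or_ne s s' with rfl | hne
    · exact (hc hs).2 i his k hks' hik
    · rcases hchain hs hs' hne with hss | hss
      · exact (hc hs').2 i (hss his) k hks' hik
      · exact (hc hs).2 i his k (hss hks') hik)
  have hMmem : M ∈ GoodS := hM.prop
  have hMJ₀ : M ⊆ J₀ := hMmem.1
  have hMle : Cardinal.mk ↑M ≤ κ := hJ₀κ ▸ Cardinal.mk_le_mk_of_subset hMJ₀
  -- arithmetic facts
  have hδ''r : δ'' = 16 * r := by rw [hr_def]; ring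
  have hg₀r : g₀ = 14 * r := by rw [hg₀_def, hδ''r]; ring
  have hs₀pos : 0 < g₀ / 8 - r := by rw [hg₀r]; linarith
  have hg₀le1 : g₀ ≤ 1 := by
    have : g₀ ≤ δ'' := by rw [hg₀_def]; linarith
    have h2 : δ'' ≤ δ' := by rw [hδ''_def]; linarith
    linarith
  have hφUC' : ∀ c : Y, UniformContinuous fun y => min (ρ y c) 1 := fun c =>
    lip_uniformContinuous' hρU (min_rho_lip' hρs hρt hρn c 1)
  have hφbd' : ∀ c : Y, ∃ C, ∀ y, |min (ρ y c) 1| ≤ C := fun c =>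
    ⟨1, fun y => by
      rw [abs_of_nonneg (le_min (hρn _ _) zero_le_one)]
      exact min_le_right _ _⟩
  rcases hMle.lt_or_eq with hMlt | hMeq
  · -- the maximal good family is small : pigeonhole clustering
    have hdiffκ : Cardinal.mk ↑(J₀ \ M) = κ := by
      have hsub : J₀ ⊆ M ∪ (J₀ \ M) := fun i hi => (em (i ∈ M)).imp id fun h => ⟨hi, h⟩
      refine le_antisymm
        (hJ₀κ ▸ Cardinal.mk_le_mk_of_subset (diff_subset.trans (fun i hi => hi)))
        (le_of_not_gt fun hlt => ?_)
      have h1 : κ ≤ Cardinal.mk ↑(M ∪ (J₀ \ M)) := by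
        rw [← hJ₀κ]
        exact Cardinal.mk_le_mk_of_subset hsub
      exact absurd (le_trans h1 (Cardinal.mk_union_le _ _))
        (not_le.2 (Cardinal.add_lt_of_lt hJreg.aleph0_le hMlt hlt))
    have hviol : ∀ i : ↑(J₀ \ M), ∃ p : ↑M × Bool,
        (p.2 = true → ρ (f (i : ι).1) (f (p.1 : ι).2.1) < g₀ / 4) ∧
        (p.2 = false → ρ (f (p.1 : ι).1) (f (i : ι).2.1) < g₀ / 4) := by
      intro i
      have hiJ₀ : (i : ι) ∈ J₀ := i.2.1
      have hiM : (i : ι) ∉ M := i.2.2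
      have hnotgood : insert (i : ι) M ∉ GoodS := fun hins =>
        hiM (hM.2 hins (subset_insert _ _) (mem_insert _ _))
      have hsub : insert (i : ι) M ⊆ J₀ := insert_subset hiJ₀ hMJ₀
      have hpair : ¬ ∀ p ∈ insert (i : ι) M, ∀ q ∈ insert (i : ι) M, p ≠ q →
          g₀ / 4 ≤ ρ (f p.1) (f q.2.1) := fun hp => hnotgood ⟨hsub, hp⟩
      push_neg at hpair
      obtain ⟨p, hp, q, hq, hpq, hlt⟩ := hpair
      rcases hp with rfl | hpM
      · rcases hq with rfl | hqM
        · exact absurd rfl hpq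
        · exact ⟨(⟨q, hqM⟩, true), fun _ => hlt, fun hc => Bool.noConfusion hc⟩
      · rcases hq with rfl | hqM
        · exact ⟨(⟨p, hpM⟩, false), fun hc => Bool.noConfusion hc, fun _ => hlt⟩
        · exact absurd (hMmem.2 p hpM q hqM hpq) (not_le.2 hlt)
    choose v hv1 hv2 using hviol
    have hMB : Cardinal.mk (↑M × Bool) < κ := by
      have he : Cardinal.mk (↑M × Bool) = Cardinal.mk ↑M + Cardinal.mk ↑M := by
        rw [Cardinal.add_def]
        exact Cardinal.mk_congr ((Equiv.prodComm _ _).trans (Equiv.boolProdEquivSum _))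
      rw [he]
      exact Cardinal.add_lt_of_lt hJreg.aleph0_le hMlt hMlt
    obtain ⟨⟨γ, side⟩, hfib⟩ := exists_big_fiber v hJreg hdiffκ hMB
    set Sstar : Set ι := Subtype.val '' (v ⁻¹' {(γ, side)}) with hSstar_def
    have hSκ : Cardinal.mk ↑Sstar = κ := by
      rw [hSstar_def, Cardinal.mk_image_eq Subtype.val_injective]
      exact hfib
    have hSJ : Sstar ⊆ J := by
      rintro i ⟨j, _, rfl⟩
      exact hJ₀J j.2.1
    have hSinfo : ∀ i ∈ Sstar,
        (side = true → ρ (f i.1) (f (γ : ι).2.1) < g₀ / 4) ∧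
        (side = false → ρ (f (γ : ι).1) (f i.2.1) < g₀ / 4) := by
      rintro i ⟨j, hj, rfl⟩
      rw [mem_preimage, mem_singleton_iff] at hj
      constructor
      · intro hside
        have h1 := hv1 j
        rw [hj] at h1
        exact h1 hside
      · intro hside
        have h2 := hv2 j
        rw [hj] at h2
        exact h2 hside
    cases side
    · -- the z-anchors of S* cluster near y* = w γ
      refine final Sstar hSJ hSκ (fun y => min (ρ y (f (γ : ι).1)) 1) (g₀ / 8 - r) hs₀pos
        (hφUC' _) (hφbd' _) ?_
      intro i hiS h t htO hth ha1 ha2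
      have hvi : ρ (f (γ : ι).1) (f i.2.1) < g₀ / 4 := (hSinfo i hiS).2 rfl
      have hzi := hanch i ⟨t, htO⟩
      have h1 : min (ρ (f (b * h)) (f (γ : ι).1)) 1 ≤ r + g₀ / 4 := by
        refine le_trans (min_le_left _ _) ?_
        have htri := hρt (f (b * h)) (f i.2.1) (f (γ : ι).1)
        have hsy := hρs (f i.2.1) (f (γ : ι).1)
        have hsy2 := hρs (f (γ : ι).1) (f i.2.1)
        linarith
      have h2 : 3 * g₀ / 4 - r ≤ min (ρ (f (t * h)) (f (γ : ι).1)) 1 := by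
        refine le_min ?_ ?_
        · have htri1 := hρt (f i.1) (f (γ : ι).1) (f i.2.1)
          have htri2 := hρt (f i.1) (f (t * h)) (f (γ : ι).1)
          have hsy := hρs (f i.1) (f (t * h))
          linarith
        · rw [hg₀r] at *
          linarith
      have harith : g₀ / 8 - r ≤ (3 * g₀ / 4 - r) - (r + g₀ / 4) := by
        rw [hg₀r]; linarith
      have hd : g₀ / 8 - r ≤ min (ρ (f (t * h)) (f (γ : ι).1)) 1
          - min (ρ (f (b * h)) (f (γ : ι).1)) 1 := by linarith
      exact le_trans hd (le_abs_self _)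
    · -- the w-anchors of S* cluster near y* = z γ
      refine final Sstar hSJ hSκ (fun y => min (ρ y (f (γ : ι).2.1)) 1) (g₀ / 8 - r) hs₀pos
        (hφUC' _) (hφbd' _) ?_
      intro i hiS h t htO hth ha1 ha2
      have hvi : ρ (f i.1) (f (γ : ι).2.1) < g₀ / 4 := (hSinfo i hiS).1 rfl
      have hzi := hanch i ⟨t, htO⟩
      have h1 : min (ρ (f (t * h)) (f (γ : ι).2.1)) 1 ≤ r + g₀ / 4 := by
        refine le_trans (min_le_left _ _) ?_
        have htri := hρt (f (t * h)) (f i.1) (f (γ : ι).2.1)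
        have hsy := hρs (f (t * h)) (f i.1)
        linarith
      have h2 : 3 * g₀ / 4 - r ≤ min (ρ (f (b * h)) (f (γ : ι).2.1)) 1 := by
        refine le_min ?_ ?_
        · have htri1 := hρt (f i.1) (f (γ : ι).2.1) (f i.2.1)
          have htri2 := hρt (f (γ : ι).2.1) (f (b * h)) (f i.2.1)
          have hsy := hρs (f (b * h)) (f (γ : ι).2.1)
          linarith
        · rw [hg₀r] at *
          linarith
      have harith : g₀ / 8 - r ≤ (3 * g₀ / 4 - r) - (r + g₀ / 4) := by
        rw [hg₀r]; linarith
      have hd : g₀ / 8 - r ≤ min (ρ (f (b * h)) (f (γ : ι).2.1)) 1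
          - min (ρ (f (t * h)) (f (γ : ι).2.1)) 1 := by linarith
      rw [abs_sub_comm]
      exact le_trans hd (le_abs_self _)
  · -- the maximal good family is large : distance to its z-anchors
    haveI hMne : Nonempty ↑M := by
      rw [← Cardinal.mk_ne_zero_iff, hMeq]
      exact (lt_of_lt_of_le Cardinal.aleph0_pos hJreg.aleph0_le).ne'
    set φ : Y → ℝ := fun y => ⨅ j : ↑M, min (ρ y (f (j : ι).2.1)) (g₀ / 8) with hφ_def
    have hbddB : ∀ y : Y, BddBelow (range fun j : ↑M => min (ρ y (f (j : ι).2.1)) (g₀ / 8)) := by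
      intro y
      refine ⟨0, ?_⟩
      rintro x ⟨j, rfl⟩
      exact le_min (hρn _ _) (by positivity)
    have hφle : ∀ (y : Y) (j : ↑M), φ y ≤ min (ρ y (f (j : ι).2.1)) (g₀ / 8) := fun y j =>
      ciInf_le (hbddB y) j
    have hφge : ∀ (y : Y) (c : ℝ), (∀ j : ↑M, c ≤ min (ρ y (f (j : ι).2.1)) (g₀ / 8)) → c ≤ φ y :=
      fun y c hc => le_ciInf hc
    have hφLip : ∀ y y', |φ y - φ y'| ≤ ρ y y' := by
      have key : ∀ y y' : Y, φ y ≤ ρ y y' + φ y' := by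
        intro y y'
        have h1 : ∀ j : ↑M, φ y - ρ y y' ≤ min (ρ y' (f (j : ι).2.1)) (g₀ / 8) := by
          intro j
          have h2 := hφle y j
          have h3 := min_rho_lip' hρs hρt hρn (f (j : ι).2.1) (g₀ / 8) y y'
          rw [abs_sub_le_iff] at h3
          linarith [h3.1]
        linarith [hφge y' _ h1]
      intro y y'
      rw [abs_sub_le_iff]
      refine ⟨by linarith [key y y'], ?_⟩
      have := key y' y
      rw [hρs y' y] at this
      linarith
    have hφUC : UniformContinuous φ := lip_uniformContinuous' hρU hφLip
    have hφbd : ∃ C, ∀ y, |φ y| ≤ C := by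
      refine ⟨g₀ / 8, fun y => ?_⟩
      rw [abs_of_nonneg (hφge y 0 fun j => le_min (hρn _ _) (by positivity))]
      exact le_trans (hφle y (Classical.arbitrary ↑M)) (min_le_right _ _)
    refine final M (fun i hi => hJ₀J (hMJ₀ hi)) hMeq φ (g₀ / 8 - r) hs₀pos hφUC hφbd ?_
    intro i hiM h t htO hth ha1 ha2
    have hzi := hanch i ⟨t, htO⟩
    have hbh_le : φ (f (b * h)) ≤ r := by
      refine le_trans (hφle _ ⟨i, hiM⟩) (le_trans (min_le_left _ _) ha2.le)
    have hth_ge : g₀ / 8 ≤ φ (f (t * h)) := by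
      refine hφge _ _ fun k => ?_
      refine le_min ?_ le_rfl
      rcases eq_or_ne (k : ι) i with hk | hk
      · rw [hk]
        have htri := hρt (f i.1) (f (t * h)) (f i.2.1)
        have hsy := hρs (f i.1) (f (t * h))
        rw [hg₀r] at *
        linarith
      · have hcross := hMmem.2 i hiM (k : ι) k.2 (Ne.symm hk)
        have htri := hρt (f i.1) (f (t * h)) (f (k : ι).2.1)
        have hsy := hρs (f i.1) (f (t * h))
        rw [hg₀r] at *
        linarith
    have hd : g₀ / 8 - r ≤ φ (f (t * h)) - φ (f (b * h)) := by linarith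
    exact le_trans hd (le_abs_self _)

end AuxiliaryProofMachinery

/-- Theorem 2.4(2): a topological group strongly functionally generated by its relatively
o-radial subsets is proximally fine. -/
theorem stmt_4 {G : Type u} [Group G] [TopologicalSpace G] [IsTopologicalGroup G]
    (hgen : StrongFunGen G {A : Set G | RelORadial A}) :
    ProxFineGroup ‹TopologicalSpace G› := by
  intro Y _ f hprox
  exact main_lemma hgen f hprox
end

section
/- Let G be a topological group such that for every discontinuous bounded function α : G → ℝ there exists a set A ⊆ G satisfying at least one of: (1) the restriction of α to closure(A) has no continuous extension to G, and A·A⁻¹ is relatively o-radial in G; (2) the restriction of α to closure(A) is discontinuous at some point of A, and A is relatively o-radial in G. Let X be a set with a left action of G, (Y, 𝒱) a uniform space, and f : X → Y a right proximally continuous function. Then f is right uniformly continuous. -/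
open Pointwise

universe u v

universe w

/-- For a `G`-set `X`, `f : X → Y` is right uniformly continuous if for every entourage `V`
of `Y` there is a neighborhood `U` of the identity of `G` such that `(f (g • x), f (h • x)) ∈ V`
for all `x ∈ X` whenever `g * h⁻¹ ∈ U`. -/
def RightUCAct {G : Type*} [Group G] (t : TopologicalSpace G) {X : Type*} [MulAction G X]
    {Y : Type*} [UniformSpace Y] (f : X → Y) : Prop :=
  ∀ V ∈ uniformity Y, ∃ U ∈ @nhds G t 1,
    ∀ g h : G, g * h⁻¹ ∈ U → ∀ x : X, (f (g • x), f (h • x)) ∈ V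

/-- For a `G`-set `X`, `f : X → Y` is right proximally continuous if for every bounded
uniformly continuous `φ : Y → ℝ`, the map `φ ∘ f` is right uniformly continuous. -/
def RightProxContAct {G : Type*} [Group G] (t : TopologicalSpace G) {X : Type*} [MulAction G X]
    {Y : Type*} [UniformSpace Y] (f : X → Y) : Prop :=
  ∀ φ : Y → ℝ, UniformContinuous φ → (∃ C, ∀ y, |φ y| ≤ C) → RightUCAct t (φ ∘ f)

open Filter Set Uniformity
open scoped SetRel

structure IsPM {Y : Type*} (d : Y → Y → ℝ) : Prop where
  refl : ∀ y, d y y = 0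
  symm : ∀ y y', d y y' = d y' y
  tri : ∀ y₁ y₂ y₃, d y₁ y₃ ≤ d y₁ y₂ + d y₂ y₃
  nonneg : ∀ y y', 0 ≤ d y y'

lemma exists_pm {Y : Type*} (E : ℕ → Set (Y × Y)) (hrefl : ∀ n x, (x, x) ∈ E n)
    (hsymm : ∀ n, Prod.swap ⁻¹' E n = E n)
    (hcomp : ∀ n, E (n + 1) ○ E (n + 1) ⊆ E n) (hanti : ∀ n, E (n + 1) ⊆ E n) :
    ∃ d : Y → Y → ℝ, IsPM d ∧ (∀ ε > (0 : ℝ), ∃ n, ∀ y y', (y, y') ∈ E n → d y y' < ε) ∧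
      ∀ n, ∃ δ > (0 : ℝ), ∀ y y', d y y' < δ → (y, y') ∈ E n := by
  classical
  have hanti' : Antitone E := antitone_nat_of_succ_le hanti
  set F : Filter (Y × Y) := ⨅ n, 𝓟 (E n) with hF
  have hB : F.HasBasis (fun _ : ℕ => True) E := by
    have := Filter.hasBasis_iInf_principal (hanti'.directed_ge) (s := E)
    simpa using this
  have hmemF : ∀ n, E n ∈ F := fun n => hB.mem_of_mem trivial
  have hc1 : ∀ r ∈ F, ∀ x, (x, x) ∈ r := by
    intro r hr x
    rcases hB.mem_iff.1 hr with ⟨n, -, hn⟩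
    exact hn (hrefl n x)
  have hc2 : ∀ r ∈ F, Prod.swap ⁻¹' r ∈ F := by
    intro r hr
    rcases hB.mem_iff.1 hr with ⟨n, -, hn⟩
    refine mem_of_superset (hmemF n) ?_
    rw [← hsymm n]
    intro p hp
    exact hn hp
  have hc3 : ∀ r ∈ F, ∃ t ∈ F, t ○ t ⊆ r := by
    intro r hr
    rcases hB.mem_iff.1 hr with ⟨n, -, hn⟩
    exact ⟨E (n + 1), hmemF _, (hcomp n).trans hn⟩
  let u' : UniformSpace Y := UniformSpace.ofCore (UniformSpace.Core.mk' F hc1 hc2 hc3)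
  have hu' : @uniformity Y u' = F := rfl
  have hcg : (@uniformity Y u').IsCountablyGenerated := by
    rw [hu']
    exact hB.isCountablyGenerated
  obtain ⟨I, hI⟩ := @UniformSpace.metrizable_uniformity Y u' hcg
  set d : Y → Y → ℝ := @dist Y I.toDist with hd
  have hIu : @uniformity Y I.toUniformSpace = F := by rw [hI]; exact hu'
  have pm : IsPM d := by
    have h3 : ∀ y₁ y₂ y₃, d y₁ y₃ ≤ d y₁ y₂ + d y₂ y₃ := I.dist_triangle
    have h2 : ∀ y y', d y y' = d y' y := I.dist_comm
    have h1 : ∀ y, d y y = 0 := I.dist_self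
    refine ⟨h1, h2, h3, fun y y' => ?_⟩
    have := h3 y y' y
    rw [h1 y, h2 y' y] at this
    linarith
  have hbasis : ∀ s : Set (Y × Y), s ∈ F ↔ ∃ δ > (0:ℝ), ∀ y y', d y y' < δ → (y, y') ∈ s := by
    intro s
    rw [← hIu]
    constructor
    · intro hs
      rcases (@Metric.mem_uniformity_dist Y I s).1 hs with ⟨δ, hδ, h⟩
      exact ⟨δ, hδ, fun y y' hyy => h hyy⟩
    · rintro ⟨δ, hδ, h⟩
      exact (@Metric.mem_uniformity_dist Y I s).2 ⟨δ, hδ, fun {a b} hab => h a b hab⟩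
  refine ⟨d, pm, ?_, ?_⟩
  · intro ε hε
    have : {p : Y × Y | d p.1 p.2 < ε} ∈ F :=
      (hbasis _).2 ⟨ε, hε, fun y y' h => h⟩
    rcases hB.mem_iff.1 this with ⟨n, -, hn⟩
    exact ⟨n, fun y y' h => hn h⟩
  · intro n
    rcases (hbasis _).1 (hmemF n) with ⟨δ, hδ, h⟩
    exact ⟨δ, hδ, h⟩

lemma exists_pm_unif {Y : Type*} [UniformSpace Y] (V : Set (Y × Y)) (hV : V ∈ uniformity Y) :
    ∃ d : Y → Y → ℝ, IsPM d ∧ (∀ ε > (0 : ℝ), {p : Y × Y | d p.1 p.2 < ε} ∈ uniformity Y) ∧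
      ∃ δ > (0 : ℝ), ∀ y y', d y y' < δ → (y, y') ∈ V := by
  classical
  have key : ∀ s : Set (Y × Y), ∃ t, s ∈ uniformity Y →
      t ∈ uniformity Y ∧ SetRel.IsSymm t ∧ t ○ t ⊆ s := by
    intro s
    by_cases hs : s ∈ uniformity Y
    · obtain ⟨t, ht, hsym, hsub⟩ := comp_symm_mem_uniformity_sets hs
      exact ⟨t, fun _ => ⟨ht, hsym, hsub⟩⟩
    · exact ⟨univ, fun h => absurd h hs⟩
  choose T hT using key
  let W : ℕ → Set (Y × Y) := fun n => Nat.rec (T V) (fun _ ih => T ih) n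
  have hW0 : W 0 = T V := rfl
  have hWs : ∀ n, W (n + 1) = T (W n) := fun n => rfl
  have hWmem : ∀ n, W n ∈ uniformity Y ∧ SetRel.IsSymm (W n) := by
    intro n
    induction n with
    | zero => exact ⟨(hT V hV).1, (hT V hV).2.1⟩
    | succ k ih =>
      rw [hWs k]
      exact ⟨(hT _ ih.1).1, (hT _ ih.1).2.1⟩
  have hWcomp : ∀ n, W (n + 1) ○ W (n + 1) ⊆ W n := by
    intro n
    rw [hWs n]
    exact (hT _ (hWmem n).1).2.2
  have hanti : ∀ n, W (n + 1) ⊆ W n := by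
    intro n p hp
    exact hWcomp n ⟨p.1, refl_mem_uniformity (hWmem (n+1)).1, hp⟩
  obtain ⟨d, pm, hsmall, hbig⟩ := exists_pm W
    (fun n x => refl_mem_uniformity (hWmem n).1) (fun n => SetRel.inv_eq_self_iff.2 (hWmem n).2) hWcomp hanti
  refine ⟨d, pm, ?_, ?_⟩
  · intro ε hε
    obtain ⟨n, hn⟩ := hsmall ε hε
    exact mem_of_superset (hWmem n).1 (fun p hp => hn p.1 p.2 hp)
  · obtain ⟨δ, hδ, h⟩ := hbig 0
    refine ⟨δ, hδ, fun y y' hyy => ?_⟩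
    have h0 : (y, y') ∈ W 0 := h y y' hyy
    have : W 0 ○ W 0 ⊆ V := by
      rw [hW0]; exact (hT V hV).2.2
    exact this ⟨y, refl_mem_uniformity (hWmem 0).1, h0⟩

lemma exists_pm_group {G : Type*} [Group G] [TopologicalSpace G] [IsTopologicalGroup G]
    (V : ℕ → Set G) (hV : ∀ n, V n ∈ nhds (1 : G)) :
    ∃ ρ : G → G → ℝ, IsPM ρ ∧
      (∀ ε > (0 : ℝ), ∃ U ∈ nhds (1 : G), ∀ g h, g * h⁻¹ ∈ U → ρ g h < ε) ∧
      ∀ n, ∃ δ > (0 : ℝ), ∀ g h, ρ g h < δ → g * h⁻¹ ∈ V n := by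
  classical
  have key : ∀ s : Set G, ∃ t, s ∈ nhds (1 : G) →
      t ∈ nhds (1 : G) ∧ t⁻¹ = t ∧ ∀ v ∈ t, ∀ w ∈ t, v * w ∈ s := by
    intro s
    by_cases hs : s ∈ nhds (1 : G)
    · obtain ⟨t, ht, hmul⟩ := exists_nhds_one_split hs
      refine ⟨t ∩ t⁻¹, fun _ => ⟨Filter.inter_mem ht (inv_mem_nhds_one G ht), ?_, ?_⟩⟩
      · rw [Set.inter_inv, inv_inv, Set.inter_comm]
      · intro v hv w hw
        exact hmul v hv.1 w hw.1
    · exact ⟨univ, fun h => absurd h hs⟩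
  choose T hT using key
  let W : ℕ → Set G := fun n => Nat.rec (T (V 0)) (fun k ih => T (ih ∩ V (k + 1))) n
  have hWs : ∀ n, W (n + 1) = T (W n ∩ V (n + 1)) := fun n => rfl
  have hWmem : ∀ n, W n ∈ nhds (1 : G) ∧ (W n)⁻¹ = W n := by
    intro n
    induction n with
    | zero => exact ⟨(hT _ (hV 0)).1, (hT _ (hV 0)).2.1⟩
    | succ k ih =>
      rw [hWs k]
      have hm : W k ∩ V (k + 1) ∈ nhds (1 : G) := Filter.inter_mem ih.1 (hV (k + 1))
      exact ⟨(hT _ hm).1, (hT _ hm).2.1⟩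
  have hWmul : ∀ n, ∀ v ∈ W (n + 1), ∀ w ∈ W (n + 1), v * w ∈ W n ∩ V (n + 1) := by
    intro n
    rw [hWs n]
    exact (hT _ (Filter.inter_mem (hWmem n).1 (hV (n + 1)))).2.2
  have hWV : ∀ n, W n ⊆ V n := by
    intro n
    rcases n with - | k
    · intro v hv
      have h1 : (1 : G) ∈ W 0 := mem_of_mem_nhds (hWmem 0).1
      have := (hT _ (hV 0)).2.2 v hv 1 h1
      simpa using this
    · intro v hv
      have h1 : (1 : G) ∈ W (k + 1) := mem_of_mem_nhds (hWmem (k + 1)).1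
      have := hWmul k v hv 1 h1
      simpa using this.2
  have hanti : ∀ n, W (n + 1) ⊆ W n := by
    intro n v hv
    have h1 : (1 : G) ∈ W (n + 1) := mem_of_mem_nhds (hWmem (n + 1)).1
    have := hWmul n v hv 1 h1
    simpa using this.1
  set E : ℕ → Set (G × G) := fun n => {p : G × G | p.1 * p.2⁻¹ ∈ W n} with hE
  have hinv : ∀ n, ∀ x : G, x ∈ W n → x⁻¹ ∈ W n := by
    intro n x hx
    rw [← (hWmem n).2]
    exact Set.inv_mem_inv.mpr hx
  obtain ⟨ρ, pm, hsmall, hbig⟩ := exists_pm E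
    (fun n x => by simp [hE, mem_of_mem_nhds (hWmem n).1])
    (by
      intro n
      ext p
      simp only [hE, Set.mem_preimage, Set.mem_setOf_eq, Prod.fst_swap, Prod.snd_swap]
      constructor
      · intro h
        have := hinv n _ h
        simpa using this
      · intro h
        have := hinv n _ h
        simpa using this)
    (by
      rintro n p ⟨q, hq1, hq2⟩
      have : (p.1 * q⁻¹) * (q * p.2⁻¹) ∈ W n ∩ V (n + 1) := hWmul n _ hq1 _ hq2
      have heq : (p.1 * q⁻¹) * (q * p.2⁻¹) = p.1 * p.2⁻¹ := by group
      rw [heq] at this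
      exact this.1)
    (by
      intro n p hp
      simp only [hE, Set.mem_setOf_eq] at hp ⊢
      exact hanti n hp)
  refine ⟨ρ, pm, ?_, ?_⟩
  · intro ε hε
    obtain ⟨n, hn⟩ := hsmall ε hε
    exact ⟨W n, (hWmem n).1, fun g h' hgh => hn g h' hgh⟩
  · intro n
    obtain ⟨δ, hδ, h⟩ := hbig n
    exact ⟨δ, hδ, fun g h' hρ => hWV n (h g h' hρ)⟩

lemma lip_min1 (a b : ℝ) : |min 1 a - min 1 b| ≤ |a - b| := by
  rcases le_total a b with h | h
  · rw [abs_of_nonpos (by simp only [sub_nonpos]; exact min_le_min le_rfl h),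
      abs_of_nonpos (by linarith)]
    simp only [min_def]
    split_ifs <;> linarith
  · rw [abs_of_nonneg (by simp only [sub_nonneg]; exact min_le_min le_rfl h),
      abs_of_nonneg (by linarith)]
    simp only [min_def]
    split_ifs <;> linarith

lemma min1_lt {t σ : ℝ} (h : min 1 t < σ) (hσ : σ ≤ 1) : t < σ := by
  rcases le_total 1 t with h1 | h1
  · rw [min_eq_left h1] at h; linarith
  · rwa [min_eq_right h1] at h

lemma le_min1 {t c : ℝ} (ht : c ≤ t) (hc : c ≤ 1) : c ≤ min 1 t := le_min hc ht

lemma min1_add {a b c : ℝ} (h : a ≤ b + c) (hb : 0 ≤ b) (hc : 0 ≤ c) :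
    min 1 a ≤ min 1 b + min 1 c := by
  rcases le_total 1 b with h1 | h1
  · rw [min_eq_left h1]
    have h0 : (0:ℝ) ≤ min 1 c := le_min (by norm_num) hc
    calc min 1 a ≤ 1 := min_le_left _ _
    _ ≤ 1 + min 1 c := by linarith
  · rcases le_total 1 c with h2 | h2
    · rw [min_eq_right h1, min_eq_left h2]
      calc min 1 a ≤ 1 := min_le_left _ _
      _ ≤ b + 1 := by linarith
    · rw [min_eq_right h1, min_eq_right h2]
      exact (min_le_right _ _).trans h

section UC
variable {Y : Type w} [UniformSpace Y]

lemma uc_real {d : Y → Y → ℝ} (pm : IsPM d)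
    (hd : ∀ ε > (0:ℝ), {p : Y × Y | d p.1 p.2 < ε} ∈ uniformity Y)
    {φ : Y → ℝ} (h : ∀ y y', |φ y - φ y'| ≤ min 1 (d y y')) : UniformContinuous φ := by
  rw [uniformContinuous_def]
  intro t ht
  rcases Metric.mem_uniformity_dist.1 ht with ⟨ε, hε, hsub⟩
  have hmin : (0:ℝ) < min ε 1 := lt_min hε (by norm_num)
  refine mem_of_superset (hd (min ε 1) hmin) ?_
  rintro ⟨y, y'⟩ hp
  apply hsub
  rw [Real.dist_eq]
  calc |φ y - φ y'| ≤ min 1 (d y y') := h y y'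
    _ ≤ d y y' := min_le_right _ _
    _ < min ε 1 := hp
    _ ≤ ε := min_le_left _ _

lemma uc_family {ι' : Type*} [Nonempty ι'] (d : Y → Y → ℝ) (pm : IsPM d)
    (hd : ∀ ε > (0:ℝ), {p : Y × Y | d p.1 p.2 < ε} ∈ uniformity Y) (c : ι' → Y) :
    UniformContinuous (fun y => ⨅ i, min 1 (d y (c i))) ∧
      (∀ y, |(⨅ i, min 1 (d y (c i)))| ≤ 1) ∧
      (∀ y i, (⨅ i, min 1 (d y (c i))) ≤ min 1 (d y (c i))) ∧
      (∀ (y : Y) (β : ℝ), (∀ i, β ≤ min 1 (d y (c i))) → β ≤ ⨅ i, min 1 (d y (c i))) := by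
  set φ : Y → ℝ := fun y => ⨅ i, min 1 (d y (c i)) with hφ
  have hbdd : ∀ y : Y, BddBelow (range fun i => min 1 (d y (c i))) :=
    fun y => ⟨0, by rintro r ⟨i, rfl⟩; exact le_min (by norm_num) (pm.nonneg _ _)⟩
  have hle : ∀ y i, φ y ≤ min 1 (d y (c i)) := fun y i => ciInf_le (hbdd y) i
  have hge : ∀ (y : Y) (β : ℝ), (∀ i, β ≤ min 1 (d y (c i))) → β ≤ φ y :=
    fun y β h => le_ciInf h
  have hnonneg : ∀ y, 0 ≤ φ y := fun y => hge y 0 fun i => le_min (by norm_num) (pm.nonneg _ _)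
  have hle1 : ∀ y, φ y ≤ 1 := fun y => (hle y (Classical.arbitrary ι')).trans (min_le_left _ _)
  have hlip1 : ∀ y y', φ y - φ y' ≤ min 1 (d y y') := by
    intro y y'
    have : φ y - min 1 (d y y') ≤ φ y' := by
      refine hge y' _ fun i => ?_
      have htri : min 1 (d y (c i)) ≤ min 1 (d y y') + min 1 (d y' (c i)) :=
        min1_add (pm.tri y y' (c i)) (pm.nonneg _ _) (pm.nonneg _ _)
      have := hle y i
      linarith
    linarith
  have hlip : ∀ y y', |φ y - φ y'| ≤ min 1 (d y y') := by
    intro y y'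
    rw [abs_sub_le_iff]
    refine ⟨hlip1 y y', ?_⟩
    have := hlip1 y' y
    rwa [pm.symm y' y] at this
  refine ⟨uc_real pm hd hlip, fun y => ?_, hle, hge⟩
  rw [abs_le]
  exact ⟨by linarith [hnonneg y], hle1 y⟩

lemma uc_single (d : Y → Y → ℝ) (pm : IsPM d)
    (hd : ∀ ε > (0:ℝ), {p : Y × Y | d p.1 p.2 < ε} ∈ uniformity Y) (y₀ : Y) :
    UniformContinuous (fun y => min 1 (d y y₀)) ∧ (∀ y, |min 1 (d y y₀)| ≤ 1) := by
  have := uc_family (ι' := PUnit.{1}) d pm hd (fun _ => y₀)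
  obtain ⟨h1, h2, h3, h4⟩ := this
  have heq : ∀ y, (⨅ _ : PUnit, min 1 (d y y₀)) = min 1 (d y y₀) := fun y =>
    le_antisymm (h3 y PUnit.unit) (h4 y _ fun _ => le_rfl)
  constructor
  · have : (fun y => ⨅ _ : PUnit, min 1 (d y y₀)) = fun y => min 1 (d y y₀) :=
      funext heq
    rwa [this] at h1
  · intro y
    have := h2 y
    rwa [heq y] at this

end UC

section Act
variable {G : Type u} [Group G] [TopologicalSpace G] [IsTopologicalGroup G]
variable {X : Type v} [MulAction G X] {Y : Type w} [UniformSpace Y]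
variable (f : X → Y)

lemma mod_lemma (hf : RightProxContAct ‹TopologicalSpace G› f)
    (φ : Y → ℝ) (hφu : UniformContinuous φ) (hφb : ∃ C, ∀ y, |φ y| ≤ C)
    {θ : ℝ} (hθ : 0 < θ) :
    ∃ U ∈ nhds (1 : G), ∀ g h : G, g * h⁻¹ ∈ U → ∀ x : X,
      |φ (f (g • x)) - φ (f (h • x))| < θ := by
  obtain ⟨U, hU, h⟩ := hf φ hφu hφb {p : ℝ × ℝ | dist p.1 p.2 < θ}
    (Metric.dist_mem_uniformity hθ)
  refine ⟨U, hU, fun g hh hgh x => ?_⟩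
  have := h g hh hgh x
  simpa [Real.dist_eq] using this

lemma nhds_translate (h₀ : G) (U : Set G) (hU : U ∈ nhds (1 : G)) :
    {g : G | g * h₀⁻¹ ∈ U} ∈ nhds h₀ := by
  rw [← map_mul_right_nhds_one h₀, mem_map]
  have : {k : G | k ∈ U} ⊆ (fun k => k * h₀) ⁻¹' {g | g * h₀⁻¹ ∈ U} := by
    intro k hk
    simp only [mem_preimage, mem_setOf_eq, mul_inv_cancel_right]
    exact hk
  exact mem_of_superset hU this

lemma cont_comp (hf : RightProxContAct ‹TopologicalSpace G› f)
    (φ : Y → ℝ) (hφu : UniformContinuous φ) (hφb : ∃ C, ∀ y, |φ y| ≤ C) (x : X) :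
    Continuous fun g : G => φ (f (g • x)) := by
  rw [continuous_iff_continuousAt]
  intro h₀
  rw [ContinuousAt, Metric.tendsto_nhds]
  intro θ hθ
  obtain ⟨U, hU, h⟩ := mod_lemma f hf φ hφu hφb hθ
  filter_upwards [nhds_translate h₀ U hU] with g hg
  rw [Real.dist_eq]
  exact h g h₀ hg x

end Act

section Master
variable {G : Type u} [Group G] [TopologicalSpace G] [IsTopologicalGroup G]
variable {X : Type v} [MulAction G X] {Y : Type w} [UniformSpace Y]

lemma master [Nonempty X] [Nonempty Y] (f : X → Y)
    (hf : RightProxContAct ‹TopologicalSpace G› f)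
    (d : Y → Y → ℝ) (pm : IsPM d)
    (hd : ∀ ε > (0:ℝ), {p : Y × Y | d p.1 p.2 < ε} ∈ uniformity Y)
    (A : Set G) (hA : RelORadial A) (a : G) (ha : a ∈ A)
    (ε₀ : ℝ) (hε0 : 0 < ε₀) (hε1 : ε₀ ≤ 1)
    (hw : ∀ W ∈ nhds a, ∃ b ∈ A ∩ W, ∃ x : X, ε₀ ≤ d (f (b • x)) (f (a • x))) : False := by
  classical
  set σ : ℝ := ε₀ / 16 with hσdef
  have hε16 : ε₀ = 16 * σ := by rw [hσdef]; ring
  have hσ0 : 0 < σ := by positivity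
  have hσ116 : σ ≤ 1 / 16 := by rw [hσdef]; linarith
  have hσ1 : σ ≤ 1 := by linarith
  set S : Set (G → ℝ) :=
    {u | (∃ p : X × Y, ∀ g, u g = min 1 (d (f (g • p.1)) p.2)) ∧ ε₀ ≤ u a} with hSdef
  have hchoice : ∀ u : G → ℝ, ∃ p : X × Y, u ∈ S →
      ∀ g, u g = min 1 (d (f (g • p.1)) p.2) := by
    intro u
    by_cases hu : u ∈ S
    · obtain ⟨⟨p, hp⟩, -⟩ := hu
      exact ⟨p, fun _ => hp⟩
    · exact ⟨⟨Classical.arbitrary X, Classical.arbitrary Y⟩, fun h => absurd h hu⟩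
  choose P hP using hchoice
  set px : (G → ℝ) → Y := fun u => f (a • (P u).1) with hpx
  set tt : (G → ℝ) → Y := fun u => (P u).2 with htt
  have hSa : ∀ u ∈ S, ε₀ ≤ d (px u) (tt u) := by
    intro u hu
    have h1 : u a = min 1 (d (px u) (tt u)) := hP u hu a
    have h2 : ε₀ ≤ u a := hu.2
    rw [h1] at h2
    exact h2.trans (min_le_right _ _)
  have hScont : ∀ u ∈ S, Continuous u := by
    intro u hu
    have heq : u = fun g => (fun y => min 1 (d y (tt u))) (f (g • (P u).1)) := funext (hP u hu)
    rw [heq]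
    obtain ⟨huc, hb⟩ := uc_single d pm hd (tt u)
    exact cont_comp f hf _ huc ⟨1, hb⟩ (P u).1
  set O : (G → ℝ) → Set G := fun u => if u ∈ S then {g | u g < σ} else ∅ with hOdef
  have hOopen : ∀ u, IsOpen (O u) := by
    intro u
    by_cases hu : u ∈ S
    · have : O u = {g | u g < σ} := if_pos hu
      rw [this]
      exact isOpen_lt (hScont u hu) continuous_const
    · have : O u = ∅ := if_neg hu
      rw [this]
      exact isOpen_empty
  have hOS : ∀ u g, g ∈ O u → u ∈ S ∧ u g < σ := by
    intro u g hg
    by_cases hu : u ∈ S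
    · have : O u = {g | u g < σ} := if_pos hu
      rw [this] at hg
      exact ⟨hu, hg⟩
    · have : O u = ∅ := if_neg hu
      rw [this] at hg
      exact absurd hg (notMem_empty g)
  have hOnotcl : ∀ u, a ∉ closure (O u) := by
    intro u
    by_cases hu : u ∈ S
    · have hsub : O u ⊆ {g | u g ≤ σ} := fun g hg => le_of_lt (hOS u g hg).2
      have hclosed : IsClosed {g | u g ≤ σ} := isClosed_le (hScont u hu) continuous_const
      intro hcl
      have h1 : u a ≤ σ := closure_minimal hsub hclosed hcl
      have h2 : ε₀ ≤ u a := hu.2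
      linarith
    · have : O u = ∅ := if_neg hu
      rw [this, closure_empty]
      exact notMem_empty a
  have hOmem : a ∈ closure (⋃ u, O u ∩ A) := by
    rw [mem_closure_iff_nhds]
    intro W hW
    obtain ⟨b, ⟨hbA, hbW⟩, x, hbx⟩ := hw W hW
    set u : G → ℝ := fun g => min 1 (d (f (g • x)) (f (b • x))) with hu
    have huS : u ∈ S := by
      refine ⟨⟨(x, f (b • x)), fun g => rfl⟩, ?_⟩
      have h1 : ε₀ ≤ d (f (a • x)) (f (b • x)) := by rw [pm.symm]; exact hbx
      exact le_min1 h1 hε1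
    have hbO : b ∈ O u := by
      have heq : O u = {g | u g < σ} := if_pos huS
      rw [heq]
      show u b < σ
      have : u b = min 1 (d (f (b • x)) (f (b • x))) := rfl
      rw [this, pm.refl]
      simpa using hσ0
    exact ⟨b, hbW, mem_iUnion.2 ⟨u, hbO, hbA⟩⟩
  obtain ⟨J, hreg, hL⟩ := hA O a ha hOopen hOmem hOnotcl
  set κ := Cardinal.mk ↥J with hκ
  have hκℵ : Cardinal.aleph0 ≤ κ := hreg.aleph0_le
  have hfull : ∀ L : Set (G → ℝ), L ⊆ J → Cardinal.mk ↥L = κ →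
      ∀ W ∈ nhds a, ∃ g ∈ W, ∃ u ∈ L, g ∈ O u := by
    intro L hLJ hLκ W hW
    have hacl := hL L hLJ hLκ
    obtain ⟨g, hgW, hg2⟩ := mem_closure_iff_nhds.1 hacl W hW
    rw [mem_iUnion₂] at hg2
    obtain ⟨u, huL, hgO⟩ := hg2
    exact ⟨g, hgW, u, huL, hgO⟩
  set J' := J ∩ S with hJ'
  have hJ'J : J' ⊆ J := inter_subset_left
  have hJ'S : ∀ u ∈ J', u ∈ S := fun u hu => hu.2
  have hJ'κ : Cardinal.mk ↥J' = κ := by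
    rcases eq_or_ne (Cardinal.mk ↥(J \ S)) κ with hdiff | hdiff
    · exfalso
      have hacl := hL (J \ S) diff_subset hdiff
      have hempty : ⋃ u ∈ J \ S, O u = (∅ : Set G) := by
        apply eq_empty_iff_forall_notMem.2
        intro g hg
        rw [mem_iUnion₂] at hg
        obtain ⟨u, hu, hgO⟩ := hg
        exact hu.2 (hOS u g hgO).1
      rw [hempty, closure_empty] at hacl
      exact notMem_empty a hacl
    · have hsub1 : Cardinal.mk ↥J' ≤ κ := Cardinal.mk_le_mk_of_subset hJ'J
      have hsub2 : Cardinal.mk ↥(J \ S) ≤ κ := Cardinal.mk_le_mk_of_subset diff_subset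
      by_contra hne
      have h1 : Cardinal.mk ↥J' < κ := lt_of_le_of_ne hsub1 hne
      have h2 : Cardinal.mk ↥(J \ S) < κ := lt_of_le_of_ne hsub2 hdiff
      have hJeq : J = J' ∪ (J \ S) := by
        rw [hJ']
        exact (inter_union_diff J S).symm
      have hle : κ ≤ Cardinal.mk ↥J' + Cardinal.mk ↥(J \ S) := by
        rw [hκ]
        conv_lhs => rw [hJeq]
        exact Cardinal.mk_union_le _ _
      have := Cardinal.add_lt_of_lt hκℵ h1 h2
      exact absurd hle (not_le.2 this)
  have hkey : ∀ L : Set (G → ℝ), L ⊆ J' → Cardinal.mk ↥L = κ →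
      ∀ φ : Y → ℝ, UniformContinuous φ → (∃ C, ∀ y, |φ y| ≤ C) →
      ∀ θ : ℝ, 0 < θ → ∃ u ∈ L, ∃ q : Y, d q (tt u) < σ ∧ |φ q - φ (px u)| < θ := by
    intro L hLJ' hLκ φ hφu hφb θ hθ
    obtain ⟨U, hU, hmod⟩ := mod_lemma f hf φ hφu hφb hθ
    obtain ⟨g, hgW, u, huL, hgO⟩ := hfull L (hLJ'.trans hJ'J) hLκ _ (nhds_translate a U hU)
    obtain ⟨huS, huσ⟩ := hOS u g hgO
    have hq : d (f (g • (P u).1)) (tt u) < σ := by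
      have heq := hP u huS g
      rw [heq] at huσ
      exact min1_lt huσ hσ1
    exact ⟨u, huL, f (g • (P u).1), hq, hmod g a hgW (P u).1⟩
  have hd16 : ∀ u ∈ J', 16 * σ ≤ d (px u) (tt u) := by
    intro u hu
    have := hSa u (hJ'S u hu)
    linarith
  by_cases hC1 : ∃ y₁ : Y, Cardinal.mk ↥{u ∈ J' | d (px u) y₁ ≤ 2 * σ} = κ
  · obtain ⟨y₁, hy₁⟩ := hC1
    obtain ⟨huc, hb⟩ := uc_single d pm hd y₁
    obtain ⟨u, huL, q, hq, hφq⟩ := hkey {u ∈ J' | d (px u) y₁ ≤ 2 * σ} (sep_subset _ _) hy₁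
      _ huc ⟨1, hb⟩ σ hσ0
    obtain ⟨huJ', hcl⟩ := huL
    have h16 := hd16 u huJ'
    have h1 : 15 * σ ≤ d q (px u) := by
      have ht := pm.tri (px u) q (tt u)
      have hs := pm.symm q (px u)
      linarith
    have h2 : 13 * σ ≤ d q y₁ := by
      have ht := pm.tri q y₁ (px u)
      have hs := pm.symm y₁ (px u)
      linarith
    have hφq1 : 13 * σ ≤ min 1 (d q y₁) := le_min1 h2 (by linarith)
    have hφq2 : min 1 (d (px u) y₁) ≤ 2 * σ := (min_le_right _ _).trans hcl
    have habs := abs_lt.1 hφq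
    linarith [habs.1, habs.2]
  · by_cases hC2 : ∃ u₁ ∈ J', Cardinal.mk ↥{u ∈ J' | d (px u₁) (tt u) ≤ 2 * σ} = κ
    · obtain ⟨u₁, hu₁, hy₁⟩ := hC2
      obtain ⟨huc, hb⟩ := uc_single d pm hd (px u₁)
      obtain ⟨u, huL, q, hq, hφq⟩ := hkey {u ∈ J' | d (px u₁) (tt u) ≤ 2 * σ} (sep_subset _ _)
        hy₁ _ huc ⟨1, hb⟩ σ hσ0
      obtain ⟨huJ', hcl⟩ := huL
      have h16 := hd16 u huJ'
      have h1 : min 1 (d q (px u₁)) ≤ 3 * σ := by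
        have ht := pm.tri q (tt u) (px u₁)
        have hs := pm.symm (px u₁) (tt u)
        have := min_le_right (1:ℝ) (d q (px u₁))
        linarith
      have h2 : 14 * σ ≤ d (px u) (px u₁) := by
        have ht := pm.tri (px u) (px u₁) (tt u)
        linarith
      have h3 : 14 * σ ≤ min 1 (d (px u) (px u₁)) := le_min1 h2 (by linarith)
      have habs := abs_lt.1 hφq
      linarith [habs.1, habs.2]
    · push_neg at hC1 hC2
      set conflict : (G → ℝ) → Set (G → ℝ) :=
        fun u₁ => {u ∈ J' | d (px u) (tt u₁) ≤ 2 * σ ∨ d (px u₁) (tt u) ≤ 2 * σ} with hconfdef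
      have hconfl : ∀ u₁ ∈ J', Cardinal.mk ↥(conflict u₁) < κ := by
        intro u₁ hu₁
        have hsub : conflict u₁ ⊆
            {u ∈ J' | d (px u) (tt u₁) ≤ 2 * σ} ∪ {u ∈ J' | d (px u₁) (tt u) ≤ 2 * σ} := by
          rintro u ⟨huJ', hor⟩
          rcases hor with h | h
          · exact Or.inl ⟨huJ', h⟩
          · exact Or.inr ⟨huJ', h⟩
        have h1 : Cardinal.mk ↥{u ∈ J' | d (px u) (tt u₁) ≤ 2 * σ} < κ :=
          lt_of_le_of_ne (le_trans (Cardinal.mk_le_mk_of_subset (sep_subset _ _))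
            (le_of_eq hJ'κ)) (hC1 (tt u₁))
        have h2 : Cardinal.mk ↥{u ∈ J' | d (px u₁) (tt u) ≤ 2 * σ} < κ :=
          lt_of_le_of_ne (le_trans (Cardinal.mk_le_mk_of_subset (sep_subset _ _))
            (le_of_eq hJ'κ)) (hC2 u₁ hu₁)
        calc Cardinal.mk ↥(conflict u₁) ≤ Cardinal.mk ↥({u ∈ J' | d (px u) (tt u₁) ≤ 2 * σ} ∪
            {u ∈ J' | d (px u₁) (tt u) ≤ 2 * σ}) := Cardinal.mk_le_mk_of_subset hsub
          _ ≤ _ + _ := Cardinal.mk_union_le _ _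
          _ < κ := Cardinal.add_lt_of_lt hκℵ h1 h2
      set 𝒮 : Set (Set (G → ℝ)) :=
        {L | L ⊆ J' ∧ ∀ u ∈ L, ∀ u₁ ∈ L, 2 * σ < d (px u) (tt u₁)} with h𝒮def
      obtain ⟨M, -, hMmax⟩ := zorn_subset_nonempty 𝒮 (by
        intro c hc hchain hcne
        refine ⟨⋃₀ c, ⟨?_, ?_⟩, fun s hs => subset_sUnion_of_mem hs⟩
        · exact sUnion_subset fun L hL => (hc hL).1
        · rintro u hu u₁ hu₁
          obtain ⟨L1, hL1c, huL1⟩ := hu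
          obtain ⟨L2, hL2c, hu₁L2⟩ := hu₁
          rcases hchain.total hL1c hL2c with hsub | hsub
          · exact (hc hL2c).2 u (hsub huL1) u₁ hu₁L2
          · exact (hc hL1c).2 u huL1 u₁ (hsub hu₁L2)) ∅ ⟨empty_subset _, by simp⟩
      have hM𝒮 : M ∈ 𝒮 := hMmax.1
      have hMJ' : M ⊆ J' := hM𝒮.1
      have hMconf : ∀ u ∈ M, ∀ u₁ ∈ M, 2 * σ < d (px u) (tt u₁) := hM𝒮.2
      have hMκ : Cardinal.mk ↥M = κ := by
        by_contra hne
        have hlt : Cardinal.mk ↥M < κ :=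
          lt_of_le_of_ne (le_trans (Cardinal.mk_le_mk_of_subset hMJ') (le_of_eq hJ'κ)) hne
        set Fbig := M ∪ ⋃ u₁ ∈ M, conflict u₁ with hFdef
        have hFlt : Cardinal.mk ↥Fbig < κ := by
          have hbU : Cardinal.mk ↥(⋃ u₁ ∈ M, conflict u₁) < κ := by
            rw [Cardinal.card_biUnion_lt_iff_forall_of_isRegular hreg hlt]
            exact fun u₁ hu₁ => hconfl u₁ (hMJ' hu₁)
          calc Cardinal.mk ↥Fbig ≤ _ + _ := Cardinal.mk_union_le _ _
            _ < κ := Cardinal.add_lt_of_lt hκℵ hlt hbU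
        have hnsub : ¬(J' ⊆ Fbig) := by
          intro hsub
          have := Cardinal.mk_le_mk_of_subset hsub
          rw [hJ'κ] at this
          exact absurd this (not_le.2 hFlt)
        obtain ⟨u₀, hu₀J', hu₀F⟩ := not_subset.1 hnsub
        have hu₀conf : ∀ u₁ ∈ M, 2 * σ < d (px u₀) (tt u₁) ∧ 2 * σ < d (px u₁) (tt u₀) := by
          intro u₁ hu₁
          have : u₀ ∉ conflict u₁ := fun hmem =>
            hu₀F (Or.inr (mem_iUnion₂.2 ⟨u₁, hu₁, hmem⟩))
          rw [hconfdef] at this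
          simp only [mem_setOf_eq, not_and, not_or, not_le] at this
          exact this hu₀J'
        have hM' : insert u₀ M ∈ 𝒮 := by
          constructor
          · exact insert_subset hu₀J' hMJ'
          · intro u hu u₁ hu₁
            have hu' : u = u₀ ∨ u ∈ M := mem_insert_iff.1 hu
            have hu₁' : u₁ = u₀ ∨ u₁ ∈ M := mem_insert_iff.1 hu₁
            rcases hu' with h | h
            · rcases hu₁' with h2 | h2
              · rw [h, h2]
                have := hd16 u₀ hu₀J'
                linarith
              · rw [h]
                exact (hu₀conf u₁ h2).1
            · rcases hu₁' with h2 | h2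
              · rw [h2]
                exact (hu₀conf u h).2
              · exact hMconf u h u₁ h2
        have hins : insert u₀ M ⊆ M := hMmax.2 hM' (subset_insert _ _)
        have : u₀ ∈ M := hins (mem_insert _ _)
        exact hu₀F (Or.inl this)
      have hMne : Nonempty ↥M := by
        rw [← Cardinal.mk_ne_zero_iff, hMκ]
        exact hreg.pos.ne'
      obtain ⟨huc, hb, hle, hge⟩ := uc_family (ι' := ↥M) d pm hd (fun i => tt i.1)
      obtain ⟨u, huM, q, hq, hφq⟩ := hkey M hMJ' hMκ _ huc ⟨1, hb⟩ σ hσ0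
      have h1 : (⨅ i : ↥M, min 1 (d q (tt i.1))) < σ := by
        have := hle q ⟨u, huM⟩
        have h2 := min_le_right (1:ℝ) (d q (tt u))
        calc (⨅ i : ↥M, min 1 (d q (tt i.1))) ≤ min 1 (d q (tt u)) := this
          _ ≤ d q (tt u) := h2
          _ < σ := hq
      have h2 : 2 * σ ≤ ⨅ i : ↥M, min 1 (d (px u) (tt i.1)) := by
        refine hge (px u) (2 * σ) fun i => ?_
        exact le_min1 (le_of_lt (hMconf u huM i.1 i.2)) (by linarith)
      have habs := abs_lt.1 hφq
      linarith [habs.1, habs.2]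

end Master

section Case1
variable {G : Type u} [Group G] [TopologicalSpace G] [IsTopologicalGroup G]
variable {X : Type v} [MulAction G X] {Y : Type w} [UniformSpace Y]

lemma min1_le_imp {t c : ℝ} (h : min 1 t ≤ c) (hc : c < 1) : t ≤ c := by
  rcases le_total t 1 with h1 | h1
  · rwa [min_eq_right h1] at h
  · rw [min_eq_left h1] at h; linarith

lemma case1 [Nonempty X] [Nonempty Y] (f : X → Y)
    (hf : RightProxContAct ‹TopologicalSpace G› f)
    (d : Y → Y → ℝ) (pm : IsPM d)
    (hd : ∀ ε > (0:ℝ), {p : Y × Y | d p.1 p.2 < ε} ∈ uniformity Y)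
    (α : G → ℝ) (hα0 : ∀ g, 0 ≤ α g) (hα1 : ∀ g, α g ≤ 1)
    (hαsub : ∀ g h : G, α g ≤ α h + α (g * h⁻¹))
    (hlsc : ∀ c : ℝ, IsOpen {g | c < α g})
    (hwit : ∀ (z : G) (q : ℝ), q < α z → ∃ x : X, q ≤ d (f (z • x)) (f ((1:G) • x)))
    (A : Set G) (hAne : A.Nonempty) (hrad : RelORadial (A * A⁻¹)) :
    ∃ β : G → ℝ, Continuous β ∧ ∀ z ∈ closure A, β z = α z := by
  classical
  obtain ⟨a₀, ha₀⟩ := hAne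
  set B := A * A⁻¹ with hBdef
  have h1B : (1 : G) ∈ B := by
    refine ⟨a₀, ha₀, a₀⁻¹, ?_, mul_inv_cancel a₀⟩
    exact Set.inv_mem_inv.2 ha₀
  have hclosure_le : ∀ (T : Set G) (c : ℝ), (∀ z ∈ T, α z ≤ c) → ∀ z ∈ closure T, α z ≤ c := by
    intro T c hT z hz
    by_contra hgt
    push_neg at hgt
    obtain ⟨w, hw1, hw2⟩ := mem_closure_iff.1 hz _ (hlsc c) hgt
    exact absurd (hT w hw2) (not_le.2 hw1)
  have hC : ∀ m : ℕ, ∃ U : Set G, U ∈ nhds (1:G) ∧ U⁻¹ = U ∧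
      ∀ z ∈ closure B ∩ U, α z ≤ (2⁻¹:ℝ)^(m+1) := by
    intro m
    set q : ℝ := (2⁻¹:ℝ)^(m+1) with hqdef
    have hq0 : 0 < q := by positivity
    have hq1 : q ≤ 1 := by
      rw [hqdef]
      exact pow_le_one₀ (by norm_num) (by norm_num)
    have hCm : ∃ U ∈ nhds (1:G), ∀ z ∈ B ∩ U, α z ≤ q := by
      by_contra hcon
      push_neg at hcon
      refine master f hf d pm hd B hrad 1 h1B q hq0 hq1 ?_
      intro W hW
      obtain ⟨z, hzB, hzα⟩ := hcon W hW
      obtain ⟨x, hx⟩ := hwit z q hzα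
      exact ⟨z, hzB, x, hx⟩
    obtain ⟨U₀, hU₀, hU₀b⟩ := hCm
    refine ⟨interior U₀ ∩ (interior U₀)⁻¹, ?_, ?_, ?_⟩
    · exact Filter.inter_mem (interior_mem_nhds.2 hU₀)
        (inv_mem_nhds_one G (interior_mem_nhds.2 hU₀))
    · rw [Set.inter_inv, inv_inv, Set.inter_comm]
    · rintro z ⟨hzB, hzU, -⟩
      have hz' : z ∈ closure (B ∩ interior U₀) := by
        rw [mem_closure_iff]
        intro o ho hzo
        obtain ⟨w, hw1, hw2⟩ := mem_closure_iff.1 hzB (o ∩ interior U₀)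
          (ho.inter isOpen_interior) ⟨hzo, hzU⟩
        exact ⟨w, ⟨hw1.1, hw2, hw1.2⟩⟩
      exact hclosure_le (B ∩ interior U₀) q
        (fun w hw => hU₀b w ⟨hw.1, interior_subset hw.2⟩) z hz'
  choose Vm hVm1 hVm3 hVm4 using hC
  obtain ⟨ρ, pmρ, hρsmall, hρbig⟩ := exists_pm_group Vm hVm1
  choose δ hδ0 hδbig using hρbig
  -- the rescaled pseudometric
  set τ : ℕ → G → G → ℝ := fun m g h => (2⁻¹:ℝ)^m * min 1 ((δ m)⁻¹ * ρ g h) with hτdef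
  have hτ0 : ∀ m g h, 0 ≤ τ m g h := by
    intro m g h
    apply mul_nonneg (by positivity)
    exact le_min (by norm_num) (mul_nonneg (inv_nonneg.2 (hδ0 m).le) (pmρ.nonneg g h))
  have hτle : ∀ m g h, τ m g h ≤ (2⁻¹:ℝ)^m := by
    intro m g h
    have : min 1 ((δ m)⁻¹ * ρ g h) ≤ 1 := min_le_left _ _
    calc τ m g h ≤ (2⁻¹:ℝ)^m * 1 := by
          apply mul_le_mul_of_nonneg_left this (by positivity)
      _ = (2⁻¹:ℝ)^m := mul_one _
  have hτbdd : ∀ g h, BddAbove (range fun m => τ m g h) := by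
    intro g h
    refine ⟨1, ?_⟩
    rintro r ⟨m, rfl⟩
    exact (hτle m g h).trans (pow_le_one₀ (by norm_num) (by norm_num))
  set R : G → G → ℝ := fun g h => ⨆ m : ℕ, τ m g h with hRdef
  have hRge : ∀ m g h, τ m g h ≤ R g h := fun m g h => le_ciSup (hτbdd g h) m
  have hRub : ∀ g h (c : ℝ), (∀ m, τ m g h ≤ c) → R g h ≤ c := fun g h c hc => ciSup_le hc
  have hR0 : ∀ g h, 0 ≤ R g h := fun g h => (hτ0 0 g h).trans (hRge 0 g h)
  have hR1 : ∀ g h, R g h ≤ 1 := fun g h =>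
    hRub g h 1 fun m => (hτle m g h).trans (pow_le_one₀ (by norm_num) (by norm_num))
  have hRrefl : ∀ g, R g g = 0 := by
    intro g
    refine le_antisymm (hRub g g 0 fun m => ?_) (hR0 g g)
    rw [hτdef]
    simp [pmρ.refl g]
  have hRsymm : ∀ g h, R g h = R h g := by
    intro g h
    rw [hRdef]
    simp only [hτdef]
    rw [pmρ.symm g h]
  have hRtri : ∀ g h k, R g k ≤ R g h + R h k := by
    intro g h k
    refine hRub g k _ fun m => ?_
    have h1 : (δ m)⁻¹ * ρ g k ≤ (δ m)⁻¹ * ρ g h + (δ m)⁻¹ * ρ h k := by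
      rw [← mul_add]
      exact mul_le_mul_of_nonneg_left (pmρ.tri g h k) (inv_nonneg.2 (hδ0 m).le)
    have h2 : min 1 ((δ m)⁻¹ * ρ g k) ≤
        min 1 ((δ m)⁻¹ * ρ g h) + min 1 ((δ m)⁻¹ * ρ h k) := by
      calc min 1 ((δ m)⁻¹ * ρ g k) ≤ min 1 ((δ m)⁻¹ * ρ g h + (δ m)⁻¹ * ρ h k) :=
            min_le_min le_rfl h1
        _ ≤ _ := min1_add le_rfl (mul_nonneg (inv_nonneg.2 (hδ0 m).le) (pmρ.nonneg _ _))
            (mul_nonneg (inv_nonneg.2 (hδ0 m).le) (pmρ.nonneg _ _))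
    calc τ m g k ≤ (2⁻¹:ℝ)^m * (min 1 ((δ m)⁻¹ * ρ g h) + min 1 ((δ m)⁻¹ * ρ h k)) :=
          mul_le_mul_of_nonneg_left h2 (by positivity)
      _ = τ m g h + τ m h k := by rw [hτdef]; ring
      _ ≤ R g h + R h k := add_le_add (hRge m g h) (hRge m h k)
  have hmod : ∀ (m : ℕ) (b b' : G), R b b' < (2⁻¹:ℝ)^m → b * b'⁻¹ ∈ Vm m := by
    intro m b b' hlt
    have h1 : τ m b b' < (2⁻¹:ℝ)^m := lt_of_le_of_lt (hRge m b b') hlt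
    have h2 : min 1 ((δ m)⁻¹ * ρ b b') < 1 := by
      by_contra hge
      push_neg at hge
      rw [hτdef] at h1
      simp only at h1
      nlinarith [pow_pos (by norm_num : (0:ℝ) < 2⁻¹) m]
    have h3 : (δ m)⁻¹ * ρ b b' < 1 := by
      rcases le_total 1 ((δ m)⁻¹ * ρ b b') with hc | hc
      · rw [min_eq_left hc] at h2; linarith
      · rwa [min_eq_right hc] at h2
    have h4 : ρ b b' < δ m := by
      have := (inv_mul_lt_iff₀ (hδ0 m)).1 h3
      simpa using this
    exact hδbig m b b' h4
  have hRsmall : ∀ ε > (0:ℝ), ∃ U ∈ nhds (1:G), ∀ g h, g * h⁻¹ ∈ U → R g h < ε := by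
    intro ε hε
    obtain ⟨M, hM⟩ := exists_pow_lt_of_lt_one (half_pos hε) (by norm_num : (2⁻¹:ℝ) < 1)
    have hrne : (Finset.range (M+1)).Nonempty := Finset.nonempty_range_iff.2 (Nat.succ_ne_zero M)
    set c : ℝ := (ε/2) * (Finset.range (M+1)).inf' hrne δ with hcdef
    have hinfpos : 0 < (Finset.range (M+1)).inf' hrne δ := by
      rw [Finset.lt_inf'_iff]
      exact fun i _ => hδ0 i
    have hcpos : 0 < c := mul_pos (half_pos hε) hinfpos
    obtain ⟨U, hU, hUs⟩ := hρsmall c hcpos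
    refine ⟨U, hU, fun g h hgh => ?_⟩
    have hρc := hUs g h hgh
    have hub : ∀ m, τ m g h ≤ ε/2 := by
      intro m
      rcases le_or_gt m M with hm | hm
      · have hinf : (Finset.range (M+1)).inf' hrne δ ≤ δ m :=
          Finset.inf'_le δ (Finset.mem_range.2 (by omega))
        have h1 : ρ g h < (ε/2) * δ m := by
          refine lt_of_lt_of_le hρc ?_
          exact mul_le_mul_of_nonneg_left hinf (half_pos hε).le
        have h2 : (δ m)⁻¹ * ρ g h ≤ ε/2 := by
          rw [inv_mul_le_iff₀ (hδ0 m)]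
          nlinarith [hδ0 m]
        have h3 : min 1 ((δ m)⁻¹ * ρ g h) ≤ ε/2 := (min_le_right _ _).trans h2
        have h4 : (2⁻¹:ℝ)^m ≤ 1 := pow_le_one₀ (by norm_num) (by norm_num)
        have h5 : (0:ℝ) ≤ min 1 ((δ m)⁻¹ * ρ g h) :=
          le_min (by norm_num) (mul_nonneg (inv_nonneg.2 (hδ0 m).le) (pmρ.nonneg g h))
        calc τ m g h ≤ 1 * min 1 ((δ m)⁻¹ * ρ g h) :=
              mul_le_mul_of_nonneg_right h4 h5
          _ = min 1 ((δ m)⁻¹ * ρ g h) := one_mul _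
          _ ≤ ε/2 := h3
      · have h1 : (2⁻¹:ℝ)^m ≤ (2⁻¹:ℝ)^M :=
          pow_le_pow_of_le_one (by norm_num) (by norm_num) (by omega)
        have := hτle m g h
        linarith
    have := hRub g h (ε/2) hub
    linarith
  have hclB : ∀ b b', b ∈ closure A → b' ∈ closure A → b * b'⁻¹ ∈ closure B := by
    intro b b' hb hb'
    have h1 : b'⁻¹ ∈ closure (A⁻¹) :=
      map_mem_closure continuous_inv hb' fun x hx => Set.inv_mem_inv.2 hx
    exact map_mem_closure₂ continuous_mul hb h1 fun x hx y hy => Set.mul_mem_mul hx hy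
  have hexp2 : ∀ b b', b ∈ closure A → b' ∈ closure A → ∀ m : ℕ,
      R b b' < (2⁻¹:ℝ)^m → |α b - α b'| ≤ (2⁻¹:ℝ)^(m+1) := by
    intro b b' hb hb' m hlt
    have h1 : b * b'⁻¹ ∈ Vm m := hmod m b b' hlt
    have h2 : b' * b⁻¹ ∈ Vm m := by
      have : b' * b⁻¹ = (b * b'⁻¹)⁻¹ := by group
      rw [this, ← hVm3 m]
      exact Set.inv_mem_inv.2 h1
    have h3 : α (b * b'⁻¹) ≤ (2⁻¹:ℝ)^(m+1) := hVm4 m _ ⟨hclB b b' hb hb', h1⟩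
    have h4 : α (b' * b⁻¹) ≤ (2⁻¹:ℝ)^(m+1) := hVm4 m _ ⟨hclB b' b hb' hb, h2⟩
    rw [abs_sub_le_iff]
    constructor
    · have := hαsub b b'
      linarith
    · have := hαsub b' b
      linarith
  have hlip : ∀ b b', b ∈ closure A → b' ∈ closure A → |α b - α b'| ≤ 2 * R b b' := by
    intro b b' hb hb'
    set r := R b b' with hrdef
    have hr0 : 0 ≤ r := hR0 b b'
    rcases eq_or_lt_of_le hr0 with hr | hr
    · have hall : ∀ m : ℕ, |α b - α b'| ≤ (2⁻¹:ℝ)^(m+1) := by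
        intro m
        refine hexp2 b b' hb hb' m ?_
        rw [← hrdef, ← hr]
        positivity
      by_contra hgt
      push_neg at hgt
      have habs : 0 < |α b - α b'| := by
        rw [← hr] at hgt
        simpa using hgt
      obtain ⟨n, hn⟩ := exists_pow_lt_of_lt_one habs (by norm_num : (2⁻¹:ℝ) < 1)
      have := hall n
      have hmono : (2⁻¹:ℝ)^(n+1) ≤ (2⁻¹:ℝ)^n :=
        pow_le_pow_of_le_one (by norm_num) (by norm_num) (Nat.le_succ n)
      linarith
    · rcases le_total (2⁻¹:ℝ) r with hc | hc
      · have h1 : |α b - α b'| ≤ 1 := by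
          rw [abs_sub_le_iff]
          constructor <;> [linarith [hα0 b', hα1 b]; linarith [hα0 b, hα1 b']]
        linarith
      · have hex : ∃ n : ℕ, (2⁻¹:ℝ)^n ≤ r := by
          obtain ⟨n, hn⟩ := exists_pow_lt_of_lt_one hr (by norm_num : (2⁻¹:ℝ) < 1)
          exact ⟨n, hn.le⟩
        set m₀ := Nat.find hex with hm₀def
        have hm₀ : (2⁻¹:ℝ)^m₀ ≤ r := Nat.find_spec hex
        have hm₀pos : m₀ ≠ 0 := by
          intro h0
          rw [h0] at hm₀
          simp at hm₀
          linarith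
        obtain ⟨k, hk⟩ := Nat.exists_eq_succ_of_ne_zero hm₀pos
        have hklt : ¬((2⁻¹:ℝ)^k ≤ r) := Nat.find_min hex (by omega)
        push_neg at hklt
        have := hexp2 b b' hb hb' k hklt
        rw [← Nat.succ_eq_add_one, ← hk] at this
        linarith
  haveI : Nonempty ↥(closure A) := ⟨⟨a₀, subset_closure ha₀⟩⟩
  set β : G → ℝ := fun g => ⨅ b : ↥(closure A), (α b.1 + 2 * R g b.1) with hβdef
  have hβbdd : ∀ g, BddBelow (range fun b : ↥(closure A) => α b.1 + 2 * R g b.1) := by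
    intro g
    refine ⟨0, ?_⟩
    rintro r ⟨b, rfl⟩
    show (0:ℝ) ≤ α b.1 + 2 * R g b.1
    have := hα0 b.1
    have := hR0 g b.1
    linarith
  have hβle : ∀ g (b : ↥(closure A)), β g ≤ α b.1 + 2 * R g b.1 :=
    fun g b => ciInf_le (hβbdd g) b
  have hβge : ∀ g (c : ℝ), (∀ b : ↥(closure A), c ≤ α b.1 + 2 * R g b.1) → c ≤ β g :=
    fun g c hc => le_ciInf hc
  have hβlip : ∀ g h, β g - β h ≤ 2 * R g h := by
    intro g h
    have : β g - 2 * R g h ≤ β h := by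
      refine hβge h _ fun b => ?_
      have h1 := hβle g b
      have h2 := hRtri g h b.1
      linarith
    linarith
  refine ⟨β, ?_, ?_⟩
  · rw [continuous_iff_continuousAt]
    intro g₀
    rw [ContinuousAt, Metric.tendsto_nhds]
    intro ε hε
    obtain ⟨U, hU, hsmall⟩ := hRsmall (ε/4) (by linarith)
    filter_upwards [nhds_translate g₀ U hU] with g hg
    have h1 : R g g₀ < ε/4 := hsmall g g₀ hg
    have h2 : β g - β g₀ ≤ 2 * R g g₀ := hβlip g g₀
    have h3 : β g₀ - β g ≤ 2 * R g₀ g := hβlip g₀ g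
    rw [hRsymm g₀ g] at h3
    rw [Real.dist_eq, abs_lt]
    constructor <;> linarith
  · intro z hz
    refine le_antisymm ?_ ?_
    · have := hβle z ⟨z, hz⟩
      rw [hRrefl z] at this
      linarith
    · refine hβge z _ fun b => ?_
      have h1 : |α z - α b.1| ≤ 2 * R z b.1 := hlip z b.1 hz b.2
      have h2 := abs_le.1 h1
      linarith [h2.1]

end Case1

/-- Theorem 2.5: let `G` be a topological group such that every bounded discontinuous
`α : G → ℝ` admits a set `A ⊆ G` for which either (1) `α` restricted to `closure A` has no
continuous extension to `G` and `A * A⁻¹` is relatively o-radial in `G`, or (2) `α` restricted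
to `closure A` is discontinuous at some point of `A` and `A` is relatively o-radial in `G`.
Then every right proximally continuous map from a `G`-set `X` into a uniform space `Y` is
right uniformly continuous. -/
theorem stmt_5 {G : Type u} [Group G] [TopologicalSpace G] [IsTopologicalGroup G]
    (hG : ∀ α : G → ℝ, (∃ C, ∀ g, |α g| ≤ C) → ¬Continuous α →
      ∃ A : Set G,
        ((¬∃ β : G → ℝ, Continuous β ∧ ∀ a ∈ closure A, β a = α a) ∧ RelORadial (A * A⁻¹)) ∨
        ((∃ a ∈ A, ¬ContinuousWithinAt α (closure A) a) ∧ RelORadial A))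
    {X : Type v} [MulAction G X] {Y : Type w} [UniformSpace Y] (f : X → Y)
    (hf : RightProxContAct ‹TopologicalSpace G› f) :
    RightUCAct ‹TopologicalSpace G› f := by
  classical
  intro V hV
  by_cases hX : Nonempty X
  swap
  · exact ⟨univ, Filter.univ_mem, fun g h _ x => absurd ⟨x⟩ hX⟩
  haveI := hX
  haveI : Nonempty Y := ⟨f (Classical.arbitrary X)⟩
  by_contra hnot
  push_neg at hnot
  obtain ⟨d, pm, hd, δV, hδV0, hδV⟩ := exists_pm_unif V hV
  set βf : X → G → ℝ := fun x g => min 1 (d (f (g • x)) (f x)) with hβf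
  have hβ0 : ∀ x g, 0 ≤ βf x g := fun x g => le_min (by norm_num) (pm.nonneg _ _)
  have hβ1 : ∀ x g, βf x g ≤ 1 := fun x g => min_le_left _ _
  have hβbdd : ∀ g, BddAbove (range fun x => βf x g) := by
    intro g
    refine ⟨1, ?_⟩
    rintro r ⟨x, rfl⟩
    exact hβ1 x g
  set α : G → ℝ := fun g => ⨆ x, βf x g with hα
  have hαle : ∀ x g, βf x g ≤ α g := fun x g => le_ciSup (hβbdd g) x
  have hαub : ∀ g (c : ℝ), (∀ x, βf x g ≤ c) → α g ≤ c := fun g c h => ciSup_le h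
  have hα0 : ∀ g, 0 ≤ α g := fun g => le_trans (hβ0 (Classical.arbitrary X) g)
    (hαle (Classical.arbitrary X) g)
  have hα1 : ∀ g, α g ≤ 1 := fun g => hαub g 1 fun x => hβ1 x g
  have hβone : ∀ x, βf x 1 = 0 := by
    intro x
    rw [hβf]
    simp [one_smul, pm.refl]
  have hαone : α 1 = 0 :=
    le_antisymm (hαub 1 0 fun x => le_of_eq (hβone x)) (hα0 1)
  have hβcont : ∀ x, Continuous (βf x) := by
    intro x
    obtain ⟨huc, hb⟩ := uc_single d pm hd (f x)
    exact cont_comp f hf _ huc ⟨1, hb⟩ x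
  have hsub : ∀ (x : X) (g h : G), βf x g ≤ βf x h + βf (h • x) (g * h⁻¹) := by
    intro x g h
    have h1 : (g * h⁻¹) • (h • x) = g • x := by rw [smul_smul, inv_mul_cancel_right]
    have tri : d (f (g • x)) (f x) ≤ d (f (g • x)) (f (h • x)) + d (f (h • x)) (f x) :=
      pm.tri _ _ _
    have step : βf x g ≤ min 1 (d (f (g • x)) (f (h • x))) + min 1 (d (f (h • x)) (f x)) :=
      min1_add tri (pm.nonneg _ _) (pm.nonneg _ _)
    have e2 : βf (h • x) (g * h⁻¹) = min 1 (d (f (g • x)) (f (h • x))) := by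
      rw [hβf]
      simp only
      rw [h1]
    have e3 : βf x h = min 1 (d (f (h • x)) (f x)) := rfl
    rw [e2, e3]
    linarith
  have hαsub : ∀ g h : G, α g ≤ α h + α (g * h⁻¹) := by
    intro g h
    refine hαub g _ fun x => ?_
    calc βf x g ≤ βf x h + βf (h • x) (g * h⁻¹) := hsub x g h
      _ ≤ α h + α (g * h⁻¹) := add_le_add (hαle x h) (hαle _ _)
  have hlsc : ∀ c : ℝ, IsOpen {g | c < α g} := by
    intro c
    have heq : {g | c < α g} = ⋃ x, {g | c < βf x g} := by
      ext g
      constructor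
      · intro hg
        obtain ⟨x, hx⟩ := (lt_ciSup_iff (hβbdd g)).1 hg
        exact mem_iUnion.2 ⟨x, hx⟩
      · intro hg
        obtain ⟨x, hx⟩ := mem_iUnion.1 hg
        exact lt_of_lt_of_le hx (hαle x g)
    rw [heq]
    exact isOpen_iUnion fun x => isOpen_lt continuous_const (hβcont x)
  have hαnc : ¬Continuous α := by
    intro hcont
    set δ₂ : ℝ := min δV 1 / 2 with hδ₂
    have hδ₂0 : 0 < δ₂ := by
      rw [hδ₂]
      have : 0 < min δV 1 := lt_min hδV0 one_pos
      linarith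
    have hδ₂1 : δ₂ < 1 := by
      rw [hδ₂]
      have : min δV 1 ≤ 1 := min_le_right _ _
      linarith
    have hδ₂V : δ₂ ≤ δV := by
      rw [hδ₂]
      have : min δV 1 ≤ δV := min_le_left _ _
      linarith
    have hU : {g | α g < δ₂} ∈ nhds (1:G) := by
      have hopen : IsOpen {g | α g < δ₂} := isOpen_lt hcont continuous_const
      refine hopen.mem_nhds ?_
      show α 1 < δ₂
      rw [hαone]
      exact hδ₂0
    obtain ⟨g, h, hgh, x, hx⟩ := hnot _ hU
    have hα2 : α (g * h⁻¹) < δ₂ := hgh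
    have h1 : βf (h • x) (g * h⁻¹) < δ₂ := lt_of_le_of_lt (hαle _ _) hα2
    have h2 : d (f (g • x)) (f (h • x)) < δ₂ := by
      have e : βf (h • x) (g * h⁻¹) = min 1 (d (f (g • x)) (f (h • x))) := by
        rw [hβf]
        simp only
        rw [smul_smul, inv_mul_cancel_right]
      rw [e] at h1
      exact min1_lt h1 hδ₂1.le
    exact hx (hδV _ _ (lt_of_lt_of_le h2 hδ₂V))
  obtain ⟨A, hcase⟩ := hG α ⟨1, fun g => abs_le.2 ⟨by linarith [hα0 g], hα1 g⟩⟩ hαnc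
  have hwit : ∀ (z : G) (q : ℝ), q < α z → ∃ x : X, q ≤ d (f (z • x)) (f ((1:G) • x)) := by
    intro z q hq
    obtain ⟨x, hx⟩ := (lt_ciSup_iff (hβbdd z)).1 hq
    refine ⟨x, ?_⟩
    rw [one_smul]
    exact le_of_lt (lt_of_lt_of_le hx (min_le_right _ _))
  rcases hcase with ⟨hnoext, hrad⟩ | ⟨⟨a, haA, hdisc⟩, hrad⟩
  · -- Case 1
    rcases eq_empty_or_nonempty A with hAe | hAne
    · refine hnoext ⟨fun _ => 0, continuous_const, ?_⟩
      intro z hz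
      rw [hAe, closure_empty] at hz
      exact absurd hz (notMem_empty z)
    · exact hnoext (case1 f hf d pm hd α hα0 hα1 hαsub hlsc hwit A hAne hrad)
  · -- Case 2
    have hε : ∃ ε > (0:ℝ), ∀ W ∈ nhds a, ∃ b ∈ closure A ∩ W, α a + ε ≤ α b := by
      by_contra hcon
      push_neg at hcon
      apply hdisc
      rw [ContinuousWithinAt, Metric.tendsto_nhds]
      intro ε hε
      obtain ⟨W, hW, hWb⟩ := hcon ε hε
      have hopen : IsOpen {g | α a - ε < α g} := hlsc _
      have hmem : a ∈ {g | α a - ε < α g} := by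
        show α a - ε < α a
        linarith
      have hmem2 : W ∩ {g | α a - ε < α g} ∈ nhds a := inter_mem hW (hopen.mem_nhds hmem)
      filter_upwards [mem_nhdsWithin_of_mem_nhds hmem2, self_mem_nhdsWithin] with b hb hbA
      rw [Real.dist_eq, abs_lt]
      have h1 : α b < α a + ε := hWb b ⟨hbA, hb.1⟩
      have h2 : α a - ε < α b := hb.2
      constructor <;> linarith
    obtain ⟨ε, hε0, hεw⟩ := hε
    have hε1 : ε ≤ 1 := by
      obtain ⟨b, -, hb⟩ := hεw univ Filter.univ_mem
      have := hα1 b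
      have := hα0 a
      linarith
    refine master f hf d pm hd A hrad a haA (ε/2) (by linarith) (by linarith) ?_
    intro W hW
    obtain ⟨b, ⟨hbclA, hbW⟩, hbα⟩ := hεw (interior W) (interior_mem_nhds.2 hW)
    have hcc : α a + ε / 2 < α b := by linarith
    obtain ⟨x, hx⟩ := (lt_ciSup_iff (hβbdd b)).1 hcc
    have hopen : IsOpen ({g | α a + ε / 2 < βf x g} ∩ interior W) :=
      (isOpen_lt continuous_const (hβcont x)).inter isOpen_interior
    obtain ⟨b', hb'mem, hb'A⟩ := mem_closure_iff.1 hbclA _ hopen ⟨hx, hbW⟩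
    obtain ⟨hb'β, hb'W⟩ := hb'mem
    have hc1 : α a + ε ≤ 1 := by
      have := hα1 b
      linarith
    have hd1 : α a + ε / 2 < d (f (b' • x)) (f x) := by
      have : α a + ε / 2 < βf x b' := hb'β
      exact lt_of_lt_of_le this (min_le_right _ _)
    have hd2 : d (f (a • x)) (f x) ≤ α a := by
      have h3 : βf x a ≤ α a := hαle x a
      refine min1_le_imp h3 ?_
      linarith
    have hd3 : ε / 2 ≤ d (f (b' • x)) (f (a • x)) := by
      have tri : d (f (b' • x)) (f x) ≤ d (f (b' • x)) (f (a • x)) + d (f (a • x)) (f x) :=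
        pm.tri _ _ _
      linarith
    exact ⟨b', ⟨hb'A, interior_subset hb'W⟩, x, hd3⟩
end
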